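/- arXiv:1904.09694 — 9 statements merged into one kernel-verified Lean document; each statement's English description precedes it below -/
import Mathlib

section
/- Let n be a positive integer, let s be a list of permutations of Fin n that is permutationally complete, and let w be a list of permutations of Fin n containing s as a subsequence (i.e., s is a sublist of w). Then w is permutationally complete. -/
/-- The set of products (compositions, in order) of all rearrangements of `s`. -/
def ProdSet {n : ℕ} (s : List (Equiv.Perm (Fin n))) : Set (Equiv.Perm (Fin n)) :=
  {g | ∃ r : List (Equiv.Perm (Fin n)), r.Perm s ∧ r.prod = g}

/-- `s` is permutationally complete iff `ProdSet s` is the set of even permutations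
or the set of odd permutations. -/
def PermComplete {n : ℕ} (s : List (Equiv.Perm (Fin n))) : Prop :=
  ProdSet s = {g | Equiv.Perm.sign g = 1} ∨ ProdSet s = {g | Equiv.Perm.sign g = -1}

/-- `u` is a transpositional sequence: each term is a transposition. -/
def IsTranspositional {n : ℕ} (u : List (Equiv.Perm (Fin n))) : Prop :=
  ∀ g ∈ u, ∃ x y : Fin n, x ≠ y ∧ g = Equiv.swap x y

/-- The simple graph of a transpositional sequence: an edge `{x,y}` iff `(x y)` occurs in `u`. -/
def TranspGraph {n : ℕ} (u : List (Equiv.Perm (Fin n))) : SimpleGraph (Fin n) where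
  Adj x y := x ≠ y ∧ Equiv.swap x y ∈ u
  symm := by
    constructor
    intro x y h
    exact ⟨h.1.symm, by rw [Equiv.swap_comm]; exact h.2⟩
  loopless := by
    constructor
    intro x h
    exact h.1 rfl

/-- `s` is conjugacy invariant iff all elements of `ProdSet s` are pairwise conjugate. -/
def ConjInv {n : ℕ} (s : List (Equiv.Perm (Fin n))) : Prop :=
  ∀ f ∈ ProdSet s, ∀ g ∈ ProdSet s, IsConj f g

lemma sign_perm {n : ℕ} {r r' : List (Equiv.Perm (Fin n))} (h : r.Perm r') :
    Equiv.Perm.sign r.prod = Equiv.Perm.sign r'.prod := by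
  rw [Equiv.Perm.sign.map_list_prod r, Equiv.Perm.sign.map_list_prod r']
  exact (h.map _).prod_eq

theorem stmt_0 (n : ℕ) (hn : 0 < n)
    (s w : List (Equiv.Perm (Fin n)))
    (hsub : s.Sublist w)
    (hpc : PermComplete s) :
    PermComplete w := by
  obtain ⟨t, hw⟩ : ∃ t, w.Perm (s ++ t) := by
    have h1 : (s : Multiset (Equiv.Perm (Fin n))) ≤ (w : Multiset _) := hsub.subperm
    obtain ⟨c, hc⟩ := Multiset.le_iff_exists_add.mp h1
    obtain ⟨t, rfl⟩ := Quotient.exists_rep c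
    exact ⟨t, Multiset.coe_eq_coe.mp hc⟩
  have hmem : s.prod ∈ ProdSet s := ⟨s, List.Perm.refl s, rfl⟩
  have hs : ProdSet s = {g | Equiv.Perm.sign g = Equiv.Perm.sign s.prod} := by
    rcases hpc with h | h
    · rw [h] at hmem ⊢; rw [hmem]
    · rw [h] at hmem ⊢; rw [hmem]
  have hkey : ProdSet w =
      {g | Equiv.Perm.sign g = Equiv.Perm.sign s.prod * Equiv.Perm.sign t.prod} := by
    ext g
    constructor
    · rintro ⟨r, hr, rfl⟩
      have := sign_perm (hr.trans hw)
      simp only [Set.mem_setOf_eq]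
      rw [this, List.prod_append, map_mul]
    · intro hg
      have h2 : g * t.prod⁻¹ ∈ ProdSet s := by
        rw [hs]
        simp only [Set.mem_setOf_eq] at hg ⊢
        rw [map_mul, map_inv, hg]
        group
      obtain ⟨r, hr, hrp⟩ := h2
      refine ⟨r ++ t, (hr.append_right t).trans hw.symm, ?_⟩
      rw [List.prod_append, hrp]
      group
  rcases Int.units_eq_one_or (Equiv.Perm.sign s.prod * Equiv.Perm.sign t.prod) with h | h
  · left; rw [hkey, h]
  · right; rw [hkey, h]
end

section
/- Let n ≥ 3 and let u be an injective transpositional sequence on Fin n such that every vertex of Fin n lies in the support of some term of u, the graph G(u) is connected, and some vertex a lies in the support of exactly one term of u (i.e., a has degree 1 in G(u)). Then u is not permutationally complete. In particular, no injective transpositional sequence whose graph is a tree on n ≥ 3 vertices is permutationally complete. -/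
lemma fix_of_all_fix {n : ℕ} (a : Fin n) (r : List (Equiv.Perm (Fin n)))
    (h : ∀ t ∈ r, t a = a) : r.prod a = a := by
  induction r with
  | nil => simp
  | cons t s ih =>
    rw [List.prod_cons, Equiv.Perm.mul_apply,
      ih (fun g hg => h g (List.mem_cons_of_mem _ hg)), h t List.mem_cons_self]

lemma prod_ne_of_countP_one {n : ℕ} (a : Fin n) (r : List (Equiv.Perm (Fin n)))
    (h : r.countP (fun t => decide (a ∈ t.support)) = 1) : r.prod a ≠ a := by
  induction r with
  | nil => simp at h
  | cons t s ih =>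
    rw [List.countP_cons] at h
    by_cases hm : a ∈ t.support
    · have h' : s.countP (fun t => decide (a ∈ t.support)) = 0 := by simpa [hm] using h
      have hall : ∀ g ∈ s, g a = a := by
        intro g hg
        by_contra hga
        have : 0 < s.countP (fun t => decide (a ∈ t.support)) :=
          List.countP_pos_iff.mpr ⟨g, hg, by simpa [Equiv.Perm.mem_support] using hga⟩
        omega
      rw [List.prod_cons, Equiv.Perm.mul_apply, fix_of_all_fix a s hall]
      exact Equiv.Perm.mem_support.mp hm
    · have h' : s.countP (fun t => decide (a ∈ t.support)) = 1 := by simpa [hm] using h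
      have := ih h'
      rw [List.prod_cons, Equiv.Perm.mul_apply]
      intro hcon
      have hta : t a = a := by simpa [Equiv.Perm.mem_support] using hm
      exact this (t.injective (hcon.trans hta.symm))

lemma not_permComplete_of_countP_one {n : ℕ} (hn : 3 ≤ n) (u : List (Equiv.Perm (Fin n)))
    (a : Fin n) (ha : u.countP (fun t => decide (a ∈ t.support)) = 1) :
    ¬ PermComplete u := by
  have key : ∀ g ∈ ProdSet u, g a ≠ a := by
    rintro g ⟨r, hr, rfl⟩
    exact prod_ne_of_countP_one a r (by rw [hr.countP_eq]; exact ha)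
  rintro (h | h)
  · have h1 : (1 : Equiv.Perm (Fin n)) ∈ ProdSet u := by rw [h]; simp
    exact key 1 h1 rfl
  · obtain ⟨x, hx, y, hy, hxy⟩ : ∃ x ∈ Finset.univ.erase a, ∃ y ∈ Finset.univ.erase a, x ≠ y := by
      apply Finset.one_lt_card.mp
      rw [Finset.card_erase_of_mem (Finset.mem_univ a), Finset.card_univ, Fintype.card_fin]
      omega
    have hswap : Equiv.swap x y ∈ ProdSet u := by
      rw [h]
      simp only [Set.mem_setOf_eq, Equiv.Perm.sign_swap hxy]
    exact key _ hswap (Equiv.swap_apply_of_ne_of_ne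
      (Ne.symm (Finset.ne_of_mem_erase hx)) (Ne.symm (Finset.ne_of_mem_erase hy)))

lemma swap_eq_of_mem_support {n : ℕ} {t : Equiv.Perm (Fin n)} {a : Fin n}
    (ht : ∃ x y : Fin n, x ≠ y ∧ t = Equiv.swap x y) (ha : a ∈ t.support) :
    t = Equiv.swap a (t a) := by
  obtain ⟨x, y, hxy, rfl⟩ := ht
  rw [Equiv.Perm.support_swap hxy] at ha
  simp only [Finset.mem_insert, Finset.mem_singleton] at ha
  rcases ha with rfl | rfl
  · rw [Equiv.swap_apply_left]
  · rw [Equiv.swap_apply_right, Equiv.swap_comm]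

lemma countP_eq_degree {n : ℕ} (u : List (Equiv.Perm (Fin n))) (hu : IsTranspositional u)
    (hnd : u.Nodup) (a : Fin n) [DecidableRel (TranspGraph u).Adj] :
    u.countP (fun t => decide (a ∈ t.support)) = (TranspGraph u).degree a := by
  have hfm : ∀ t, t ∈ (u.filter (fun t => decide (a ∈ t.support))) ↔ t ∈ u ∧ a ∈ t.support := by
    intro t; simp [List.mem_filter]
  rw [List.countP_eq_length_filter,
    ← List.toFinset_card_of_nodup (hnd.filter _), SimpleGraph.degree]
  apply Finset.card_bij' (fun t _ => t a) (fun b _ => Equiv.swap a b)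
  · intro t ht
    rw [List.mem_toFinset, hfm] at ht
    rw [SimpleGraph.mem_neighborFinset]
    refine ⟨Ne.symm (Equiv.Perm.mem_support.mp ht.2), ?_⟩
    rw [← swap_eq_of_mem_support (hu t ht.1) ht.2]
    exact ht.1
  · intro b hb
    rw [SimpleGraph.mem_neighborFinset] at hb
    obtain ⟨hab, hmem⟩ := hb
    rw [List.mem_toFinset, hfm]
    refine ⟨hmem, ?_⟩
    rw [Equiv.Perm.mem_support, Equiv.swap_apply_left]
    exact Ne.symm hab
  · intro t ht
    rw [List.mem_toFinset, hfm] at ht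
    exact (swap_eq_of_mem_support (hu t ht.1) ht.2).symm
  · intro b hb
    rw [Equiv.swap_apply_left]

lemma exists_leaf {V : Type*} [Fintype V] (G : SimpleGraph V) [DecidableRel G.Adj]
    (hG : G.IsTree) (hcard : 2 ≤ Fintype.card V) : ∃ a, G.degree a = 1 := by
  by_contra hno
  push_neg at hno
  have hpos : ∀ a : V, 2 ≤ G.degree a := by
    intro a
    have h1 : 0 < G.degree a := by
      rw [SimpleGraph.degree_pos_iff_exists_adj]
      obtain ⟨b, hb⟩ := Fintype.exists_ne_of_one_lt_card (by omega) a
      obtain ⟨w⟩ := hG.isConnected.preconnected a b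
      cases w with
      | nil => exact absurd rfl hb.symm
      | cons h p => exact ⟨_, h⟩
    have := hno a
    omega
  have hsum : ∑ v : V, G.degree v = 2 * G.edgeFinset.card :=
    SimpleGraph.sum_degrees_eq_twice_card_edges G
  have hedge : G.edgeFinset.card + 1 = Fintype.card V := hG.card_edgeFinset
  have hge : 2 * Fintype.card V ≤ ∑ v : V, G.degree v := by
    calc 2 * Fintype.card V = ∑ _v : V, 2 := by rw [Finset.sum_const, Finset.card_univ]; ring
    _ ≤ ∑ v : V, G.degree v := Finset.sum_le_sum (fun v _ => hpos v)
  omega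

theorem stmt_1 :
    (∀ n : ℕ, 3 ≤ n → ∀ u : List (Equiv.Perm (Fin n)),
      IsTranspositional u → u.Nodup →
      (∀ v : Fin n, ∃ g ∈ u, v ∈ g.support) →
      (TranspGraph u).Connected →
      (∃ a : Fin n, u.countP (fun t => decide (a ∈ t.support)) = 1) →
      ¬ PermComplete u) ∧
    (∀ n : ℕ, 3 ≤ n → ∀ u : List (Equiv.Perm (Fin n)),
      IsTranspositional u → u.Nodup →
      (TranspGraph u).IsTree →
      ¬ PermComplete u) := by
  constructor
  · rintro n hn u _ _ _ _ ⟨a, ha⟩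
    exact not_permComplete_of_countP_one hn u a ha
  · intro n hn u hu hnd htree
    haveI : DecidableRel (TranspGraph u).Adj := fun x y =>
      decidable_of_iff (x ≠ y ∧ Equiv.swap x y ∈ u) Iff.rfl
    obtain ⟨a, hdeg⟩ := exists_leaf (TranspGraph u) htree
      (by rw [Fintype.card_fin]; omega)
    exact not_permComplete_of_countP_one hn u a
      (by rw [countP_eq_degree u hu hnd a]; exact hdeg)
end

section
/- Let n ≥ 4 and let u be an injective transpositional sequence on Fin n such that every vertex of Fin n lies in the support of some term of u and the graph G(u) is connected. Suppose there are vertices x ≠ y such that the transposition (x y) is a term of u and each of x and y lies in the support of exactly two terms of u (i.e., x and y are adjacent vertices of degree 2 in G(u)). Then u is not permutationally complete. -/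
open Equiv

namespace StmtAux

variable {n : ℕ}

def St (x y : Fin n) (P : Equiv.Perm (Fin n)) : Bool → Bool → Bool → Prop
  | false, false, false => P x = x ∧ P y = y
  | true,  false, false => P x = y ∧ P y = x
  | false, true,  false => (P x ≠ x ∧ P x ≠ y) ∧ P y = y
  | false, false, true  => P x = x ∧ (P y ≠ x ∧ P y ≠ y)
  | true,  true,  false => (P x = y ∧ (P y ≠ x ∧ P y ≠ y)) ∨ ((P x ≠ x ∧ P x ≠ y) ∧ P y = x)
  | true,  false, true  => (P x = y ∧ (P y ≠ x ∧ P y ≠ y)) ∨ ((P x ≠ x ∧ P x ≠ y) ∧ P y = x)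
  | false, true,  true  => (P x ≠ x ∧ (P y ≠ x ∧ P y ≠ y)) ∨ ((P x ≠ x ∧ P x ≠ y) ∧ P y ≠ y)
  | true,  true,  true  => P x ≠ x ∨ P y ≠ y

lemma fix_ne {g : Equiv.Perm (Fin n)} {z v : Fin n} (hg : g z = z) (hv : v ≠ z) : g v ≠ z :=
  fun h => hv (g.injective (h.trans hg.symm))

set_option maxHeartbeats 1000000 in
lemma step_other {x y : Fin n} {P g : Equiv.Perm (Fin n)}
    (hgx : g x = x) (hgy : g y = y) :
    ∀ b0 b1 b2, St x y P b0 b1 b2 → St x y (g * P) b0 b1 b2 := by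
  have a1 : P x = x → g (P x) = x := fun h => by rw [h, hgx]
  have a2 : P x = y → g (P x) = y := fun h => by rw [h, hgy]
  have a3 : P x ≠ x → g (P x) ≠ x := fix_ne hgx
  have a4 : P x ≠ y → g (P x) ≠ y := fix_ne hgy
  have c1 : P y = x → g (P y) = x := fun h => by rw [h, hgx]
  have c2 : P y = y → g (P y) = y := fun h => by rw [h, hgy]
  have c3 : P y ≠ x → g (P y) ≠ x := fix_ne hgx
  have c4 : P y ≠ y → g (P y) ≠ y := fix_ne hgy
  intro b0 b1 b2 h
  cases b0 <;> cases b1 <;> cases b2 <;>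
    simp only [St, Equiv.Perm.mul_apply] at h ⊢ <;> tauto

variable {x y a b : Fin n}

lemma step_s0 (hxy : x ≠ y) {P : Equiv.Perm (Fin n)} :
    ∀ b1 b2, St x y P false b1 b2 → St x y (Equiv.swap x y * P) true b1 b2 := by
  have e1 : Equiv.swap x y x = y := Equiv.swap_apply_left x y
  have e2 : Equiv.swap x y y = x := Equiv.swap_apply_right x y
  have e3 : ∀ v : Fin n, v ≠ x → v ≠ y → Equiv.swap x y v = v :=
    fun v h1 h2 => Equiv.swap_apply_of_ne_of_ne h1 h2
  intro b1 b2 h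
  cases b1 <;> cases b2 <;> simp only [St, Equiv.Perm.mul_apply] at h ⊢
  · exact ⟨by rw [h.1, e1], by rw [h.2, e2]⟩
  · refine Or.inl ⟨by rw [h.1, e1], ?_, ?_⟩
    · rw [e3 _ h.2.1 h.2.2]; exact h.2.1
    · rw [e3 _ h.2.1 h.2.2]; exact h.2.2
  · refine Or.inr ⟨⟨?_, ?_⟩, by rw [h.2, e2]⟩
    · rw [e3 _ h.1.1 h.1.2]; exact h.1.1
    · rw [e3 _ h.1.1 h.1.2]; exact h.1.2
  · rcases h with ⟨_, hNy⟩ | ⟨hNx, _⟩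
    · exact Or.inr (by rw [e3 _ hNy.1 hNy.2]; exact hNy.2)
    · exact Or.inl (by rw [e3 _ hNx.1 hNx.2]; exact hNx.1)

lemma step_s1 (hxy : x ≠ y) (hax : a ≠ x) (hay : a ≠ y) {P : Equiv.Perm (Fin n)} :
    ∀ b0 b2, St x y P b0 false b2 → St x y (Equiv.swap x a * P) b0 true b2 := by
  have e1 : Equiv.swap x a x = a := Equiv.swap_apply_left x a
  have ey : Equiv.swap x a y = y := Equiv.swap_apply_of_ne_of_ne hxy.symm (Ne.symm hay)
  have fy : ∀ v : Fin n, v ≠ y → Equiv.swap x a v ≠ y := fun v hv => fix_ne ey hv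
  intro b0 b2 h
  cases b0 <;> cases b2 <;> simp only [St, Equiv.Perm.mul_apply] at h ⊢
  · exact ⟨⟨by rw [h.1, e1]; exact hax, by rw [h.1, e1]; exact hay⟩, by rw [h.2, ey]⟩
  · exact Or.inr ⟨⟨by rw [h.1, e1]; exact hax, by rw [h.1, e1]; exact hay⟩, fy _ h.2.2⟩
  · exact Or.inl ⟨by rw [h.1, ey], by rw [h.2, e1]; exact hax, by rw [h.2, e1]; exact hay⟩
  · rcases h with ⟨hx1, _⟩ | ⟨_, hy1⟩
    · exact Or.inl (by rw [hx1, ey]; exact hxy.symm)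
    · exact Or.inr (by rw [hy1, e1]; exact hay)

lemma step_s2 (hxy : x ≠ y) (hbx : b ≠ x) (hby : b ≠ y) {P : Equiv.Perm (Fin n)} :
    ∀ b0 b1, St x y P b0 b1 false → St x y (Equiv.swap y b * P) b0 b1 true := by
  have e1 : Equiv.swap y b y = b := Equiv.swap_apply_left y b
  have ex : Equiv.swap y b x = x := Equiv.swap_apply_of_ne_of_ne hxy (Ne.symm hbx)
  have fx : ∀ v : Fin n, v ≠ x → Equiv.swap y b v ≠ x := fun v hv => fix_ne ex hv
  intro b0 b1 h
  cases b0 <;> cases b1 <;> simp only [St, Equiv.Perm.mul_apply] at h ⊢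
  · exact ⟨by rw [h.1, ex], by rw [h.2, e1]; exact hbx, by rw [h.2, e1]; exact hby⟩
  · exact Or.inl ⟨fx _ h.1.1, by rw [h.2, e1]; exact hbx, by rw [h.2, e1]; exact hby⟩
  · exact Or.inr ⟨⟨by rw [h.1, e1]; exact hbx, by rw [h.1, e1]; exact hby⟩, by rw [h.2, ex]⟩
  · rcases h with ⟨hx1, _⟩ | ⟨_, hy1⟩
    · exact Or.inl (by rw [hx1, e1]; exact hbx)
    · exact Or.inr (by rw [hy1, ex]; exact hxy)

lemma invariant (hxy : x ≠ y) (hax : a ≠ x) (hay : a ≠ y) (hbx : b ≠ x) (hby : b ≠ y) :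
    ∀ t : List (Equiv.Perm (Fin n)), t.Nodup →
      (∀ g ∈ t, g ≠ Equiv.swap x y → g ≠ Equiv.swap x a → g ≠ Equiv.swap y b →
        (g x = x ∧ g y = y)) →
      ∀ b0 b1 b2 : Bool,
        (b0 = true ↔ Equiv.swap x y ∈ t) → (b1 = true ↔ Equiv.swap x a ∈ t) →
        (b2 = true ↔ Equiv.swap y b ∈ t) →
      St x y t.prod b0 b1 b2 := by
  have d01 : Equiv.swap x y ≠ Equiv.swap x a := by
    intro h
    have h2 : Equiv.swap x y y = Equiv.swap x a y := by rw [h]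
    rw [Equiv.swap_apply_right, Equiv.swap_apply_of_ne_of_ne hxy.symm (Ne.symm hay)] at h2
    exact hxy h2
  have d02 : Equiv.swap x y ≠ Equiv.swap y b := by
    intro h
    have h2 : Equiv.swap x y x = Equiv.swap y b x := by rw [h]
    rw [Equiv.swap_apply_left, Equiv.swap_apply_of_ne_of_ne hxy (Ne.symm hbx)] at h2
    exact hxy.symm h2
  have d12 : Equiv.swap x a ≠ Equiv.swap y b := by
    intro h
    have h2 : Equiv.swap x a x = Equiv.swap y b x := by rw [h]
    rw [Equiv.swap_apply_left, Equiv.swap_apply_of_ne_of_ne hxy (Ne.symm hbx)] at h2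
    exact hax h2
  intro t
  induction t with
  | nil =>
    intro _ _ b0 b1 b2 h0 h1 h2
    have e0 : b0 = false := by
      cases b0
      · rfl
      · exact absurd (h0.mp rfl) List.not_mem_nil
    have e1 : b1 = false := by
      cases b1
      · rfl
      · exact absurd (h1.mp rfl) List.not_mem_nil
    have e2 : b2 = false := by
      cases b2
      · rfl
      · exact absurd (h2.mp rfl) List.not_mem_nil
    subst e0; subst e1; subst e2
    simp only [List.prod_nil, St]
    exact ⟨Equiv.Perm.one_apply x, Equiv.Perm.one_apply y⟩
  | cons g t ih =>
    intro hnd hoth b0 b1 b2 h0 h1 h2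
    have hgt : g ∉ t := (List.nodup_cons.mp hnd).1
    have hndt : t.Nodup := (List.nodup_cons.mp hnd).2
    have hotht : ∀ g' ∈ t, g' ≠ Equiv.swap x y → g' ≠ Equiv.swap x a → g' ≠ Equiv.swap y b →
        (g' x = x ∧ g' y = y) := fun g' hg' => hoth g' (List.mem_cons_of_mem _ hg')
    have trans_iff : ∀ (s : Equiv.Perm (Fin n)) (c : Bool),
        (c = true ↔ s ∈ g :: t) → s ≠ g → (c = true ↔ s ∈ t) := by
      intro s c hc hne
      constructor
      · intro hb
        rcases List.mem_cons.mp (hc.mp hb) with he | ht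
        · exact absurd he hne
        · exact ht
      · intro ht
        exact hc.mpr (List.mem_cons_of_mem _ ht)
    rw [List.prod_cons]
    by_cases hg0 : g = Equiv.swap x y
    · have hb0 : b0 = true := h0.mpr (by rw [hg0]; exact List.mem_cons_self)
      subst hb0
      have hnot : Equiv.swap x y ∉ t := by rw [← hg0]; exact hgt
      have h0' : (false = true) ↔ Equiv.swap x y ∈ t :=
        iff_of_false (by simp) hnot
      have h1' := trans_iff _ b1 h1 (by rw [hg0]; exact d01.symm)
      have h2' := trans_iff _ b2 h2 (by rw [hg0]; exact d02.symm)
      rw [hg0]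
      exact step_s0 hxy b1 b2 (ih hndt hotht false b1 b2 h0' h1' h2')
    · by_cases hg1 : g = Equiv.swap x a
      · have hb1 : b1 = true := h1.mpr (by rw [hg1]; exact List.mem_cons_self)
        subst hb1
        have hnot : Equiv.swap x a ∉ t := by rw [← hg1]; exact hgt
        have h1' : (false = true) ↔ Equiv.swap x a ∈ t :=
          iff_of_false (by simp) hnot
        have h0' := trans_iff _ b0 h0 (by rw [hg1]; exact d01)
        have h2' := trans_iff _ b2 h2 (by rw [hg1]; exact d12.symm)
        rw [hg1]
        exact step_s1 hxy hax hay b0 b2 (ih hndt hotht b0 false b2 h0' h1' h2')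
      · by_cases hg2 : g = Equiv.swap y b
        · have hb2 : b2 = true := h2.mpr (by rw [hg2]; exact List.mem_cons_self)
          subst hb2
          have hnot : Equiv.swap y b ∉ t := by rw [← hg2]; exact hgt
          have h2' : (false = true) ↔ Equiv.swap y b ∈ t :=
            iff_of_false (by simp) hnot
          have h0' := trans_iff _ b0 h0 (by rw [hg2]; exact d02)
          have h1' := trans_iff _ b1 h1 (by rw [hg2]; exact d12)
          rw [hg2]
          exact step_s2 hxy hbx hby b0 b1 (ih hndt hotht b0 b1 false h0' h1' h2')
        · have hfix := hoth g List.mem_cons_self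
            (fun h => hg0 h) (fun h => hg1 h) (fun h => hg2 h)
          have h0' := trans_iff _ b0 h0 (fun h => hg0 h.symm)
          have h1' := trans_iff _ b1 h1 (fun h => hg1 h.symm)
          have h2' := trans_iff _ b2 h2 (fun h => hg2 h.symm)
          exact step_other hfix.1 hfix.2 b0 b1 b2 (ih hndt hotht b0 b1 b2 h0' h1' h2')


lemma degree_two {n : ℕ} (u : List (Equiv.Perm (Fin n))) (htr : IsTranspositional u)
    (hnd : u.Nodup) (x z : Fin n) (hxz : x ≠ z) (hmem : Equiv.swap x z ∈ u)
    (hdx : u.countP (fun t => decide (x ∈ t.support)) = 2) :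
    ∃ a, a ≠ x ∧ a ≠ z ∧ Equiv.swap x a ∈ u ∧
      ∀ g ∈ u, x ∈ g.support → g = Equiv.swap x z ∨ g = Equiv.swap x a := by
  set F := u.filter (fun t => decide (x ∈ t.support)) with hFdef
  have hlen : F.length = 2 := by
    rw [hFdef, ← List.countP_eq_length_filter]; exact hdx
  obtain ⟨c, d, hcd⟩ := List.length_eq_two.mp hlen
  have hFnd : F.Nodup := hnd.filter _
  have hcd' : c ≠ d := by
    rw [hcd] at hFnd
    simpa using (List.nodup_cons.mp hFnd).1
  have hmemF : Equiv.swap x z ∈ F := by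
    refine List.mem_filter.mpr ⟨hmem, ?_⟩
    simp only [decide_eq_true_eq, Equiv.Perm.mem_support, Equiv.swap_apply_left]
    exact hxz.symm
  have hFmem : ∀ g ∈ u, x ∈ g.support → g ∈ F := by
    intro g hg hgs
    refine List.mem_filter.mpr ⟨hg, ?_⟩
    simpa using hgs
  have main : ∀ q, q ∈ u → x ∈ q.support → q ≠ Equiv.swap x z →
      (∀ g ∈ u, x ∈ g.support → g = Equiv.swap x z ∨ g = q) →
      ∃ a, a ≠ x ∧ a ≠ z ∧ Equiv.swap x a ∈ u ∧
        ∀ g ∈ u, x ∈ g.support → g = Equiv.swap x z ∨ g = Equiv.swap x a := by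
    intro q hqu hqs hqne hall
    obtain ⟨e, f, hef, rfl⟩ := htr q hqu
    have hx : x = e ∨ x = f := by
      by_contra hc
      push_neg at hc
      rw [Equiv.Perm.mem_support] at hqs
      exact hqs (Equiv.swap_apply_of_ne_of_ne hc.1 hc.2)
    rcases hx with rfl | rfl
    · refine ⟨f, Ne.symm hef, ?_, hqu, hall⟩
      intro h
      exact hqne (by rw [h])
    · have hco : Equiv.swap e x = Equiv.swap x e := Equiv.swap_comm e x
      refine ⟨e, hef, ?_, by rw [← hco]; exact hqu, ?_⟩
      · intro h
        exact hqne (by rw [hco, h])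
      · intro g hg hgs
        rcases hall g hg hgs with h | h
        · exact Or.inl h
        · exact Or.inr (by rw [h, hco])
  rcases (by rw [hcd] at hmemF; simpa using hmemF : Equiv.swap x z = c ∨ Equiv.swap x z = d)
    with h | h
  · -- q = d
    have hdF : d ∈ F := by rw [hcd]; simp
    have hdu : d ∈ u := (List.mem_filter.mp hdF).1
    have hds : x ∈ d.support := by
      have := (List.mem_filter.mp hdF).2
      simpa using this
    refine main d hdu hds (fun hh => hcd' (h.symm.trans hh.symm)) ?_
    · intro g hg hgs
      have : g ∈ F := hFmem g hg hgs
      rw [hcd] at this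
      rcases (by simpa using this : g = c ∨ g = d) with h2 | h2
      · exact Or.inl (by rw [h2, ← h])
      · exact Or.inr h2
  · -- q = c
    have hcF : c ∈ F := by rw [hcd]; simp
    have hcu : c ∈ u := (List.mem_filter.mp hcF).1
    have hcs : x ∈ c.support := by
      have := (List.mem_filter.mp hcF).2
      simpa using this
    refine main c hcu hcs (fun hh => hcd' (hh.trans h)) ?_
    · intro g hg hgs
      have : g ∈ F := hFmem g hg hgs
      rw [hcd] at this
      rcases (by simpa using this : g = c ∨ g = d) with h2 | h2
      · exact Or.inr h2
      · exact Or.inl (by rw [h2, ← h])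

end StmtAux

theorem stmt_2 (n : ℕ) (hn : 4 ≤ n) (u : List (Equiv.Perm (Fin n)))
    (htr : IsTranspositional u) (hnd : u.Nodup)
    (hcov : ∀ v : Fin n, ∃ g ∈ u, v ∈ g.support)
    (hconn : (TranspGraph u).Connected)
    (x y : Fin n) (hxy : x ≠ y)
    (hmem : Equiv.swap x y ∈ u)
    (hdx : u.countP (fun t => decide (x ∈ t.support)) = 2)
    (hdy : u.countP (fun t => decide (y ∈ t.support)) = 2) :
    ¬ PermComplete u := by
  obtain ⟨a, hax, hay, hs1u, hallx⟩ := StmtAux.degree_two u htr hnd x y hxy hmem hdx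
  have hmem' : Equiv.swap y x ∈ u := by rw [Equiv.swap_comm]; exact hmem
  obtain ⟨b, hby, hbx, hs2u, hally⟩ := StmtAux.degree_two u htr hnd y x hxy.symm hmem' hdy
  intro hPC
  have key : ∀ g : Equiv.Perm (Fin n), g ∈ ProdSet u → ¬(g x = x ∧ g y = y) := by
    rintro g ⟨r, hru, rfl⟩ ⟨hgx, hgy⟩
    have hrnd : r.Nodup := hru.symm.nodup hnd
    have hoth : ∀ g' ∈ r, g' ≠ Equiv.swap x y → g' ≠ Equiv.swap x a →
        g' ≠ Equiv.swap y b → (g' x = x ∧ g' y = y) := by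
      intro g' hg' h0 h1 h2
      have hg'u : g' ∈ u := hru.mem_iff.mp hg'
      constructor
      · by_contra hne
        rcases hallx g' hg'u (Equiv.Perm.mem_support.mpr hne) with h | h
        · exact h0 h
        · exact h1 h
      · by_contra hne
        rcases hally g' hg'u (Equiv.Perm.mem_support.mpr hne) with h | h
        · exact h0 (h.trans (Equiv.swap_comm y x))
        · exact h2 h
    have hm0 : Equiv.swap x y ∈ r := hru.mem_iff.mpr hmem
    have hm1 : Equiv.swap x a ∈ r := hru.mem_iff.mpr hs1u
    have hm2 : Equiv.swap y b ∈ r := hru.mem_iff.mpr hs2u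
    have hst := StmtAux.invariant hxy hax hay hbx hby r hrnd hoth true true true
      (iff_of_true rfl hm0) (iff_of_true rfl hm1) (iff_of_true rfl hm2)
    rcases hst with h | h
    · exact h hgx
    · exact h hgy
  have hex : ∀ s : Finset (Fin n), s.card < n → ∃ c, c ∉ s := by
    intro s hs
    by_contra hc
    push_neg at hc
    have hsub : (Finset.univ : Finset (Fin n)) ⊆ s := fun v _ => hc v
    have := Finset.card_le_card hsub
    rw [Finset.card_univ, Fintype.card_fin] at this
    omega
  rcases hPC with hset | hset
  · have h1 : (1 : Equiv.Perm (Fin n)) ∈ ProdSet u := by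
      rw [hset]; simp
    exact key 1 h1 ⟨rfl, rfl⟩
  · have hc2 : ({x, y} : Finset (Fin n)).card < n := by
      have h2 : ({x, y} : Finset (Fin n)).card ≤ 2 := by
        have := Finset.card_insert_le x ({y} : Finset (Fin n))
        simpa using this
      omega
    obtain ⟨c, hc⟩ := hex {x, y} hc2
    have hc3 : ({x, y, c} : Finset (Fin n)).card < n := by
      have h3 : ({x, y, c} : Finset (Fin n)).card ≤ 3 := by
        have h31 := Finset.card_insert_le x ({y, c} : Finset (Fin n))
        have h32 := Finset.card_insert_le y ({c} : Finset (Fin n))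
        simp only [Finset.card_singleton] at h32
        omega
      omega
    obtain ⟨d, hd⟩ := hex {x, y, c} hc3
    simp only [Finset.mem_insert, Finset.mem_singleton, not_or] at hc hd
    have hsign : Equiv.Perm.sign (Equiv.swap c d) = -1 :=
      Equiv.Perm.sign_swap (fun h => hd.2.2 h.symm)
    have hgmem : Equiv.swap c d ∈ ProdSet u := by rw [hset]; exact hsign
    refine key _ hgmem ⟨?_, ?_⟩
    · exact Equiv.swap_apply_of_ne_of_ne (fun h => hc.1 h.symm) (fun h => hd.1 h.symm)
    · exact Equiv.swap_apply_of_ne_of_ne (fun h => hc.2 h.symm) (fun h => hd.2.1 h.symm)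
end

section
/- Let u be an injective transpositional sequence on Fin n whose graph G(u) is connected and covers every vertex of Fin n. Let Fin n be partitioned into disjoint nonempty sets V0 and V1, let C be the set of terms (x y) of u with one of x,y in V0 and the other in V1, and suppose: the subgraph of G(u) induced on V0 is acyclic (a forest), 2·|C| < |V0|, and |V1| ≥ 2. Then u is not permutationally complete. -/
namespace Stmt3Aux

variable {n : ℕ}

/-- Apply a permutation, with arguments in `foldl` orientation. -/
def app (x : Fin n) (σ : Equiv.Perm (Fin n)) : Fin n := σ x

lemma foldl_eq_prod (l : List (Equiv.Perm (Fin n))) (v : Fin n) :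
    l.foldl app v = l.reverse.prod v := by
  induction l generalizing v with
  | nil => simp [app]
  | cons a t ih =>
    simp only [List.foldl_cons, List.reverse_cons, List.prod_append, List.prod_cons,
      List.prod_nil, mul_one, Equiv.Perm.mul_apply]
    exact ih (a v)

lemma foldl_take_succ (l : List (Equiv.Perm (Fin n))) (i : ℕ) (h : i < l.length) (v : Fin n) :
    (l.take (i + 1)).foldl app v = l.get ⟨i, h⟩ ((l.take i).foldl app v) := by
  rw [← List.take_concat_get' l i h, List.foldl_append]
  simp [app]

/-- The transposition corresponding to an edge of an induced subgraph. -/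
def swapE {S : Set (Fin n)} : Sym2 S → Equiv.Perm (Fin n) :=
  Sym2.lift ⟨fun a b => Equiv.swap (a : Fin n) b, fun a b => Equiv.swap_comm _ _⟩

@[simp] lemma swapE_mk {S : Set (Fin n)} (a b : S) :
    swapE s(a, b) = Equiv.swap (a : Fin n) b := rfl

lemma swap_moving {σ : Equiv.Perm (Fin n)} {x y p : Fin n}
    (hσ : σ = Equiv.swap x y) (hp : σ p ≠ p) : σ = Equiv.swap p (σ p) := by
  subst hσ
  rcases eq_or_ne p x with rfl | hpx
  · rw [Equiv.swap_apply_left]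
  · rcases eq_or_ne p y with rfl | hpy
    · rw [Equiv.swap_apply_right, Equiv.swap_comm]
    · exact absurd (Equiv.swap_apply_of_ne_of_ne hpx hpy) hp

lemma acyclic_no_closed_trail {V : Type*} [DecidableEq V] {G : SimpleGraph V} (hG : G.IsAcyclic)
    {x : V} (w : G.Walk x x) (ht : w.IsTrail) : w.edges = [] := by
  cases w with
  | nil => simp
  | cons h q =>
    exfalso
    rw [SimpleGraph.Walk.isTrail_cons] at ht
    exact hG _ (SimpleGraph.Path.cons_isCycle q.toPath h
      (fun hmem => ht.2 (SimpleGraph.Walk.edges_toPath_subset q hmem)))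

/-- If the whole trajectory of `v` stays in `V0`, the token path gives a trail in the
induced graph on `V0`. -/
lemma trail_of_confined (u : List (Equiv.Perm (Fin n))) (V0 : Finset (Fin n)) :
    ∀ (s : List (Equiv.Perm (Fin n))), s.Nodup → (∀ σ ∈ s, σ ∈ u) →
      (∀ σ ∈ s, ∃ x y : Fin n, x ≠ y ∧ σ = Equiv.swap x y) →
      ∀ (v : Fin n) (hconf : ∀ t, (s.take t).foldl app v ∈ V0),
      ∃ w : ((TranspGraph u).induce (V0 : Set (Fin n))).Walk
          ⟨v, by simpa using hconf 0⟩ ⟨s.foldl app v, by simpa using hconf s.length⟩,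
        w.IsTrail ∧ (∀ e ∈ w.edges, swapE e ∈ s) ∧ (w.edges = [] → ∀ σ ∈ s, σ v = v) := by
  intro s
  induction s with
  | nil =>
    intro _ _ _ v hconf
    exact ⟨SimpleGraph.Walk.nil, by simp, by simp, by simp⟩
  | cons a t ih =>
    intro hsnd hsu hstr v hconf
    have hconf' : ∀ t', (t.take t').foldl app (a v) ∈ V0 := fun t' => by
      simpa [List.take_succ_cons, app] using hconf (t' + 1)
    have hna : a ∉ t := (List.nodup_cons.mp hsnd).1
    obtain ⟨w, hwt, hwe, hwn⟩ := ih (List.nodup_cons.mp hsnd).2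
      (fun σ h => hsu σ (List.mem_cons_of_mem a h))
      (fun σ h => hstr σ (List.mem_cons_of_mem a h)) (a v) hconf'
    by_cases hmove : a v = v
    · refine ⟨(w.copy (Subtype.ext hmove) rfl), ?_, ?_, ?_⟩
      · exact (SimpleGraph.Walk.isTrail_copy _ _ _).mpr hwt
      · intro e he
        have he : e ∈ w.edges := SimpleGraph.Walk.edges_copy w _ _ ▸ he
        exact List.mem_cons_of_mem a (hwe e he)
      · intro he σ hσ
        have he : w.edges = [] := SimpleGraph.Walk.edges_copy w _ _ ▸ he
        rcases List.mem_cons.mp hσ with rfl | hσ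
        · exact hmove
        · have := hwn he σ hσ
          rwa [hmove] at this
    · obtain ⟨x, y, hxy, hxys⟩ := hstr a (List.mem_cons_self)
      have haeq : a = Equiv.swap v (a v) := swap_moving hxys hmove
      have hvV : v ∈ V0 := by simpa using hconf 0
      have havV : a v ∈ V0 := by simpa [app] using hconf 1
      have hadj : ((TranspGraph u).induce (V0 : Set (Fin n))).Adj
          ⟨v, hvV⟩ ⟨a v, havV⟩ := by
        refine ⟨fun h => hmove h.symm, ?_⟩
        show Equiv.swap v (a v) ∈ u
        rw [← haeq]
        exact hsu a (List.mem_cons_self)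
      refine ⟨SimpleGraph.Walk.cons hadj w, ?_, ?_, ?_⟩
      · refine (SimpleGraph.Walk.isTrail_cons _ _).mpr ?_
        refine ⟨hwt, fun hmem => ?_⟩
        have h2 := hwe _ hmem
        rw [swapE_mk] at h2
        rw [haeq] at hna
        exact hna h2
      · intro e he
        change e ∈ _ :: w.edges at he
        rcases List.mem_cons.mp he with rfl | he
        · show Equiv.swap v (a v) ∈ a :: t
          rw [← haeq]
          exact List.mem_cons_self
        · exact List.mem_cons_of_mem a (hwe e he)
      · intro he
        simp [SimpleGraph.Walk.edges_cons] at he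
        exact absurd he SimpleGraph.Walk.not_nil_cons

end Stmt3Aux

open Stmt3Aux in
/-- Under the hypotheses of the theorem, every element of `ProdSet u` moves some
point of `V0`. -/
lemma exists_nonfixed_aux (n : ℕ) (u : List (Equiv.Perm (Fin n)))
    (htr : IsTranspositional u) (hnd : u.Nodup)
    (hcov : ∀ v : Fin n, ∃ g ∈ u, v ∈ g.support)
    (V0 V1 : Finset (Fin n)) (huniv : V0 ∪ V1 = Finset.univ)
    (C : List (Equiv.Perm (Fin n)))
    (hC : C = u.filter (fun t => decide (∃ x ∈ V0, ∃ y ∈ V1, t = Equiv.swap x y)))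
    (hforest : ((TranspGraph u).induce (V0 : Set (Fin n))).IsAcyclic)
    (hcard : C.length < V0.card) :
    ∀ g ∈ ProdSet u, ∃ v ∈ V0, g v ≠ v := by
  classical
  intro g hg
  obtain ⟨r, hperm, hprod⟩ := hg
  set s : List (Equiv.Perm (Fin n)) := r.reverse with hs
  have hsperm : s.Perm u := (r.reverse_perm).trans hperm
  have hsnd : s.Nodup := hsperm.nodup_iff.mpr hnd
  have hsu : ∀ σ ∈ s, σ ∈ u := fun σ h => hsperm.subset h
  have hstr : ∀ σ ∈ s, ∃ x y : Fin n, x ≠ y ∧ σ = Equiv.swap x y :=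
    fun σ h => htr σ (hsu σ h)
  have hfold : ∀ v : Fin n, s.foldl app v = g v := by
    intro v
    rw [foldl_eq_prod, hs, List.reverse_reverse, hprod]
  set T : Fin n → ℕ → Fin n := fun v t => (s.take t).foldl app v with hT
  have hT0 : ∀ v, T v 0 = v := fun v => rfl
  set B : Finset (Fin n) := V0.filter (fun v => ∃ t, T v t ∉ V0) with hB
  -- basic facts about the first exit time of a member of B
  have key : ∀ v ∈ B, ∀ h : (∃ t, T v t ∉ V0),
      ∃ hlt : Nat.find h - 1 < s.length,
        T v (Nat.find h - 1) ∈ V0 ∧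
        s.get ⟨Nat.find h - 1, hlt⟩ (T v (Nat.find h - 1)) ∉ V0 := by
    intro v hvB h
    have hv0 : v ∈ V0 := (Finset.mem_filter.mp hvB).1
    have hspec : T v (Nat.find h) ∉ V0 := Nat.find_spec h
    have hpos : Nat.find h ≠ 0 := by
      intro h0
      rw [h0, hT0] at hspec
      exact hspec hv0
    have hle : Nat.find h ≤ s.length := by
      by_contra hgt
      push_neg at hgt
      have heq : T v s.length = T v (Nat.find h) := by
        simp only [hT]
        rw [List.take_length, List.take_of_length_le (le_of_lt hgt)]
      exact Nat.find_min h hgt (heq ▸ hspec)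
    have hlt : Nat.find h - 1 < s.length := by omega
    refine ⟨hlt, ?_, ?_⟩
    · have := Nat.find_min h (show Nat.find h - 1 < Nat.find h by omega)
      exact not_not.mp this
    · have hstep : T v (Nat.find h - 1 + 1) =
          s.get ⟨Nat.find h - 1, hlt⟩ (T v (Nat.find h - 1)) :=
        foldl_take_succ s (Nat.find h - 1) hlt v
      rw [← hstep]
      have : Nat.find h - 1 + 1 = Nat.find h := by omega
      rw [this]
      exact hspec
  -- the exit map, injective into C
  set f : Fin n → Equiv.Perm (Fin n) :=
    fun v => if h : ∃ t, T v t ∉ V0 then s.getD (Nat.find h - 1) 1 else 1 with hf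
  have hfval : ∀ (v : Fin n) (h : ∃ t, T v t ∉ V0) (hlt : Nat.find h - 1 < s.length),
      f v = s.get ⟨Nat.find h - 1, hlt⟩ := by
    intro v h hlt
    simp only [hf]
    rw [dif_pos h]
    rw [List.getD_eq_getElem?_getD]
    simp [hlt]
  have hcardB : B.card ≤ C.toFinset.card := by
    apply Finset.card_le_card_of_injOn f
    · intro v hvB
      have h : ∃ t, T v t ∉ V0 := (Finset.mem_filter.mp hvB).2
      obtain ⟨hlt, hp, hq⟩ := key v hvB h
      rw [hfval v h hlt]
      have hσs : s.get ⟨Nat.find h - 1, hlt⟩ ∈ s := List.get_mem s _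
      obtain ⟨x, y, hxy, hxys⟩ := hstr _ hσs
      have hmoves : s.get ⟨Nat.find h - 1, hlt⟩ (T v (Nat.find h - 1))
          ≠ T v (Nat.find h - 1) := by
        intro e; apply hq; rw [e]; exact hp
      have hσswap := swap_moving hxys hmoves
      have hqV1 : s.get ⟨Nat.find h - 1, hlt⟩ (T v (Nat.find h - 1)) ∈ V1 := by
        have hu2 : s.get ⟨Nat.find h - 1, hlt⟩ (T v (Nat.find h - 1)) ∈ V0 ∪ V1 :=
          huniv ▸ Finset.mem_univ _
        rcases Finset.mem_union.mp hu2 with h2 | h2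
        · exact absurd h2 hq
        · exact h2
      rw [Finset.mem_coe, List.mem_toFinset, hC, List.mem_filter]
      refine ⟨hsu _ hσs, ?_⟩
      simp only [decide_eq_true_eq]
      exact ⟨_, hp, _, hqV1, hσswap⟩
    · intro v hvB v' hvB' heq
      rw [Finset.mem_coe] at hvB hvB'
      have h : ∃ t, T v t ∉ V0 := (Finset.mem_filter.mp hvB).2
      have h' : ∃ t, T v' t ∉ V0 := (Finset.mem_filter.mp hvB').2
      obtain ⟨hlt, hp, hq⟩ := key v hvB h
      obtain ⟨hlt', hp', hq'⟩ := key v' hvB' h'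
      rw [hfval v h hlt, hfval v' h' hlt'] at heq
      have hieq : Nat.find h - 1 = Nat.find h' - 1 := by
        have := (hsnd.get_inj_iff).mp heq
        simpa using this
      have hp'' : T v' (Nat.find h - 1) ∈ V0 := by rw [hieq]; exact hp'
      have hq'' : s.get ⟨Nat.find h - 1, hlt⟩ (T v' (Nat.find h - 1)) ∉ V0 := by
        rw [heq, hieq]
        exact hq'
      have hmoves : s.get ⟨Nat.find h - 1, hlt⟩ (T v (Nat.find h - 1))
          ≠ T v (Nat.find h - 1) := by
        intro e; apply hq; rw [e]; exact hp
      obtain ⟨x, y, hxy, hxys⟩ := hstr _ (List.get_mem s ⟨Nat.find h - 1, hlt⟩)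
      have hσswap := swap_moving hxys hmoves
      have hmoves' : s.get ⟨Nat.find h - 1, hlt⟩ (T v' (Nat.find h - 1))
          ≠ T v' (Nat.find h - 1) := by
        intro e; apply hq''; rw [e]; exact hp''
      have hveq : T v' (Nat.find h - 1) = T v (Nat.find h - 1) := by
        by_contra hne
        apply hmoves'
        rw [hσswap]
        apply Equiv.swap_apply_of_ne_of_ne hne
        intro e
        apply hq
        rw [← e]
        exact hp''
      have hTinj : Function.Injective (fun w => T w (Nat.find h - 1)) := by
        intro w w' he
        simp only [hT, foldl_eq_prod] at he
        exact Equiv.injective _ he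
      exact (hTinj hveq).symm
  have hCcard : C.toFinset.card ≤ C.length := List.toFinset_card_le C
  -- find a confined vertex
  have hnotsub : ¬ V0 ⊆ B := by
    intro hsub
    have := Finset.card_le_card hsub
    omega
  obtain ⟨v, hvV0, hvB⟩ := Finset.not_subset.mp hnotsub
  have hconf : ∀ t, (s.take t).foldl app v ∈ V0 := by
    intro t
    by_contra hcon
    exact hvB (Finset.mem_filter.mpr ⟨hvV0, ⟨t, hcon⟩⟩)
  refine ⟨v, hvV0, ?_⟩
  intro hfix
  obtain ⟨w, hwt, hwe, hwn⟩ := trail_of_confined u V0 s hsnd hsu hstr v hconf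
  have hend : (⟨s.foldl app v, by simpa using hconf s.length⟩ :
      (V0 : Set (Fin n))) = ⟨v, by simpa using hconf 0⟩ :=
    Subtype.ext (by show List.foldl app v s = v; rw [hfold v, hfix])
  have hte : (w.copy rfl hend).edges = [] := by
    apply acyclic_no_closed_trail hforest
    rwa [SimpleGraph.Walk.isTrail_copy]
  rw [SimpleGraph.Walk.edges_copy] at hte
  have hall := hwn hte
  obtain ⟨g0, hg0u, hg0s⟩ := hcov v
  have : g0 v ≠ v := Equiv.Perm.mem_support.mp hg0s
  exact this (hall g0 (hsperm.mem_iff.mpr hg0u))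

theorem stmt_3 (n : ℕ) (u : List (Equiv.Perm (Fin n)))
    (htr : IsTranspositional u) (hnd : u.Nodup)
    (hcov : ∀ v : Fin n, ∃ g ∈ u, v ∈ g.support)
    (hconn : (TranspGraph u).Connected)
    (V0 V1 : Finset (Fin n))
    (hdisj : Disjoint V0 V1) (huniv : V0 ∪ V1 = Finset.univ)
    (hV0ne : V0.Nonempty) (hV1ne : V1.Nonempty)
    (C : List (Equiv.Perm (Fin n)))
    (hC : C = u.filter (fun t => decide (∃ x ∈ V0, ∃ y ∈ V1, t = Equiv.swap x y)))
    (hforest : ((TranspGraph u).induce (V0 : Set (Fin n))).IsAcyclic)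
    (hcard : 2 * C.length < V0.card)
    (hV1 : 2 ≤ V1.card) :
    ¬ PermComplete u := by
  have hmain := exists_nonfixed_aux n u htr hnd hcov V0 V1 huniv C hC hforest
    (by omega)
  intro hPC
  obtain ⟨a, ha, b, hb, hab⟩ := Finset.one_lt_card.mp (by omega : 1 < V1.card)
  rcases hPC with h1 | h1
  · have h1m : (1 : Equiv.Perm (Fin n)) ∈ ProdSet u := by
      rw [h1]; simp
    obtain ⟨v, hv, hne⟩ := hmain 1 h1m
    exact hne rfl
  · have hsw : Equiv.swap a b ∈ ProdSet u := by
      rw [h1]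
      simp [Set.mem_setOf_eq, Equiv.Perm.sign_swap hab]
    obtain ⟨v, hv, hne⟩ := hmain _ hsw
    have hva : v ≠ a := fun e => (Finset.disjoint_left.mp hdisj hv) (e ▸ ha)
    have hvb : v ≠ b := fun e => (Finset.disjoint_left.mp hdisj hv) (e ▸ hb)
    exact hne (Equiv.swap_apply_of_ne_of_ne hva hvb)
end

section
/- Let Fin n be partitioned into disjoint sets V0 and V1 with min{|V0|,|V1|} ≥ 2. Let u be an injective transpositional sequence on Fin n whose graph G(u) covers every vertex, such that the subgraph of G(u) induced on V0 is connected, the subgraph induced on V1 is connected, and the set C of terms of u with one endpoint in V0 and the other in V1 is nonempty and satisfies |C| < min{|V0|,|V1|}. Then u is not permutationally complete. -/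
open Finset Equiv

variable {n : ℕ}

/-- crossing number of a permutation. -/
def cnum (V0 V1 : Finset (Fin n)) (g : Equiv.Perm (Fin n)) : ℕ :=
  (V0.filter (fun x => g x ∈ V1)).card

lemma cnum_one (V0 V1 : Finset (Fin n)) (hdisj : Disjoint V0 V1) :
    cnum V0 V1 1 = 0 := by
  unfold cnum
  rw [Finset.card_eq_zero, Finset.filter_eq_empty_iff]
  intro x hx
  simp only [Equiv.Perm.one_apply]
  exact fun hx1 => (Finset.disjoint_left.1 hdisj) hx hx1

lemma cnum_mul_le (V0 V1 : Finset (Fin n)) (huniv : V0 ∪ V1 = Finset.univ)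
    (f g : Equiv.Perm (Fin n)) :
    cnum V0 V1 (f * g) ≤ cnum V0 V1 f + cnum V0 V1 g := by
  unfold cnum
  have hsub : V0.filter (fun x => (f * g) x ∈ V1) ⊆
      (V0.filter (fun x => g x ∈ V0 ∧ f (g x) ∈ V1)) ∪ (V0.filter (fun x => g x ∈ V1)) := by
    intro x hx
    rw [Finset.mem_filter] at hx
    have hgx : g x ∈ V0 ∪ V1 := huniv ▸ Finset.mem_univ _
    rcases Finset.mem_union.1 hgx with h | h
    · exact Finset.mem_union_left _ (Finset.mem_filter.2 ⟨hx.1, h, by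
        have := hx.2; rwa [Equiv.Perm.mul_apply] at this⟩)
    · exact Finset.mem_union_right _ (Finset.mem_filter.2 ⟨hx.1, h⟩)
  calc (V0.filter (fun x => (f * g) x ∈ V1)).card
      ≤ ((V0.filter (fun x => g x ∈ V0 ∧ f (g x) ∈ V1)) ∪ (V0.filter (fun x => g x ∈ V1))).card :=
        Finset.card_le_card hsub
    _ ≤ (V0.filter (fun x => g x ∈ V0 ∧ f (g x) ∈ V1)).card
          + (V0.filter (fun x => g x ∈ V1)).card := Finset.card_union_le _ _
    _ ≤ (V0.filter (fun x => f x ∈ V1)).card + (V0.filter (fun x => g x ∈ V1)).card := by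
        refine Nat.add_le_add_right ?_ _
        apply Finset.card_le_card_of_injOn g
        · intro x hx
          rw [Finset.mem_coe, Finset.mem_filter] at hx ⊢
          exact ⟨hx.2.1, hx.2.2⟩
        · exact g.injective.injOn
    
open scoped Classical in
lemma cnum_swap_le (V0 V1 : Finset (Fin n)) (hdisj : Disjoint V0 V1)
    (huniv : V0 ∪ V1 = Finset.univ) (x y : Fin n) (hxy : x ≠ y) :
    cnum V0 V1 (Equiv.swap x y) ≤
      (if ∃ a ∈ V0, ∃ b ∈ V1, Equiv.swap x y = Equiv.swap a b then 1 else 0) := by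
  have hd := Finset.disjoint_left.1 hdisj
  have hmem : ∀ z : Fin n, z ∈ V0 ∨ z ∈ V1 := fun z =>
    Finset.mem_union.1 (huniv ▸ Finset.mem_univ z)
  have hcase : ∀ (a b : Fin n), a ∈ V0 → b ∈ V1 →
      (V0.filter (fun z => Equiv.swap a b z ∈ V1)).card ≤ 1 := by
    intro a b ha hb
    apply Finset.card_le_one.2
    intro z hz w hw
    rw [Finset.mem_filter] at hz hw
    have hza : z = a := by
      by_contra hne
      have hzb : z ≠ b := fun h => hd (h ▸ hz.1) hb
      rw [Equiv.swap_apply_of_ne_of_ne hne hzb] at hz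
      exact hd hz.1 hz.2
    have hwa : w = a := by
      by_contra hne
      have hwb : w ≠ b := fun h => hd (h ▸ hw.1) hb
      rw [Equiv.swap_apply_of_ne_of_ne hne hwb] at hw
      exact hd hw.1 hw.2
    rw [hza, hwa]
  have hzero : ∀ (a b : Fin n), (∀ z ∈ V0, Equiv.swap a b z ∉ V1) →
      cnum V0 V1 (Equiv.swap a b) = 0 := by
    intro a b h
    unfold cnum
    rw [Finset.card_eq_zero, Finset.filter_eq_empty_iff]
    exact h
  rcases hmem x with hx0 | hx1 <;> rcases hmem y with hy0 | hy1
  · -- both in V0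
    have : cnum V0 V1 (Equiv.swap x y) = 0 := by
      apply hzero
      intro z hz
      rcases eq_or_ne z x with rfl | hzx
      · rw [Equiv.swap_apply_left]; exact fun h => hd hy0 h
      rcases eq_or_ne z y with rfl | hzy
      · rw [Equiv.swap_apply_right]; exact fun h => hd hx0 h
      · rw [Equiv.swap_apply_of_ne_of_ne hzx hzy]; exact fun h => hd hz h
    rw [this]; exact Nat.zero_le _
  · -- x ∈ V0, y ∈ V1
    rw [if_pos ⟨x, hx0, y, hy1, rfl⟩]
    exact hcase x y hx0 hy1
  · -- x ∈ V1, y ∈ V0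
    rw [if_pos ⟨y, hy0, x, hx1, Equiv.swap_comm x y⟩]
    rw [show Equiv.swap x y = Equiv.swap y x from Equiv.swap_comm x y]
    exact hcase y x hy0 hx1
  · -- both in V1
    have : cnum V0 V1 (Equiv.swap x y) = 0 := by
      apply hzero
      intro z hz
      have hzx : z ≠ x := fun h => hd hz (h ▸ hx1)
      have hzy : z ≠ y := fun h => hd hz (h ▸ hy1)
      rw [Equiv.swap_apply_of_ne_of_ne hzx hzy]
      exact fun h => hd hz h
    rw [this]; exact Nat.zero_le _

lemma cnum_prod_le (V0 V1 : Finset (Fin n)) (hdisj : Disjoint V0 V1)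
    (huniv : V0 ∪ V1 = Finset.univ) :
    ∀ r : List (Equiv.Perm (Fin n)), (∀ t ∈ r, ∃ x y : Fin n, x ≠ y ∧ t = Equiv.swap x y) →
      cnum V0 V1 r.prod ≤
        r.countP (fun t => decide (∃ a ∈ V0, ∃ b ∈ V1, t = Equiv.swap a b)) := by
  intro r
  induction r with
  | nil => intro _; simp [cnum_one V0 V1 hdisj]
  | cons t r ih =>
    intro h
    obtain ⟨x, y, hxy, rfl⟩ := h t List.mem_cons_self
    rw [List.prod_cons, List.countP_cons]
    calc cnum V0 V1 (Equiv.swap x y * r.prod)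
        ≤ cnum V0 V1 (Equiv.swap x y) + cnum V0 V1 r.prod :=
          cnum_mul_le V0 V1 huniv _ _
      _ ≤ (if ∃ a ∈ V0, ∃ b ∈ V1, Equiv.swap x y = Equiv.swap a b then 1 else 0)
            + r.countP (fun t => decide (∃ a ∈ V0, ∃ b ∈ V1, t = Equiv.swap a b)) := by
          have := cnum_swap_le V0 V1 hdisj huniv x y hxy
          have h2 := ih (fun t ht => h t (List.mem_cons_of_mem _ ht))
          exact Nat.add_le_add this h2
      _ ≤ _ := by
          rw [Nat.add_comm]
          apply Nat.add_le_add_left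
          by_cases hp : ∃ a ∈ V0, ∃ b ∈ V1, Equiv.swap x y = Equiv.swap a b
          · simp [hp]
          · simp [hp]

lemma exists_perm_cross (k : ℕ) : ∀ (A B : Finset (Fin n)), Disjoint A B →
    k ≤ A.card → k ≤ B.card →
    ∃ g : Equiv.Perm (Fin n), (∀ x, g x ≠ x → x ∈ A ∪ B) ∧
      Equiv.Perm.sign g = (-1)^k ∧ k ≤ (A.filter (fun x => g x ∈ B)).card := by
  induction k with
  | zero =>
    intro A B _ _ _
    exact ⟨1, fun x hx => absurd rfl hx, by simp, Nat.zero_le _⟩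
  | succ k ih =>
    intro A B hdisj hA hB
    obtain ⟨a, ha⟩ := Finset.card_pos.1 (lt_of_lt_of_le (Nat.succ_pos k) hA)
    obtain ⟨b, hb⟩ := Finset.card_pos.1 (lt_of_lt_of_le (Nat.succ_pos k) hB)
    have hab : a ≠ b := fun h => Finset.disjoint_left.1 hdisj ha (h ▸ hb)
    have hA' : k ≤ (A.erase a).card := by
      rw [Finset.card_erase_of_mem ha]; omega
    have hB' : k ≤ (B.erase b).card := by
      rw [Finset.card_erase_of_mem hb]; omega
    obtain ⟨g, hsupp, hsign, hcount⟩ := ih (A.erase a) (B.erase b)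
      (hdisj.mono (Finset.erase_subset _ _) (Finset.erase_subset _ _)) hA' hB'
    refine ⟨Equiv.swap a b * g, ?_, ?_, ?_⟩
    · intro x hx
      by_cases hgx : g x = x
      · rw [Equiv.Perm.mul_apply, hgx] at hx
        rcases eq_or_ne x a with rfl | hxa
        · exact Finset.mem_union_left _ ha
        rcases eq_or_ne x b with rfl | hxb
        · exact Finset.mem_union_right _ hb
        · rw [Equiv.swap_apply_of_ne_of_ne hxa hxb] at hx
          exact absurd rfl hx
      · have := hsupp x hgx
        rcases Finset.mem_union.1 this with h | h
        · exact Finset.mem_union_left _ (Finset.mem_of_mem_erase h)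
        · exact Finset.mem_union_right _ (Finset.mem_of_mem_erase h)
    · rw [map_mul, hsign, Equiv.Perm.sign_swap hab, pow_succ]
      exact mul_comm _ _
    · have hga : g a = a := by
        by_contra h
        rcases Finset.mem_union.1 (hsupp a h) with h' | h'
        · exact (Finset.notMem_erase a A) h'
        · exact Finset.disjoint_left.1 hdisj ha (Finset.mem_of_mem_erase h')
      have hsub : insert a ((A.erase a).filter (fun x => g x ∈ B.erase b)) ⊆
          A.filter (fun x => (Equiv.swap a b * g) x ∈ B) := by
        intro x hx
        rcases Finset.mem_insert.1 hx with rfl | hx'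
        · rw [Finset.mem_filter]
          refine ⟨ha, ?_⟩
          rw [Equiv.Perm.mul_apply, hga, Equiv.swap_apply_left]
          exact hb
        · rw [Finset.mem_filter] at hx'
          rw [Finset.mem_filter]
          refine ⟨Finset.mem_of_mem_erase hx'.1, ?_⟩
          have hgx := hx'.2
          have hgxb : g x ≠ b := Finset.ne_of_mem_erase hgx
          have hgxa : g x ≠ a := fun h =>
            Finset.disjoint_left.1 hdisj ha (Finset.mem_of_mem_erase (h ▸ hgx))
          rw [Equiv.Perm.mul_apply, Equiv.swap_apply_of_ne_of_ne hgxa hgxb]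
          exact Finset.mem_of_mem_erase hgx
      have hnotmem : a ∉ (A.erase a).filter (fun x => g x ∈ B.erase b) := by
        intro h
        exact Finset.notMem_erase a A (Finset.mem_filter.1 h).1
      calc k + 1 ≤ ((A.erase a).filter (fun x => g x ∈ B.erase b)).card + 1 :=
            Nat.add_le_add_right hcount 1
        _ = (insert a ((A.erase a).filter (fun x => g x ∈ B.erase b))).card := by
            rw [Finset.card_insert_of_notMem hnotmem]
        _ ≤ _ := Finset.card_le_card hsub

theorem stmt_4 (n : ℕ) (u : List (Equiv.Perm (Fin n)))
    (htr : IsTranspositional u) (hnd : u.Nodup)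
    (hcov : ∀ v : Fin n, ∃ g ∈ u, v ∈ g.support)
    (V0 V1 : Finset (Fin n))
    (hdisj : Disjoint V0 V1) (huniv : V0 ∪ V1 = Finset.univ)
    (hV0 : 2 ≤ V0.card) (hV1 : 2 ≤ V1.card)
    (hconn0 : ((TranspGraph u).induce (V0 : Set (Fin n))).Connected)
    (hconn1 : ((TranspGraph u).induce (V1 : Set (Fin n))).Connected)
    (C : List (Equiv.Perm (Fin n)))
    (hC : C = u.filter (fun t => decide (∃ x ∈ V0, ∃ y ∈ V1, t = Equiv.swap x y)))
    (hCne : C ≠ [])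
    (hcard : C.length < min V0.card V1.card) :
    ¬ PermComplete u := by
  intro hpc
  have hmem : u.prod ∈ ProdSet u := ⟨u, List.Perm.refl u, rfl⟩
  have hset : ProdSet u = {g | Equiv.Perm.sign g = Equiv.Perm.sign u.prod} := by
    rcases hpc with h | h
    · have h1 : Equiv.Perm.sign u.prod = 1 := by rw [h] at hmem; exact hmem
      rw [h, h1]
    · have h1 : Equiv.Perm.sign u.prod = -1 := by rw [h] at hmem; exact hmem
      rw [h, h1]
  set k := C.length + 1 with hk
  have hmin : min V0.card V1.card ≤ V0.card := min_le_left _ _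
  have hmin' : min V0.card V1.card ≤ V1.card := min_le_right _ _
  have hkA : k ≤ V0.card := by omega
  have hkB : k ≤ V1.card := by omega
  obtain ⟨g0, hsupp, hsign0, hcount0⟩ := exists_perm_cross k V0 V1 hdisj hkA hkB
  obtain ⟨b1, hb1, b2, hb2, hbne⟩ := Finset.one_lt_card.1 (by omega : 1 < V1.card)
  have key : ∃ g : Equiv.Perm (Fin n),
      Equiv.Perm.sign g = Equiv.Perm.sign u.prod ∧ k ≤ cnum V0 V1 g := by
    by_cases hs : Equiv.Perm.sign g0 = Equiv.Perm.sign u.prod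
    · exact ⟨g0, hs, hcount0⟩
    · refine ⟨Equiv.swap b1 b2 * g0, ?_, ?_⟩
      · rw [map_mul, Equiv.Perm.sign_swap hbne]
        rcases Int.units_eq_one_or (Equiv.Perm.sign g0) with h0 | h0 <;>
          rcases Int.units_eq_one_or (Equiv.Perm.sign u.prod) with h1 | h1
        · exact absurd (h0.trans h1.symm) hs
        · rw [h0, h1]; decide
        · rw [h0, h1]; decide
        · exact absurd (h0.trans h1.symm) hs
      · refine le_trans hcount0 (Finset.card_le_card ?_)
        intro x hx
        rw [Finset.mem_filter] at hx ⊢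
        refine ⟨hx.1, ?_⟩
        rw [Equiv.Perm.mul_apply]
        rcases eq_or_ne (g0 x) b1 with h | h
        · rw [h, Equiv.swap_apply_left]; exact hb2
        rcases eq_or_ne (g0 x) b2 with h' | h'
        · rw [h', Equiv.swap_apply_right]; exact hb1
        · rw [Equiv.swap_apply_of_ne_of_ne h h']; exact hx.2
  obtain ⟨g, hgsign, hgcnt⟩ := key
  have hg' : g ∈ ProdSet u := by rw [hset]; exact hgsign
  obtain ⟨r, hr, hrp⟩ := hg'
  have htrr : ∀ t ∈ r, ∃ x y : Fin n, x ≠ y ∧ t = Equiv.swap x y :=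
    fun t ht => htr t (hr.mem_iff.mp ht)
  have hle := cnum_prod_le V0 V1 hdisj huniv r htrr
  rw [hrp] at hle
  have hcnt : r.countP (fun t => decide (∃ a ∈ V0, ∃ b ∈ V1, t = Equiv.swap a b))
      = C.length := by
    rw [hr.countP_eq, hC, List.countP_eq_length_filter]
  rw [hcnt] at hle
  omega
end

section
/- Let t be an injective transpositional sequence on Fin n that is permutationally complete, with graph G = G(t). Let W ⊆ Fin n be nonempty, regard Fin n as a subset of Fin (n+1), write x for the new vertex of Fin (n+1), and let s be an injective transpositional sequence on Fin (n+1) whose set of terms consists exactly of all terms of t together with the transpositions (x w) for every w ∈ W. Let f be a permutation of Fin (n+1) whose sign equals (−1)^{|s|} (so f is even if s has an even number of terms and odd otherwise). Then f ∈ Prod(s) provided at least one of the following holds: (1) x·f ∈ W; (2) there exist w0 ≠ w1 in W with w0·f = w1; (3) x·f = x and there is a perfect matching of W consisting of transpositions (a b) with a,b ∈ W each occurring as a term of t (a set of pairwise disjoint edges of G within W covering all of W). -/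
namespace Stmt5

open Equiv Equiv.Perm

variable {n : ℕ}

def lift : Perm (Fin n) →* Perm (Fin (n + 1)) where
  toFun g := Equiv.permCongr finSuccEquivLast.symm g.optionCongr
  map_one' := by ext i; simp
  map_mul' a b := by
    ext i
    simp [Equiv.permCongr_apply]

@[simp] lemma lift_castSucc (g : Perm (Fin n)) (i : Fin n) :
    lift g (Fin.castSucc i) = Fin.castSucc (g i) := by
  simp [lift, Equiv.permCongr_apply, finSuccEquivLast_castSucc]

@[simp] lemma lift_last (g : Perm (Fin n)) : lift g (Fin.last n) = Fin.last n := by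
  simp [lift, Equiv.permCongr_apply, finSuccEquivLast_last]

lemma lift_sign (g : Perm (Fin n)) : sign (lift g) = sign g := by
  simp [lift, sign_permCongr]

lemma lift_swap (a b : Fin n) :
    lift (swap a b) = swap (Fin.castSucc a) (Fin.castSucc b) := by
  ext i
  cases i using Fin.lastCases with
  | last => simp [swap_apply_of_ne_of_ne, (Fin.castSucc_lt_last a).ne',
      (Fin.castSucc_lt_last b).ne']
  | cast j =>
    rcases eq_or_ne j a with rfl | hja
    · simp
    rcases eq_or_ne j b with rfl | hjb
    · simp
    · simp [swap_apply_of_ne_of_ne, hja, hjb,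
        swap_apply_of_ne_of_ne (fun h => hja (Fin.castSucc_injective _ h))
          (fun h => hjb (Fin.castSucc_injective _ h))]

lemma lift_injective : Function.Injective (lift (n := n)) := by
  intro a b h
  ext i
  have := congrArg (fun g : Perm (Fin (n+1)) => g (Fin.castSucc i)) h
  exact congrArg Fin.val (Fin.castSucc_injective _ (by simpa using this))

lemma exists_lift (g : Perm (Fin (n + 1))) (hg : g (Fin.last n) = Fin.last n) :
    ∃ g' : Perm (Fin n), lift g' = g := by
  set p := Equiv.permCongr finSuccEquivLast g with hp
  have hpn : p none = none := by
    simp [hp, Equiv.permCongr_apply, hg, finSuccEquivLast_last]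
  refine ⟨removeNone p, ?_⟩
  have h2 : (removeNone p).optionCongr = p := by
    rw [map_equiv_removeNone, hpn]; simp; rfl
  show Equiv.permCongr finSuccEquivLast.symm (removeNone p).optionCongr = g
  rw [h2, hp]
  ext i
  simp [Equiv.permCongr_apply]

/-- The star transposition `(w, x)` where `x` is the last element. -/
def st (w : Fin n) : Perm (Fin (n + 1)) := swap (Fin.castSucc w) (Fin.last n)

lemma st_isSwap (w : Fin n) : IsSwap (st w) :=
  ⟨_, _, (Fin.castSucc_lt_last w).ne, rfl⟩

@[simp] lemma st_last (w : Fin n) : st w (Fin.last n) = Fin.castSucc w := by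
  simp [st]

lemma st_injective : Function.Injective (st (n := n)) := by
  intro a b h
  have := congrArg (fun g : Perm (Fin (n+1)) => g (Fin.last n)) h
  simpa using Fin.castSucc_injective _ (by simpa using this)

lemma st_ne_lift (w : Fin n) (g : Perm (Fin n)) : st w ≠ lift g := by
  intro h
  have := congrArg (fun g : Perm (Fin (n+1)) => g (Fin.last n)) h
  simp at this

lemma st_prod_fix (L : List (Fin n)) (v : Fin n) (hv : v ∉ L) :
    (L.map st).prod (Fin.castSucc v) = Fin.castSucc v := by
  induction L with
  | nil => simp
  | cons w L ih =>
    have hvw : v ≠ w := fun h => hv (h ▸ (List.mem_cons_self : w ∈ w :: L))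
    simp only [List.map_cons, List.prod_cons, Perm.mul_apply]
    rw [ih (fun h => hv (List.mem_cons_of_mem _ h))]
    exact swap_apply_of_ne_of_ne
      (fun h => hvw (Fin.castSucc_injective _ h)) (Fin.castSucc_lt_last v).ne

lemma st_prod_last (L : List (Fin n)) (v : Fin n) (hv : v ∉ L) :
    (((L ++ [v]).map st).prod) (Fin.last n) = Fin.castSucc v := by
  rw [List.map_append, List.prod_append]
  simp only [List.map_cons, List.map_nil, List.prod_cons, List.prod_nil, mul_one,
    Perm.mul_apply, st_last]
  exact st_prod_fix L v hv

lemma swap_mul_swap_mul_swap {α : Type*} [DecidableEq α] {u v z : α}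
    (huv : u ≠ v) (huz : u ≠ z) (hvz : v ≠ z) :
    swap u z * swap u v * swap v z = swap u v := by
  have e1 : swap u v * swap v z = swap v z * swap u z := by
    rw [swap_mul_eq_mul_swap, swap_inv, swap_apply_of_ne_of_ne huv huz, swap_apply_left]
  rw [mul_assoc, e1, ← mul_assoc]
  have e2 := swap_apply_apply (swap u z) v z
  rw [swap_inv, swap_apply_of_ne_of_ne huv.symm hvz, swap_apply_right] at e2
  rw [← e2, swap_comm]

lemma prodset_eq (t : List (Perm (Fin n))) (httr : IsTranspositional t)
    (htpc : PermComplete t) :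
    ProdSet t = {g | sign g = (-1 : ℤˣ) ^ t.length} := by
  have hswap : ∀ g ∈ t, IsSwap g := fun g hg => by
    obtain ⟨x, y, hxy, rfl⟩ := httr g hg; exact ⟨x, y, hxy, rfl⟩
  have hmem : t.prod ∈ ProdSet t := ⟨t, List.Perm.refl t, rfl⟩
  have hsig : sign t.prod = (-1 : ℤˣ) ^ t.length := sign_prod_list_swap hswap
  rcases htpc with h | h
  · rw [h] at hmem ⊢
    have h1 : ((-1 : ℤˣ)) ^ t.length = 1 := by rw [← hsig]; exact hmem
    rw [h1]
  · rw [h] at hmem ⊢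
    have h1 : ((-1 : ℤˣ)) ^ t.length = -1 := by rw [← hsig]; exact hmem
    rw [h1]

end Stmt5

namespace Stmt5
open Equiv Equiv.Perm


lemma st_inv {n : ℕ} (w : Fin n) : (st w)⁻¹ = st w := Equiv.swap_inv _ _

lemma st_sign {n : ℕ} (w : Fin n) : sign (st w) = -1 :=
  Equiv.Perm.sign_swap (Fin.castSucc_lt_last w).ne

lemma neg_pow_inv (a : ℕ) : ((-1 : ℤˣ) ^ a)⁻¹ = (-1 : ℤˣ) ^ a := by
  rw [← inv_pow]
  norm_num

lemma helper2 (a b : ℕ) :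
    ((-1 : ℤˣ) ^ a)⁻¹ * (-1 : ℤˣ) ^ (a + 1 + b) * ((-1 : ℤˣ))⁻¹ = (-1 : ℤˣ) ^ b := by
  rw [neg_pow_inv, pow_add, pow_add, pow_one]
  rcases Int.units_eq_one_or ((-1 : ℤˣ) ^ a) with h | h <;>
    rcases Int.units_eq_one_or ((-1 : ℤˣ) ^ b) with h' | h' <;> rw [h, h'] <;> decide

lemma helper1 (a b : ℕ) :
    ((-1 : ℤˣ) ^ a)⁻¹ * (-1 : ℤˣ) ^ (a + b) = (-1 : ℤˣ) ^ b := by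
  rw [pow_add, inv_mul_cancel_left]

end Stmt5

theorem stmt_5 (n : ℕ) (t : List (Equiv.Perm (Fin n)))
    (httr : IsTranspositional t) (htnd : t.Nodup) (htpc : PermComplete t)
    (W : Finset (Fin n)) (hW : W.Nonempty)
    (s : List (Equiv.Perm (Fin (n + 1))))
    (hstr : IsTranspositional s) (hsnd : s.Nodup)
    (hterms : ∀ g : Equiv.Perm (Fin (n + 1)), g ∈ s ↔
      ((∃ a b : Fin n, Equiv.swap a b ∈ t ∧
          g = Equiv.swap (Fin.castSucc a) (Fin.castSucc b)) ∨
       (∃ w ∈ W, g = Equiv.swap (Fin.castSucc w) (Fin.last n))))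
    (f : Equiv.Perm (Fin (n + 1)))
    (hsign : Equiv.Perm.sign f = (-1 : ℤˣ) ^ s.length)
    (hcond :
      (∃ w ∈ W, f (Fin.last n) = Fin.castSucc w) ∨
      (∃ w0 ∈ W, ∃ w1 ∈ W, w0 ≠ w1 ∧ f (Fin.castSucc w0) = Fin.castSucc w1) ∨
      (f (Fin.last n) = Fin.last n ∧
        ∃ M : Finset (Equiv.Perm (Fin n)),
          (∀ m ∈ M, ∃ a b : Fin n, a ∈ W ∧ b ∈ W ∧ a ≠ b ∧
            m = Equiv.swap a b ∧ m ∈ t) ∧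
          (∀ w ∈ W, ∃ m ∈ M, w ∈ m.support) ∧
          (∀ m1 ∈ M, ∀ m2 ∈ M, m1 ≠ m2 → Disjoint m1.support m2.support))) :
    f ∈ ProdSet s := by
  classical
  have hmemS : ∀ g : Equiv.Perm (Fin (n + 1)), g ∈ s ↔
      ((∃ m ∈ t, g = Stmt5.lift m) ∨ (∃ w ∈ W, g = Stmt5.st w)) := by
    intro g
    rw [hterms g]
    constructor
    · rintro (⟨a, b, hab, rfl⟩ | ⟨w, hw, rfl⟩)
      · exact Or.inl ⟨Equiv.swap a b, hab, (Stmt5.lift_swap a b).symm⟩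
      · exact Or.inr ⟨w, hw, rfl⟩
    · rintro (⟨m, hm, rfl⟩ | ⟨w, hw, rfl⟩)
      · obtain ⟨a, b, hab, rfl⟩ := httr m hm
        exact Or.inl ⟨a, b, hm, Stmt5.lift_swap a b⟩
      · exact Or.inr ⟨w, hw, rfl⟩
  have hProdt := Stmt5.prodset_eq t httr htpc
  have hnd0 : (W.toList.map Stmt5.st ++ t.map ⇑Stmt5.lift).Nodup := by
    rw [List.nodup_append']
    refine ⟨(W.nodup_toList).map Stmt5.st_injective,
      htnd.map Stmt5.lift_injective, ?_⟩
    intro g hg1 hg2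
    obtain ⟨w, _, rfl⟩ := List.mem_map.mp hg1
    obtain ⟨m, _, hm⟩ := List.mem_map.mp hg2
    exact Stmt5.st_ne_lift w m hm.symm
  have hperm0 : (W.toList.map Stmt5.st ++ t.map ⇑Stmt5.lift).Perm s := by
    refine (List.perm_ext_iff_of_nodup hnd0 hsnd).mpr ?_
    intro g
    rw [hmemS g, List.mem_append, List.mem_map, List.mem_map]
    constructor
    · rintro (⟨w, hw, rfl⟩ | ⟨m, hm, rfl⟩)
      · exact Or.inr ⟨w, Finset.mem_toList.mp hw, rfl⟩
      · exact Or.inl ⟨m, hm, rfl⟩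
    · rintro (⟨m, hm, rfl⟩ | ⟨w, hw, rfl⟩)
      · exact Or.inr ⟨m, hm, rfl⟩
      · exact Or.inl ⟨w, Finset.mem_toList.mpr hw, rfl⟩
  have hslen : s.length = W.card + t.length := by
    rw [← hperm0.length_eq, List.length_append, List.length_map, List.length_map,
      Finset.length_toList]
  have hstswaps : ∀ L : List (Fin n), ∀ g ∈ L.map Stmt5.st, Equiv.Perm.IsSwap g := by
    rintro L g hg
    obtain ⟨w, _, rfl⟩ := List.mem_map.mp hg
    exact Stmt5.st_isSwap w
  rcases hcond with ⟨w0, hw0, hf⟩ | ⟨w0, hw0, w1, hw1, hne, hf⟩ | ⟨hfl, M, hM1, hM2, hM3⟩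
  · -- Case 1 : f (last) ∈ W
    set L := (W.erase w0).toList with hL
    have hw0L : w0 ∉ L := by simp [hL]
    have h2 : W.toList.Perm (w0 :: L) := by
      have := Finset.toList_insert (Finset.notMem_erase w0 W)
      rwa [Finset.insert_erase hw0] at this
    have hpermL : (L ++ [w0]).Perm W.toList :=
      (List.perm_append_singleton w0 L).trans h2.symm
    set c := ((L ++ [w0]).map Stmt5.st).prod with hc
    have hcx : c (Fin.last n) = Fin.castSucc w0 := Stmt5.st_prod_last L w0 hw0L
    have hfix : (c⁻¹ * f) (Fin.last n) = Fin.last n := by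
      rw [Equiv.Perm.mul_apply, hf, ← hcx, ← Equiv.Perm.mul_apply, inv_mul_cancel, Equiv.Perm.one_apply]
    obtain ⟨g', hg'⟩ := Stmt5.exists_lift _ hfix
    have hsc : Equiv.Perm.sign c = (-1 : ℤˣ) ^ W.card := by
      rw [hc, Equiv.Perm.sign_prod_list_swap (hstswaps _), List.length_map,
        hpermL.length_eq, Finset.length_toList]
    have hsg' : Equiv.Perm.sign g' = (-1 : ℤˣ) ^ t.length := by
      have h5 : Equiv.Perm.sign g' = Equiv.Perm.sign (c⁻¹ * f) := by
        rw [← Stmt5.lift_sign g', hg']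
      rw [h5, map_mul, map_inv, hsc, hsign, hslen]
      exact Stmt5.helper1 W.card t.length
    obtain ⟨r, hrt, hrp⟩ : g' ∈ ProdSet t := by rw [hProdt]; exact hsg'
    refine ⟨(L ++ [w0]).map Stmt5.st ++ r.map ⇑Stmt5.lift, ?_, ?_⟩
    · exact ((hpermL.map _).append (hrt.map _)).trans hperm0
    · rw [List.prod_append, ← hc, ← MonoidHom.map_list_prod, hrp, hg',
        mul_inv_cancel_left]
  · -- Case 2 : f moves some w0 ∈ W to w1 ∈ W
    set L := ((W.erase w0).erase w1).toList with hL
    have hw1' : w1 ∈ W.erase w0 := Finset.mem_erase.mpr ⟨hne.symm, hw1⟩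
    have hw1L : w1 ∉ L := by simp [hL]
    have h2 : (W.erase w0).toList.Perm (w1 :: L) := by
      have := Finset.toList_insert (Finset.notMem_erase w1 (W.erase w0))
      rwa [Finset.insert_erase hw1'] at this
    have h3 : W.toList.Perm (w0 :: w1 :: L) := by
      have h4 := Finset.toList_insert (Finset.notMem_erase w0 W)
      rw [Finset.insert_erase hw0] at h4
      exact h4.trans (h2.cons w0)
    have hpermL : ((L ++ [w1]) ++ [w0]).Perm W.toList := by
      refine (List.perm_append_singleton w0 (L ++ [w1])).trans ?_
      exact ((List.perm_append_singleton w1 L).cons w0).trans h3.symm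
    set c := ((L ++ [w1]).map Stmt5.st).prod with hc
    have hcx : c (Fin.last n) = Fin.castSucc w1 := Stmt5.st_prod_last L w1 hw1L
    have hfix : (c⁻¹ * (f * (Stmt5.st w0)⁻¹)) (Fin.last n) = Fin.last n := by
      rw [Equiv.Perm.mul_apply, Equiv.Perm.mul_apply, Stmt5.st_inv, Stmt5.st_last, hf,
        ← hcx, ← Equiv.Perm.mul_apply, inv_mul_cancel, Equiv.Perm.one_apply]
    obtain ⟨g', hg'⟩ := Stmt5.exists_lift _ hfix
    have hk : W.card = L.length + 1 + 1 := by
      rw [← Finset.length_toList, ← hpermL.length_eq]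
      simp
    have hsc : Equiv.Perm.sign c = (-1 : ℤˣ) ^ (L.length + 1) := by
      rw [hc, Equiv.Perm.sign_prod_list_swap (hstswaps _), List.length_map]
      simp
    have hsg' : Equiv.Perm.sign g' = (-1 : ℤˣ) ^ t.length := by
      have h5 : Equiv.Perm.sign g' = Equiv.Perm.sign (c⁻¹ * (f * (Stmt5.st w0)⁻¹)) := by
        rw [← Stmt5.lift_sign g', hg']
      rw [h5, map_mul, map_mul, map_inv, map_inv, hsc, hsign, hslen, hk, Stmt5.st_sign,
        ← mul_assoc]
      exact Stmt5.helper2 (L.length + 1) t.length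
    obtain ⟨r, hrt, hrp⟩ : g' ∈ ProdSet t := by rw [hProdt]; exact hsg'
    refine ⟨(L ++ [w1]).map Stmt5.st ++ r.map ⇑Stmt5.lift ++ [Stmt5.st w0], ?_, ?_⟩
    · have e0 : ((L ++ [w1]) ++ [w0]).map Stmt5.st ++ r.map ⇑Stmt5.lift
          = (L ++ [w1]).map Stmt5.st ++ ([Stmt5.st w0] ++ r.map ⇑Stmt5.lift) := by
        simp [List.map_append, List.append_assoc]
      have e1 : ((L ++ [w1]).map Stmt5.st ++ r.map ⇑Stmt5.lift ++ [Stmt5.st w0]).Perm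
          (((L ++ [w1]) ++ [w0]).map Stmt5.st ++ r.map ⇑Stmt5.lift) := by
        rw [e0, List.append_assoc]
        exact List.Perm.append_left _ List.perm_append_comm
      exact (e1.trans ((hpermL.map _).append (hrt.map _))).trans hperm0
    · rw [List.prod_append, List.prod_append]
      simp only [List.prod_cons, List.prod_nil, mul_one]
      rw [← hc, ← MonoidHom.map_list_prod, hrp, hg', mul_inv_cancel_left,
        inv_mul_cancel_right]
  · -- Case 3 : f fixes last, perfect matching on W
    choose a b ha hb hab heq hmt using hM1
    obtain ⟨g', hg'⟩ := Stmt5.exists_lift f hfl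
    have hsupp : ∀ m (hm : m ∈ M), m.support = {a m hm, b m hm} := by
      intro m hm
      conv_lhs => rw [heq m hm]
      exact Equiv.Perm.support_swap (hab m hm)
    have hWcard : Even W.card := by
      have hWb : W = M.biUnion (fun m => m.support) := by
        apply Finset.ext
        intro v
        constructor
        · intro hv
          obtain ⟨m, hm, hvm⟩ := hM2 v hv
          exact Finset.mem_biUnion.mpr ⟨m, hm, hvm⟩
        · intro hv
          obtain ⟨m, hm, hvm⟩ := Finset.mem_biUnion.mp hv
          rw [hsupp m hm] at hvm
          rcases Finset.mem_insert.mp hvm with rfl | hvm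
          · exact ha m hm
          · rw [Finset.mem_singleton] at hvm
            rw [hvm]
            exact hb m hm
      have hc2 : ∀ m ∈ M, m.support.card = 2 := by
        intro m hm
        rw [hsupp m hm, Finset.card_insert_of_notMem (by simp [hab m hm]),
          Finset.card_singleton]
      rw [hWb, Finset.card_biUnion hM3, Finset.sum_congr rfl hc2, Finset.sum_const,
        smul_eq_mul]
      exact ⟨M.card, by ring⟩
    have hsg' : Equiv.Perm.sign g' = (-1 : ℤˣ) ^ t.length := by
      rw [← Stmt5.lift_sign g', hg', hsign, hslen, pow_add, hWcard.neg_one_pow, one_mul]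
    obtain ⟨r, hrt, hrp⟩ : g' ∈ ProdSet t := by rw [hProdt]; exact hsg'
    have hrnd : r.Nodup := hrt.nodup_iff.mpr htnd
    set F : Equiv.Perm (Fin n) → List (Equiv.Perm (Fin (n + 1))) :=
      fun m => if hm : m ∈ M then
        [Stmt5.st (a m hm), Stmt5.lift m, Stmt5.st (b m hm)] else [Stmt5.lift m] with hF
    have hFprod : ∀ m, (F m).prod = Stmt5.lift m := by
      intro m
      simp only [hF]
      by_cases hm : m ∈ M
      · rw [dif_pos hm]
        simp only [List.prod_cons, List.prod_nil, mul_one, ← mul_assoc]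
        have hlm : Stmt5.lift m
            = Equiv.swap (Fin.castSucc (a m hm)) (Fin.castSucc (b m hm)) := by
          conv_lhs => rw [heq m hm]
          exact Stmt5.lift_swap _ _
        rw [hlm]
        simp only [Stmt5.st]
        exact Stmt5.swap_mul_swap_mul_swap
          (fun h => hab m hm (Fin.castSucc_injective _ h))
          (Fin.castSucc_lt_last _).ne (Fin.castSucc_lt_last _).ne
      · rw [dif_neg hm]
        simp
    have hprodF : ∀ l : List (Equiv.Perm (Fin n)),
        (l.flatMap F).prod = Stmt5.lift l.prod := by
      intro l
      induction l with
      | nil => simp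
      | cons m l ih =>
        rw [List.flatMap_cons, List.prod_append, hFprod, ih, List.prod_cons, map_mul]
    have hmemF : ∀ m g, g ∈ F m → g = Stmt5.lift m ∨
        ∃ hm : m ∈ M, g = Stmt5.st (a m hm) ∨ g = Stmt5.st (b m hm) := by
      intro m g hg
      simp only [hF] at hg
      by_cases hm : m ∈ M
      · rw [dif_pos hm] at hg
        simp only [List.mem_cons, List.not_mem_nil, or_false] at hg
        rcases hg with rfl | rfl | rfl
        · exact Or.inr ⟨hm, Or.inl rfl⟩
        · exact Or.inl rfl
        · exact Or.inr ⟨hm, Or.inr rfl⟩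
      · rw [dif_neg hm] at hg
        simp only [List.mem_cons, List.not_mem_nil, or_false] at hg
        exact Or.inl hg
    have hstsupp : ∀ m (hm : m ∈ M) (w : Fin n),
        w = a m hm ∨ w = b m hm → w ∈ m.support := by
      intro m hm w hw
      rw [hsupp m hm]
      rcases hw with rfl | rfl
      · simp
      · simp
    have hd : ∀ m1 m2 : Equiv.Perm (Fin n), m1 ≠ m2 →
        (F m1).Disjoint (F m2) := by
      intro m1 m2 hne12 g hg1 hg2
      rcases hmemF m1 g hg1 with rfl | ⟨hm1, hg1'⟩
      · rcases hmemF m2 _ hg2 with h2 | ⟨hm2, h2 | h2⟩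
        · exact hne12 (Stmt5.lift_injective h2)
        · exact Stmt5.st_ne_lift _ _ h2.symm
        · exact Stmt5.st_ne_lift _ _ h2.symm
      · rcases hmemF m2 g hg2 with rfl | ⟨hm2, hg2'⟩
        · rcases hg1' with h1 | h1 <;> exact Stmt5.st_ne_lift _ _ h1.symm
        · have hw1 : ∃ w1, g = Stmt5.st w1 ∧ w1 ∈ m1.support := by
            rcases hg1' with h1 | h1
            · exact ⟨_, h1, hstsupp m1 hm1 _ (Or.inl rfl)⟩
            · exact ⟨_, h1, hstsupp m1 hm1 _ (Or.inr rfl)⟩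
          have hw2 : ∃ w2, g = Stmt5.st w2 ∧ w2 ∈ m2.support := by
            rcases hg2' with h2 | h2
            · exact ⟨_, h2, hstsupp m2 hm2 _ (Or.inl rfl)⟩
            · exact ⟨_, h2, hstsupp m2 hm2 _ (Or.inr rfl)⟩
          obtain ⟨w1, rfl, hw1s⟩ := hw1
          obtain ⟨w2, hw2e, hw2s⟩ := hw2
          have : w1 = w2 := Stmt5.st_injective hw2e
          subst this
          exact Finset.disjoint_left.mp (hM3 m1 hm1 m2 hm2 hne12) hw1s hw2s
    have hndF : (r.flatMap F).Nodup := by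
      rw [List.nodup_flatMap]
      constructor
      · intro m _
        simp only [hF]
        by_cases hm : m ∈ M
        · rw [dif_pos hm]
          have h1 : Stmt5.st (a m hm) ≠ Stmt5.st (b m hm) :=
            fun h => hab m hm (Stmt5.st_injective h)
          simp [List.nodup_cons, h1, Stmt5.st_ne_lift _ m,
            (Stmt5.st_ne_lift _ m), Ne.symm (Stmt5.st_ne_lift (b m hm) m)]
        · rw [dif_neg hm]
          exact List.nodup_singleton _
      · exact List.Pairwise.imp (fun h => hd _ _ h) hrnd
    have hpermF : (r.flatMap F).Perm s := by
      refine (List.perm_ext_iff_of_nodup hndF hsnd).mpr ?_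
      intro g
      rw [List.mem_flatMap, hmemS g]
      constructor
      · rintro ⟨m, hmr, hgm⟩
        rcases hmemF m g hgm with rfl | ⟨hm, h | h⟩
        · exact Or.inl ⟨m, hrt.mem_iff.mp hmr, rfl⟩
        · exact Or.inr ⟨a m hm, ha m hm, h⟩
        · exact Or.inr ⟨b m hm, hb m hm, h⟩
      · rintro (⟨m, hmt2, rfl⟩ | ⟨w, hw, rfl⟩)
        · refine ⟨m, hrt.mem_iff.mpr hmt2, ?_⟩
          simp only [hF]
          by_cases hm : m ∈ M
          · rw [dif_pos hm]; simp
          · rw [dif_neg hm]; simp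
        · obtain ⟨m, hm, hwm⟩ := hM2 w hw
          refine ⟨m, hrt.mem_iff.mpr (hmt m hm), ?_⟩
          simp only [hF]
          rw [dif_pos hm]
          rw [hsupp m hm] at hwm
          rcases Finset.mem_insert.mp hwm with rfl | hwm
          · simp
          · rw [Finset.mem_singleton] at hwm
            rw [hwm]
            simp
    exact ⟨r.flatMap F, hpermF, by rw [hprodF, hrp, hg']⟩
end

section
/- Work in the symmetric group on ℕ. Let ⟨x_1, x_2, x_3, …⟩ be an injective sequence of natural numbers all ≥ 2. Define lists of transpositions recursively by c_2 := [(1 x_2), (0 x_2)] and c_{2t+2} := c_{2t} ++ [(0 x_{2t+1}), (1 x_{2t+1}), (1 x_{2t+2}), (0 x_{2t+2})]. Then for every integer t ≥ 1, the left-to-right composition of the list r_{2t} := [(0 x_1)] ++ c_{2t} ++ [(1 x_1)] equals the permutation (0 1)(x_1 x_2 ⋯ x_{2t}), i.e., the product of the transposition swapping 0 and 1 with the 2t-cycle sending x_1 ↦ x_2 ↦ ⋯ ↦ x_{2t} ↦ x_1. -/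
open Equiv List

/-- Base swap identity. -/
lemma swap_base' (u v : ℕ) (hu0 : u ≠ 0) (hu1 : u ≠ 1) (hv0 : v ≠ 0) (hv1 : v ≠ 1)
    (huv : u ≠ v) :
    Equiv.swap 1 u * (Equiv.swap 0 v * Equiv.swap 1 v) * Equiv.swap 0 u
      = Equiv.swap 0 1 * Equiv.swap u v := by
  ext n
  rcases eq_or_ne n 0 with rfl | h0 <;>
  [skip; rcases eq_or_ne n 1 with rfl | h1] <;>
  [skip; skip; rcases eq_or_ne n u with rfl | hu] <;>
  [skip; skip; skip; rcases eq_or_ne n v with rfl | hv] <;>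
  simp [Equiv.Perm.mul_apply, Equiv.swap_apply_def, hu0, hu1, hv0, hv1, huv,
    hu0.symm, hu1.symm, hv0.symm, hv1.symm, huv.symm, *]

/-- Step swap identity. -/
lemma swap_step' (u a b : ℕ) (hu0 : u ≠ 0) (hu1 : u ≠ 1) (ha0 : a ≠ 0) (ha1 : a ≠ 1)
    (hb0 : b ≠ 0) (hb1 : b ≠ 1) (hua : u ≠ a) (hub : u ≠ b) (hab : a ≠ b) :
    Equiv.swap 1 u * (Equiv.swap 0 b * Equiv.swap 1 b * Equiv.swap 1 a * Equiv.swap 0 a) *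
        Equiv.swap 1 u * Equiv.swap 0 1
      = Equiv.swap 0 1 * (Equiv.swap u a * Equiv.swap a b) := by
  ext n
  rcases eq_or_ne n 0 with rfl | h0 <;>
  [skip; rcases eq_or_ne n 1 with rfl | h1] <;>
  [skip; skip; rcases eq_or_ne n u with rfl | hu] <;>
  [skip; skip; skip; rcases eq_or_ne n a with rfl | ha] <;>
  [skip; skip; skip; skip; rcases eq_or_ne n b with rfl | hb] <;>
  simp [Equiv.Perm.mul_apply, Equiv.swap_apply_def, hu0, hu1, ha0, ha1, hb0, hb1,
    hua, hub, hab, hu0.symm, hu1.symm, ha0.symm, ha1.symm, hb0.symm, hb1.symm,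
    hua.symm, hub.symm, hab.symm, *]

/-- The lists `c_{2t}` of transpositions of `ℕ`: `cseq x t` corresponds to `c_{2t}`,
with `c_2 = [(1 x_2), (0 x_2)]` and
`c_{2t+2} = c_{2t} ++ [(0 x_{2t+1}), (1 x_{2t+1}), (1 x_{2t+2}), (0 x_{2t+2})]`. -/
def cseq (x : ℕ → ℕ) : ℕ → List (Equiv.Perm ℕ)
  | 0 => []
  | 1 => [Equiv.swap 1 (x 2), Equiv.swap 0 (x 2)]
  | (t + 2) => cseq x (t + 1) ++
      [Equiv.swap 0 (x (2 * t + 3)), Equiv.swap 1 (x (2 * t + 3)),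
       Equiv.swap 1 (x (2 * t + 4)), Equiv.swap 0 (x (2 * t + 4))]

lemma key_lemma (x : ℕ → ℕ)
    (hx : ∀ i, 1 ≤ i → 2 ≤ x i)
    (hinj : ∀ i j, 1 ≤ i → 1 ≤ j → x i = x j → i = j) :
    ∀ t : ℕ, 1 ≤ t →
    Equiv.swap 1 (x 1) * ((cseq x t).reverse.prod) * Equiv.swap 0 (x 1) =
      Equiv.swap 0 1 * List.formPerm ((List.range (2 * t)).map (fun i => x (i + 1))) := by
  intro t
  induction t with
  | zero => omega
  | succ m ih =>
    intro _
    match m, ih with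
    | 0, _ =>
      -- base case t = 1
      have h1 : x 1 ≠ x 2 := fun h => by have := hinj 1 2 (by omega) (by omega) h; omega
      have hx1 := hx 1 (by omega)
      have hx2 := hx 2 (by omega)
      show Equiv.swap 1 (x 1) * ([Equiv.swap 1 (x 2), Equiv.swap 0 (x 2)].reverse.prod) *
          Equiv.swap 0 (x 1) = _
      have hr : (List.range (2 * 1)).map (fun i => x (i + 1)) = [x 1, x 2] := by
        simp [List.range_succ]
      rw [hr, List.formPerm_pair]
      simpa using swap_base' (x 1) (x 2) (by omega) (by omega) (by omega) (by omega) h1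
    | (k + 1), ih =>
      -- step case t = k + 2
      have ih := ih (by omega)
      set u := x 1 with hu_def
      set L := x (2 * k + 2) with hL_def
      set A := x (2 * k + 3) with hA_def
      set B := x (2 * k + 4) with hB_def
      set P := (cseq x (k + 1)).reverse.prod with hP_def
      set l : List ℕ := (List.range (2 * (k + 1))).map (fun i => x (i + 1)) with hl_def
      set F := List.formPerm l with hF_def
      -- distinctness facts
      have hne : ∀ i j : ℕ, 1 ≤ i → 1 ≤ j → i ≠ j → x i ≠ x j := by
        intro i j hi hj hij h; exact hij (hinj i j hi hj h)
      have hu0 : u ≠ 0 := by have := hx 1 (by omega); omega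
      have hu1 : u ≠ 1 := by have := hx 1 (by omega); omega
      have hA0 : A ≠ 0 := by have := hx (2*k+3) (by omega); omega
      have hA1 : A ≠ 1 := by have := hx (2*k+3) (by omega); omega
      have hB0 : B ≠ 0 := by have := hx (2*k+4) (by omega); omega
      have hB1 : B ≠ 1 := by have := hx (2*k+4) (by omega); omega
      have huA : u ≠ A := hne 1 (2*k+3) (by omega) (by omega) (by omega)
      have huB : u ≠ B := hne 1 (2*k+4) (by omega) (by omega) (by omega)
      have hAB : A ≠ B := hne (2*k+3) (2*k+4) (by omega) (by omega) (by omega)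
      -- list decompositions
      have hlist : (List.range (2 * (k + 2))).map (fun i => x (i + 1)) = l ++ [A, B] := by
        have h2 : 2 * (k + 2) = (2 * (k + 1) + 1) + 1 := by ring
        rw [h2, List.range_succ, List.range_succ, List.map_append, List.map_append]
        simp only [hl_def, List.map_cons, List.map_nil, List.append_assoc]
        all_goals (congr 2 <;> (first | (congr 1 <;> omega) | (congr 2 <;> omega) | omega | rfl))
      have hl2 : l = ((List.range (2 * k + 1)).map (fun i => x (i + 1))) ++ [L] := by
        have h2 : 2 * (k + 1) = (2 * k + 1) + 1 := by ring
        rw [hl_def, h2, List.range_succ, List.map_append]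
        simp only [List.map_cons, List.map_nil]
        all_goals (congr 2 <;> omega)
      -- F fixes A and B
      have hFA : F A = A := by
        apply List.formPerm_apply_of_notMem
        rw [hl_def]
        simp only [List.mem_map, List.mem_range, not_exists]
        rintro i ⟨hi, hxi⟩
        have := hinj (i + 1) (2 * k + 3) (by omega) (by omega) hxi
        omega
      have hFB : F B = B := by
        apply List.formPerm_apply_of_notMem
        rw [hl_def]
        simp only [List.mem_map, List.mem_range, not_exists]
        rintro i ⟨hi, hxi⟩
        have := hinj (i + 1) (2 * k + 4) (by omega) (by omega) hxi
        omega
      -- F sends the last element L back to the head u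
      have hFL : F L = u := by
        have hl3 : l = u :: ((List.range (2 * k + 1)).map (fun i => x (i + 2))) := by
          have h2 : 2 * (k + 1) = (2 * k + 1) + 1 := by ring
          rw [hl_def, h2, List.range_succ_eq_map, List.map_cons, List.map_map]
          have hcomp : ((fun i => x (i + 1)) ∘ Nat.succ) = (fun i => x (i + 2)) := by
            funext i
            show x (i.succ + 1) = x (i + 2)
            congr 1 <;> omega
          rw [hcomp]
        set rest := (List.range (2 * k + 1)).map (fun i => x (i + 2)) with hrest
        have hgl : (u :: rest).getLast (List.cons_ne_nil _ _) = L := by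
          have h₁ : (u :: rest).getLast? = some L := by
            rw [← hl3, hl2]
            exact List.getLast?_concat
          rwa [List.getLast?_eq_getLast (l := u :: rest) (List.cons_ne_nil _ _),
            Option.some_inj] at h₁
        have h₂ := List.formPerm_apply_getLast u rest
        rw [hgl, ← hl3] at h₂
        exact h₂
      -- formPerm decomposition
      have hF2 : List.formPerm (l ++ [A, B]) = F * Equiv.swap L A * Equiv.swap A B := by
        rw [List.formPerm_append_pair]
        congr 1
        rw [hl2, List.append_assoc]
        show List.formPerm (_ ++ [L, A]) = _
        rw [List.formPerm_append_pair, ← hl2]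
      -- unfold cseq
      have hc : (cseq x (k + 2)).reverse.prod =
          Equiv.swap 0 B * Equiv.swap 1 B * Equiv.swap 1 A * Equiv.swap 0 A * P := by
        show ((cseq x (k+1) ++ [Equiv.swap 0 (x (2*k+3)), Equiv.swap 1 (x (2*k+3)),
          Equiv.swap 1 (x (2*k+4)), Equiv.swap 0 (x (2*k+4))]).reverse).prod = _
        rw [List.reverse_append, List.prod_append]
        simp [mul_assoc, hA_def, hB_def, hP_def]
      -- express P via ih
      have hP : P = Equiv.swap 1 u * (Equiv.swap 0 1 * F) * Equiv.swap 0 u := by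
        rw [← ih]
        simp [mul_assoc, Equiv.swap_mul_self_mul]
      rw [hlist, hF2, hc, hP]
      have key := swap_step' u A B hu0 hu1 hA0 hA1 hB0 hB1 huA huB hAB
      -- rewrite RHS using conjugation
      have hr1 : F * Equiv.swap L A = Equiv.swap u A * F := by
        rw [Equiv.mul_swap_eq_swap_mul, hFL, hFA]
      have hr2 : F * Equiv.swap A B = Equiv.swap A B * F := by
        rw [Equiv.mul_swap_eq_swap_mul, hFA, hFB]
      calc Equiv.swap 1 u *
            (Equiv.swap 0 B * Equiv.swap 1 B * Equiv.swap 1 A * Equiv.swap 0 A *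
              (Equiv.swap 1 u * (Equiv.swap 0 1 * F) * Equiv.swap 0 u)) * Equiv.swap 0 u
          = Equiv.swap 1 u *
              (Equiv.swap 0 B * Equiv.swap 1 B * Equiv.swap 1 A * Equiv.swap 0 A) *
              Equiv.swap 1 u * Equiv.swap 0 1 * F := by
            simp [mul_assoc, Equiv.swap_mul_self_mul]
        _ = Equiv.swap 0 1 * (Equiv.swap u A * Equiv.swap A B) * F := by rw [key]
        _ = Equiv.swap 0 1 * (F * Equiv.swap L A * Equiv.swap A B) := by
            have h3 : F * Equiv.swap L A * Equiv.swap A B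
                = Equiv.swap u A * Equiv.swap A B * F := by
              rw [hr1, mul_assoc, hr2, ← mul_assoc]
            rw [h3]
            simp only [mul_assoc]

theorem stmt_6 (x : ℕ → ℕ)
    (hx : ∀ i, 1 ≤ i → 2 ≤ x i)
    (hinj : ∀ i j, 1 ≤ i → 1 ≤ j → x i = x j → i = j)
    (t : ℕ) (ht : 1 ≤ t) :
    (([Equiv.swap 0 (x 1)] ++ cseq x t ++ [Equiv.swap 1 (x 1)]).reverse).prod =
      Equiv.swap 0 1 * List.formPerm ((List.range (2 * t)).map (fun i => x (i + 1))) := by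
  have h := key_lemma x hx hinj t ht
  rw [← h]
  simp [List.reverse_append, List.prod_append, mul_assoc]
end

section
/- Let n ≥ 2 and let u be an injective transpositional sequence on Fin n such that every vertex of Fin n lies in the support of some term of u and the graph G(u) is connected. Suppose there exist two distinct vertices a ≠ b such that a is adjacent in G(u) to every other vertex of Fin n and b is adjacent in G(u) to every other vertex of Fin n (two central vertices). Then u is permutationally complete. In particular, the injective sequence whose terms are all n(n−1)/2 transpositions of Fin n (the complete graph K_n) is permutationally complete. -/
set_option linter.unusedSectionVars false
set_option maxHeartbeats 1000000

namespace PCaux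
open Equiv List

variable {α : Type*} [DecidableEq α] [Fintype α]

/-- Double-star edge list: center edge plus spokes at `a` and at `b`. -/
def E (a b : α) (w : List α) : List (Equiv.Perm α) :=
  Equiv.swap a b :: (w.map (Equiv.swap a) ++ w.map (Equiv.swap b))

lemma prod_fix (l : List (Equiv.Perm α)) (c : α) (h : ∀ g ∈ l, g c = c) : l.prod c = c := by
  induction l with
  | nil => rfl
  | cons g t ih =>
      simp only [List.prod_cons, Equiv.Perm.mul_apply,
        ih (fun g hg => h g (List.mem_cons_of_mem _ hg))]
      exact h g (List.mem_cons_self)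

lemma E_fix {a b c : α} {w : List α} (hca : c ≠ a) (hcb : c ≠ b) (hcw : c ∉ w) :
    ∀ g ∈ E a b w, g c = c := by
  intro g hg
  rcases List.mem_cons.1 hg with h | h
  · subst h; exact Equiv.swap_apply_of_ne_of_ne hca hcb
  · rcases List.mem_append.1 h with h | h
    · obtain ⟨x, hx, rfl⟩ := List.mem_map.1 h
      exact Equiv.swap_apply_of_ne_of_ne hca (fun hc => hcw (hc ▸ hx))
    · obtain ⟨x, hx, rfl⟩ := List.mem_map.1 h
      exact Equiv.swap_apply_of_ne_of_ne hcb (fun hc => hcw (hc ▸ hx))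

lemma E_symm (a b : α) (w : List α) : (E a b w).Perm (E b a w) := by
  unfold E
  rw [Equiv.swap_comm a b]
  exact List.Perm.cons _ (List.perm_append_comm)

lemma E_perm {c : α} {w : List α} (a b : α) (hc : c ∈ w) :
    (E a b w).Perm (Equiv.swap a c :: Equiv.swap b c :: E a b (w.erase c)) := by
  have hwp : w.Perm (c :: w.erase c) := List.perm_cons_erase hc
  unfold E
  refine List.Perm.trans (List.Perm.cons _ (List.Perm.append (hwp.map _) (hwp.map _))) ?_
  simp only [List.map_cons]
  have h1 : (Equiv.swap a c :: (w.erase c).map (Equiv.swap a) ++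
      Equiv.swap b c :: (w.erase c).map (Equiv.swap b))
      = Equiv.swap a c :: ((w.erase c).map (Equiv.swap a) ++
        Equiv.swap b c :: (w.erase c).map (Equiv.swap b)) := rfl
  rw [h1]
  refine (List.Perm.cons _ (List.Perm.cons _ List.perm_middle)).trans ?_
  exact (List.Perm.swap _ _ _).trans (List.Perm.cons _ (List.Perm.swap _ _ _))

lemma swap_triple {a b u : α} (hab : a ≠ b) (hau : a ≠ u) (hbu : b ≠ u) :
    Equiv.swap a u * Equiv.swap a b * Equiv.swap b u = Equiv.swap a b := by
  ext x
  simp only [Equiv.Perm.mul_apply, Equiv.swap_apply_def]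
  split_ifs <;> simp_all

lemma swap_word3a {a b c : α} (hab : a ≠ b) (hac : a ≠ c) (hbc : b ≠ c) :
    Equiv.swap a c * Equiv.swap b c * Equiv.swap a b = Equiv.swap b c := by
  ext x
  simp only [Equiv.Perm.mul_apply, Equiv.swap_apply_def]
  split_ifs <;> simp_all

lemma swap_word3b {a b u : α} (hab : a ≠ b) (hau : a ≠ u) (hbu : b ≠ u) :
    Equiv.swap a b * Equiv.swap b u * Equiv.swap a u = Equiv.swap b u := by
  ext x
  simp only [Equiv.Perm.mul_apply, Equiv.swap_apply_def]
  split_ifs <;> simp_all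

lemma eq_one_or_swap {a b : α} {σ : Equiv.Perm α} (h : ∀ x, σ x ≠ x → x = a ∨ x = b) :
    σ = 1 ∨ σ = Equiv.swap a b := by
  by_cases ha : σ a = a
  · left
    ext x
    show σ x = x
    by_contra hx
    rcases h x hx with rfl | rfl
    · exact hx ha
    · have hv : σ (σ x) ≠ σ x := fun hh => hx (σ.injective hh)
      rcases h _ hv with h2 | h2
      · have hba : x = a := σ.injective (by rw [h2, ha])
        subst hba
        exact hx ha
      · exact hx h2
  · have hv : σ (σ a) ≠ σ a := fun hh => ha (σ.injective hh)
    have hab2 : σ a = b := (h _ hv).resolve_left ha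
    have hbne : σ b ≠ b := by
      intro hh
      have hab' : a = b := σ.injective (by rw [hab2, hh])
      rw [← hab'] at hab2
      exact ha hab2
    have hv2 : σ (σ b) ≠ σ b := fun hh => hbne (σ.injective hh)
    have hb : σ b = a := (h _ hv2).resolve_right hbne
    right
    ext x
    rcases eq_or_ne x a with rfl | hxa
    · rw [Equiv.swap_apply_left]; exact hab2
    rcases eq_or_ne x b with rfl | hxb
    · rw [Equiv.swap_apply_right]; exact hb
    · rw [Equiv.swap_apply_of_ne_of_ne hxa hxb]
      by_contra hx
      rcases h x hx with rfl | rfl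
      exacts [hxa rfl, hxb rfl]


lemma sign_one_ne_neg_one : (1 : ℤˣ) ≠ -1 := by decide

lemma eq_swap_of_sign {a b c : α} {σ : Equiv.Perm α} (hab : a ≠ b) (hac : a ≠ c) (hbc : b ≠ c)
    (hsgn : Equiv.Perm.sign σ = -1) (hσb : σ b = c)
    (hsupp : ∀ x, σ x ≠ x → x = a ∨ x = b ∨ x = c) : σ = Equiv.swap b c := by
  set ρ := σ * Equiv.swap b c with hρ
  have hρc : ρ c = c := by
    simp only [hρ, Equiv.Perm.mul_apply, Equiv.swap_apply_right, hσb]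
  have hmov : ∀ x, ρ x ≠ x → x = a ∨ x = b := by
    intro x hx
    have hxc : x ≠ c := fun hh => hx (hh ▸ hρc)
    rcases eq_or_ne x b with rfl | hxb
    · exact Or.inr rfl
    · have hρx : ρ x = σ x := by
        simp only [hρ, Equiv.Perm.mul_apply, Equiv.swap_apply_of_ne_of_ne hxb hxc]
      rw [hρx] at hx
      rcases hsupp x hx with h | h | h
      · exact Or.inl h
      · exact Or.inr h
      · exact absurd h hxc
  have hρsgn : Equiv.Perm.sign ρ = 1 := by
    rw [hρ, Equiv.Perm.sign_mul, hsgn, Equiv.Perm.sign_swap hbc]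
    decide
  rcases eq_one_or_swap hmov with h1 | h1
  · have : σ = Equiv.swap b c := by
      have := congrArg (· * Equiv.swap b c) h1
      simpa [hρ, mul_assoc] using this
    exact this
  · exfalso
    rw [h1, Equiv.Perm.sign_swap hab] at hρsgn
    exact sign_one_ne_neg_one hρsgn.symm

/-- The master statement: realize any odd permutation supported on `{a,b} ∪ w`
as a product of a rearrangement of the double star edges, with a cut whose suffix
product sends `u` to `a`. -/
def MS (a b : α) (w : List α) : Prop :=
  ∀ σ : Equiv.Perm α, Equiv.Perm.sign σ = -1 →
    (∀ x : α, σ x ≠ x → x = a ∨ x = b ∨ x ∈ w) →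
    ∀ u : α, (u = b ∨ u ∈ w) →
    ∃ A B : List (Equiv.Perm α), (A ++ B).Perm (E a b w) ∧ (A ++ B).prod = σ ∧ B.prod u = a

lemma keyN {a b c : α} {w : List α} (hab : a ≠ b) (hca : c ≠ a) (hcb : c ≠ b) (hcw : c ∉ w)
    (hM : MS a b w) (τ : Equiv.Perm α) (hsgn : Equiv.Perm.sign τ = 1)
    (hsupp : ∀ x, τ x ≠ x → x = a ∨ x = b ∨ x = c ∨ x ∈ w) (hτc : τ c ≠ c) :
    ∃ A B : List (Equiv.Perm α), (A ++ B).Perm (E a b w) ∧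
      A.prod * Equiv.swap a c * B.prod = τ ∧ (τ a ≠ c → B.prod (τ⁻¹ c) = a) := by
  by_cases hτa : τ a = c
  · set σ' := τ * Equiv.swap a c with hσ'
    have hσ'sgn : Equiv.Perm.sign σ' = -1 := by
      rw [hσ', Equiv.Perm.sign_mul, hsgn, Equiv.Perm.sign_swap hca.symm]; decide
    have hσ'c : σ' c = c := by
      simp only [hσ', Equiv.Perm.mul_apply, Equiv.swap_apply_right, hτa]
    have hσ'supp : ∀ x, σ' x ≠ x → x = a ∨ x = b ∨ x ∈ w := by
      intro x hx
      have hxc : x ≠ c := fun hh => hx (hh ▸ hσ'c)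
      rcases eq_or_ne x a with rfl | hxa
      · exact Or.inl rfl
      · have : σ' x = τ x := by
          simp only [hσ', Equiv.Perm.mul_apply, Equiv.swap_apply_of_ne_of_ne hxa hxc]
        rw [this] at hx
        rcases hsupp x hx with h | h | h | h
        · exact Or.inl h
        · exact Or.inr (Or.inl h)
        · exact absurd h hxc
        · exact Or.inr (Or.inr h)
    obtain ⟨A, B, hperm, hprod, -⟩ := hM σ' hσ'sgn hσ'supp b (Or.inl rfl)
    refine ⟨A ++ B, [], by simpa using hperm, ?_, fun h => absurd hτa h⟩
    rw [List.prod_nil, mul_one, hprod, hσ', mul_assoc, Equiv.swap_mul_self, mul_one]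
  · set u' := τ⁻¹ c with hu'
    have hτu' : τ u' = c := by rw [hu']; exact τ.apply_symm_apply c
    have hu'a : u' ≠ a := fun hh => hτa (hh ▸ hτu')
    have hu'c : u' ≠ c := fun hh => hτc (hh ▸ hτu')
    have hu'mem : u' = b ∨ u' ∈ w := by
      have : τ u' ≠ u' := by rw [hτu']; exact fun hh => hu'c hh.symm
      rcases hsupp u' this with h | h | h | h
      · exact absurd h hu'a
      · exact Or.inl h
      · exact absurd h hu'c
      · exact Or.inr h
    set σ' := τ * Equiv.swap u' c with hσ'
    have hσ'sgn : Equiv.Perm.sign σ' = -1 := by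
      rw [hσ', Equiv.Perm.sign_mul, hsgn, Equiv.Perm.sign_swap hu'c]; decide
    have hσ'c : σ' c = c := by
      simp only [hσ', Equiv.Perm.mul_apply, Equiv.swap_apply_right, hτu']
    have hσ'supp : ∀ x, σ' x ≠ x → x = a ∨ x = b ∨ x ∈ w := by
      intro x hx
      have hxc : x ≠ c := fun hh => hx (hh ▸ hσ'c)
      rcases eq_or_ne x u' with rfl | hxu'
      · rcases hu'mem with h | h
        · exact Or.inr (Or.inl h)
        · exact Or.inr (Or.inr h)
      · have : σ' x = τ x := by
          simp only [hσ', Equiv.Perm.mul_apply, Equiv.swap_apply_of_ne_of_ne hxu' hxc]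
        rw [this] at hx
        rcases hsupp x hx with h | h | h | h
        · exact Or.inl h
        · exact Or.inr (Or.inl h)
        · exact absurd h hxc
        · exact Or.inr (Or.inr h)
    obtain ⟨A, B, hperm, hprod, hcut⟩ := hM σ' hσ'sgn hσ'supp u' hu'mem
    have hqc : B.prod c = c :=
      prod_fix B c (fun g hg => E_fix hca hcb hcw g (hperm.subset (List.mem_append_right A hg)))
    have hq'a : B.prod⁻¹ a = u' := by
      rw [← hcut]; exact (B.prod).symm_apply_apply u'
    have hq'c : B.prod⁻¹ c = c := by
      conv_lhs => rw [← hqc]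
      exact (B.prod).symm_apply_apply c
    refine ⟨A, B, hperm, ?_, fun _ => hcut⟩
    have hp : A.prod = σ' * B.prod⁻¹ := by
      rw [← hprod, List.prod_append, mul_assoc, mul_inv_cancel, mul_one]
    rw [hp]
    have hconj : B.prod⁻¹ * Equiv.swap a c * B.prod = Equiv.swap (B.prod⁻¹ a) (B.prod⁻¹ c) := by
      have := Equiv.swap_apply_apply (B.prod⁻¹) a c
      rw [this]; group
    calc σ' * B.prod⁻¹ * Equiv.swap a c * B.prod
        = σ' * (B.prod⁻¹ * Equiv.swap a c * B.prod) := by group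
      _ = σ' * Equiv.swap (B.prod⁻¹ a) (B.prod⁻¹ c) := by rw [hconj]
      _ = τ := by
          rw [hq'a, hq'c, hσ', mul_assoc, Equiv.swap_mul_self, mul_one]


lemma perm_block (A B : List (Equiv.Perm α)) (t s : Equiv.Perm α) :
    (A ++ [t] ++ (B ++ [s])).Perm (t :: s :: (A ++ B)) := by
  have h1 : A ++ [t] ++ (B ++ [s]) = A ++ t :: (B ++ [s]) := by simp
  rw [h1]
  refine List.perm_middle.trans (List.Perm.cons _ ?_)
  have h2 : A ++ (B ++ [s]) = (A ++ B) ++ [s] := by simp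
  rw [h2]
  exact List.perm_append_comm

lemma keyM0 (a b : α) (w : List α) (hab : a ≠ b) (hw : w.Nodup) (haw : a ∉ w) (hbw : b ∉ w)
    (hrec : ∀ (a' b' : α) (w' : List α), w'.length < w.length → a' ≠ b' → w'.Nodup →
      a' ∉ w' → b' ∉ w' → MS a' b' w')
    (σ : Equiv.Perm α) (hsgn : Equiv.Perm.sign σ = -1)
    (hsupp : ∀ x, σ x ≠ x → x = a ∨ x = b ∨ x ∈ w) :
    ∃ v : List (Equiv.Perm α), v.Perm (E a b w) ∧ v.prod = σ := by
  rcases w with _ | ⟨c0, w0⟩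
  · -- w = []
    have hsupp2 : ∀ x, σ x ≠ x → x = a ∨ x = b := by
      intro x hx
      rcases hsupp x hx with h | h | h
      · exact Or.inl h
      · exact Or.inr h
      · exact absurd h (List.not_mem_nil)
    rcases eq_one_or_swap hsupp2 with rfl | rfl
    · rw [Equiv.Perm.sign_one] at hsgn
      exact absurd hsgn sign_one_ne_neg_one
    · exact ⟨[Equiv.swap a b], by simp [E], by simp⟩
  · set w : List α := c0 :: w0 with hwdef
    have hc0w : c0 ∈ w := by rw [hwdef]; exact List.mem_cons_self
    have hwlen : 0 < w.length := by rw [hwdef]; simp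
    clear_value w
    by_cases hc : ∃ c ∈ w, σ b ≠ c
    · obtain ⟨c, hcw, hcne⟩ := hc
      have hca : c ≠ a := fun hh => haw (hh ▸ hcw)
      have hcb : c ≠ b := fun hh => hbw (hh ▸ hcw)
      have hlt : (w.erase c).length < w.length := by
        rw [List.length_erase_of_mem hcw]; omega
      have hM : MS a b (w.erase c) :=
        hrec a b (w.erase c) hlt hab (hw.erase c)
          (fun hh => haw (List.mem_of_mem_erase hh))
          (fun hh => hbw (List.mem_of_mem_erase hh))
      set τ := σ * Equiv.swap b c with hτ
      have hτsgn : Equiv.Perm.sign τ = 1 := by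
        rw [hτ, Equiv.Perm.sign_mul, hsgn, Equiv.Perm.sign_swap hcb.symm]; decide
      have hτc : τ c ≠ c := by
        have h1 : τ c = σ b := by simp [hτ]
        rw [h1]; exact hcne
      have hτsupp : ∀ x, τ x ≠ x → x = a ∨ x = b ∨ x = c ∨ x ∈ w.erase c := by
        intro x hx
        rcases eq_or_ne x b with rfl | hxb
        · exact Or.inr (Or.inl rfl)
        rcases eq_or_ne x c with rfl | hxc
        · exact Or.inr (Or.inr (Or.inl rfl))
        have h1 : τ x = σ x := by
          simp [hτ, Equiv.swap_apply_of_ne_of_ne hxb hxc]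
        rw [h1] at hx
        rcases hsupp x hx with h | h | h
        · exact Or.inl h
        · exact Or.inr (Or.inl h)
        · exact Or.inr (Or.inr (Or.inr ((List.mem_erase_of_ne hxc).2 h)))
      obtain ⟨A, B, hperm, heq, -⟩ :=
        keyN hab hca hcb (List.Nodup.not_mem_erase hw : c ∉ w.erase c)
          hM τ hτsgn hτsupp hτc
      refine ⟨A ++ [Equiv.swap a c] ++ (B ++ [Equiv.swap b c]), ?_, ?_⟩
      · refine (perm_block A B _ _).trans ?_
        exact (List.Perm.cons _ (List.Perm.cons _ hperm)).trans (E_perm a b hcw).symm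
      · simp only [List.prod_append, List.prod_cons, List.prod_nil, mul_one]
        calc A.prod * Equiv.swap a c * (B.prod * Equiv.swap b c)
            = (A.prod * Equiv.swap a c * B.prod) * Equiv.swap b c := by group
          _ = τ * Equiv.swap b c := by rw [heq]
          _ = σ := by rw [hτ, mul_assoc, Equiv.swap_mul_self, mul_one]
    · push_neg at hc
      have hσb : σ b = c0 := hc c0 hc0w
      have hc0a : c0 ≠ a := fun hh => haw (hh ▸ hc0w)
      have hc0b : c0 ≠ b := fun hh => hbw (hh ▸ hc0w)
      have hσa : σ a ≠ c0 := by
        intro hh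
        exact hab (σ.injective (hh.trans hσb.symm))
      have hlt : (w.erase c0).length < w.length := by
        rw [List.length_erase_of_mem hc0w]; omega
      have hM : MS b a (w.erase c0) :=
        hrec b a (w.erase c0) hlt hab.symm (hw.erase c0)
          (fun hh => hbw (List.mem_of_mem_erase hh))
          (fun hh => haw (List.mem_of_mem_erase hh))
      set τ := σ * Equiv.swap a c0 with hτ
      have hτsgn : Equiv.Perm.sign τ = 1 := by
        rw [hτ, Equiv.Perm.sign_mul, hsgn, Equiv.Perm.sign_swap hc0a.symm]; decide
      have hτc : τ c0 ≠ c0 := by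
        have h1 : τ c0 = σ a := by simp [hτ]
        rw [h1]; exact hσa
      have hτsupp : ∀ x, τ x ≠ x → x = b ∨ x = a ∨ x = c0 ∨ x ∈ w.erase c0 := by
        intro x hx
        rcases eq_or_ne x a with rfl | hxa
        · exact Or.inr (Or.inl rfl)
        rcases eq_or_ne x c0 with rfl | hxc
        · exact Or.inr (Or.inr (Or.inl rfl))
        have h1 : τ x = σ x := by
          simp [hτ, Equiv.swap_apply_of_ne_of_ne hxa hxc]
        rw [h1] at hx
        rcases hsupp x hx with h | h | h
        · exact Or.inr (Or.inl h)
        · exact Or.inl h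
        · exact Or.inr (Or.inr (Or.inr ((List.mem_erase_of_ne hxc).2 h)))
      obtain ⟨A, B, hperm, heq, -⟩ :=
        keyN hab.symm hc0b hc0a (List.Nodup.not_mem_erase hw : c0 ∉ w.erase c0)
          hM τ hτsgn hτsupp hτc
      refine ⟨A ++ [Equiv.swap b c0] ++ (B ++ [Equiv.swap a c0]), ?_, ?_⟩
      · refine (perm_block A B _ _).trans ?_
        refine List.Perm.trans ?_ (E_perm a b hc0w).symm
        refine (List.Perm.swap _ _ _).trans ?_
        exact List.Perm.cons _ (List.Perm.cons _ (hperm.trans (E_symm b a (w.erase c0))))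
      · simp only [List.prod_append, List.prod_cons, List.prod_nil, mul_one]
        calc A.prod * Equiv.swap b c0 * (B.prod * Equiv.swap a c0)
            = (A.prod * Equiv.swap b c0 * B.prod) * Equiv.swap a c0 := by group
          _ = τ * Equiv.swap a c0 := by rw [heq]
          _ = σ := by rw [hτ, mul_assoc, Equiv.swap_mul_self, mul_one]


theorem keyM : ∀ (n : ℕ) (w : List α), w.length ≤ n → ∀ a b : α, a ≠ b → w.Nodup →
    a ∉ w → b ∉ w → MS a b w := by
  intro n
  induction n with
  | zero =>
    intro w hlen a b hab hw haw hbw σ hsgn hsupp u hu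
    have hwnil : w = [] := List.length_eq_zero_iff.1 (Nat.le_zero.1 hlen)
    subst hwnil
    have hsupp2 : ∀ x, σ x ≠ x → x = a ∨ x = b := by
      intro x hx
      rcases hsupp x hx with h | h | h
      · exact Or.inl h
      · exact Or.inr h
      · exact absurd h (List.not_mem_nil)
    rcases eq_one_or_swap hsupp2 with rfl | rfl
    · rw [Equiv.Perm.sign_one] at hsgn
      exact absurd hsgn sign_one_ne_neg_one
    · rcases hu with rfl | hu
      · exact ⟨[], [Equiv.swap a u], by simp [E], by simp, by simp⟩
      · exact absurd hu (List.not_mem_nil)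
  | succ n ih =>
    intro w hlen a b hab hw haw hbw σ hsgn hsupp u hu
    have hrec : ∀ (a' b' : α) (w' : List α), w'.length < w.length → a' ≠ b' → w'.Nodup →
        a' ∉ w' → b' ∉ w' → MS a' b' w' := by
      intro a' b' w' hlt
      exact ih w' (by omega) a' b'
    -- Case 1 : σ u = a
    by_cases h1 : σ u = a
    · obtain ⟨v, hperm, hprod⟩ := keyM0 a b w hab hw haw hbw hrec σ hsgn hsupp
      exact ⟨[], v, by simpa using hperm, by simpa using hprod, by rw [hprod]; exact h1⟩
    have hua : u ≠ a := by
      rintro rfl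
      rcases hu with rfl | hu
      · exact hab rfl
      · exact haw hu
    have hwne : w ≠ [] := by
      rintro rfl
      have hsupp2 : ∀ x, σ x ≠ x → x = a ∨ x = b := by
        intro x hx
        rcases hsupp x hx with h | h | h
        · exact Or.inl h
        · exact Or.inr h
        · exact absurd h (List.not_mem_nil)
      rcases eq_one_or_swap hsupp2 with rfl | rfl
      · rw [Equiv.Perm.sign_one] at hsgn
        exact absurd hsgn sign_one_ne_neg_one
      · rcases hu with rfl | hu
        · exact h1 (Equiv.swap_apply_right a u)
        · exact List.not_mem_nil hu
    rcases hu with rfl | huw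
    · -- u plays the role of b ; σ u ≠ a
      by_cases hc : ∃ c ∈ w, c ≠ σ u
      · obtain ⟨c, hcw, hcσ⟩ := hc
        have hca : c ≠ a := fun hh => haw (hh ▸ hcw)
        have hcb : c ≠ u := fun hh => hbw (hh ▸ hcw)
        have hlt : (w.erase c).length < w.length := by
          rw [List.length_erase_of_mem hcw]
          have : 0 < w.length := List.length_pos_iff.2 (List.ne_nil_of_mem hcw)
          omega
        have hM : MS a u (w.erase c) :=
          hrec a u (w.erase c) hlt hab (hw.erase c)
            (fun hh => haw (List.mem_of_mem_erase hh))
            (fun hh => hbw (List.mem_of_mem_erase hh))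
        set τ := σ * Equiv.swap u c with hτ
        have hτsgn : Equiv.Perm.sign τ = 1 := by
          rw [hτ, Equiv.Perm.sign_mul, hsgn, Equiv.Perm.sign_swap hcb.symm]; decide
        have hτc : τ c ≠ c := by
          have hh : τ c = σ u := by simp [hτ]
          rw [hh]; exact fun h2 => hcσ h2.symm
        have hτsupp : ∀ x, τ x ≠ x → x = a ∨ x = u ∨ x = c ∨ x ∈ w.erase c := by
          intro x hx
          rcases eq_or_ne x u with rfl | hxb
          · exact Or.inr (Or.inl rfl)
          rcases eq_or_ne x c with rfl | hxc
          · exact Or.inr (Or.inr (Or.inl rfl))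
          have hh : τ x = σ x := by
            simp [hτ, Equiv.swap_apply_of_ne_of_ne hxb hxc]
          rw [hh] at hx
          rcases hsupp x hx with h | h | h
          · exact Or.inl h
          · exact Or.inr (Or.inl h)
          · exact Or.inr (Or.inr (Or.inr ((List.mem_erase_of_ne hxc).2 h)))
        obtain ⟨A, B, hperm, heq, -⟩ :=
          keyN hab hca hcb (List.Nodup.not_mem_erase hw : c ∉ w.erase c)
            hM τ hτsgn hτsupp hτc
        have hBfix : B.prod c = c :=
          prod_fix B c (fun g hg => E_fix hca hcb (List.Nodup.not_mem_erase hw) g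
            (hperm.subset (List.mem_append_right A hg)))
        refine ⟨A, Equiv.swap a c :: (B ++ [Equiv.swap u c]), ?_, ?_, ?_⟩
        · have hsh : A ++ Equiv.swap a c :: (B ++ [Equiv.swap u c])
              = A ++ [Equiv.swap a c] ++ (B ++ [Equiv.swap u c]) := by simp
          rw [hsh]
          refine (perm_block A B _ _).trans ?_
          exact (List.Perm.cons _ (List.Perm.cons _ hperm)).trans (E_perm a u hcw).symm
        · simp only [List.prod_append, List.prod_cons, List.prod_nil, mul_one]
          calc A.prod * (Equiv.swap a c * (B.prod * Equiv.swap u c))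
              = (A.prod * Equiv.swap a c * B.prod) * Equiv.swap u c := by group
            _ = τ * Equiv.swap u c := by rw [heq]
            _ = σ := by rw [hτ, mul_assoc, Equiv.swap_mul_self, mul_one]
        · simp only [List.prod_cons, List.prod_append, List.prod_nil, mul_one,
            Equiv.Perm.mul_apply, Equiv.swap_apply_left, hBfix]
          exact Equiv.swap_apply_right a c
      · -- w = [c0] where c0 = σ u ; σ = swap u c0
        push_neg at hc
        obtain ⟨c0, w0, rfl⟩ : ∃ c0 w0, w = c0 :: w0 := by
          rcases w with _ | ⟨c0, w0⟩
          · exact absurd rfl hwne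
          · exact ⟨c0, w0, rfl⟩
        have hc0 : c0 = σ u := hc c0 (List.mem_cons_self)
        have hw0 : w0 = [] := by
          rcases w0 with _ | ⟨x, w1⟩
          · rfl
          · exfalso
            have hx : x = σ u := hc x (List.mem_cons_of_mem _ (List.mem_cons_self))
            have : c0 = x := by rw [hc0, hx]
            rw [List.nodup_cons] at hw
            exact hw.1 (this ▸ (List.mem_cons_self (a := x) (l := w1)))
        subst hw0
        have hc0a : c0 ≠ a := fun hh => haw (hh ▸ List.mem_cons_self)
        have hc0u : c0 ≠ u := fun hh => hbw (hh ▸ List.mem_cons_self)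
        have hσeq : σ = Equiv.swap u c0 := by
          refine eq_swap_of_sign hab hc0a.symm hc0u.symm hsgn hc0.symm ?_
          intro x hx
          rcases hsupp x hx with h | h | h
          · exact Or.inl h
          · exact Or.inr (Or.inl h)
          · exact Or.inr (Or.inr (by simpa using h))
        refine ⟨[Equiv.swap a c0, Equiv.swap u c0], [Equiv.swap a u], ?_, ?_, ?_⟩
        · have hE : E a u [c0] = [Equiv.swap a u, Equiv.swap a c0, Equiv.swap u c0] := by
            simp [E]
          rw [hE]
          exact (List.Perm.cons _ (List.Perm.swap _ _ _)).trans (List.Perm.swap _ _ _)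
        · simp only [List.prod_append, List.prod_cons, List.prod_nil, mul_one]
          rw [hσeq]
          exact swap_word3a hab hc0a.symm hc0u.symm
        · simp [Equiv.swap_apply_right]
    · -- u ∈ w
      have hub : u ≠ b := fun hh => hbw (hh ▸ huw)
      have hlu : (w.erase u).length < w.length := by
        rw [List.length_erase_of_mem huw]
        have : 0 < w.length := List.length_pos_iff.2 hwne
        omega
      by_cases h2 : σ u = u
      · -- Case 3 : u is fixed
        obtain ⟨v, hperm, hprod⟩ :=
          keyM0 a b (w.erase u) hab (hw.erase u)
            (fun hh => haw (List.mem_of_mem_erase hh))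
            (fun hh => hbw (List.mem_of_mem_erase hh))
            (fun a' b' w' hlt => hrec a' b' w' (hlt.trans hlu))
            σ hsgn
            (by
              intro x hx
              have hxu : x ≠ u := fun hh => hx (hh ▸ h2)
              rcases hsupp x hx with h | h | h
              · exact Or.inl h
              · exact Or.inr (Or.inl h)
              · exact Or.inr (Or.inr ((List.mem_erase_of_ne hxu).2 h)))
        have habv : Equiv.swap a b ∈ v := hperm.mem_iff.2 (List.mem_cons_self)
        obtain ⟨X, Y, rfl⟩ := List.append_of_mem habv
        have hYfix : Y.prod u = u :=
          prod_fix Y u (fun g hg => E_fix (w := w.erase u) hua hub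
            (List.Nodup.not_mem_erase hw) g (hperm.subset (by simp [hg])))
        refine ⟨X ++ [Equiv.swap a u], Equiv.swap a b :: Equiv.swap b u :: Y, ?_, ?_, ?_⟩
        · have hsh : X ++ [Equiv.swap a u] ++ (Equiv.swap a b :: Equiv.swap b u :: Y)
              = X ++ [Equiv.swap a u] ++ ([Equiv.swap a b, Equiv.swap b u] ++ Y) := by simp
          rw [hsh]
          refine List.Perm.trans ?_ (E_perm a b huw).symm
          -- target : ~ swap a u :: swap b u :: E a b (w.erase u)
          refine List.Perm.trans ?_
            (List.Perm.cons _ (List.Perm.cons _ hperm))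
          -- show ~ swap a u :: swap b u :: (X ++ swap a b :: Y)
          have e1 : X ++ [Equiv.swap a u] ++ ([Equiv.swap a b, Equiv.swap b u] ++ Y)
              = X ++ Equiv.swap a u :: (Equiv.swap a b :: Equiv.swap b u :: Y) := by simp
          rw [e1]
          refine List.perm_middle.trans ?_
          refine List.Perm.cons _ ?_
          -- X ++ swap a b :: swap b u :: Y ~ swap b u :: (X ++ swap a b :: Y)
          have e2 : X ++ Equiv.swap a b :: Equiv.swap b u :: Y
              = (X ++ [Equiv.swap a b]) ++ Equiv.swap b u :: Y := by simp
          rw [e2]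
          refine List.perm_middle.trans ?_
          refine List.Perm.cons _ ?_
          have e3 : (X ++ [Equiv.swap a b]) ++ Y = X ++ Equiv.swap a b :: Y := by simp
          rw [e3]
        · have e4 : Equiv.swap a u * (Equiv.swap a b * (Equiv.swap b u * Y.prod))
              = Equiv.swap a b * Y.prod := by
            rw [← mul_assoc, ← mul_assoc, swap_triple hab hua.symm hub.symm]
          have hXY : X.prod * (Equiv.swap a b * Y.prod) = σ := by
            rw [← hprod]
            simp [List.prod_append, List.prod_cons, mul_assoc]
          simp only [List.prod_append, List.prod_cons, List.prod_nil, mul_one, mul_assoc]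
          rw [e4]
          simpa [mul_assoc] using hXY
        · simp only [List.prod_cons]
          rw [Equiv.Perm.mul_apply, Equiv.Perm.mul_apply, hYfix,
            Equiv.swap_apply_right b u]
          exact Equiv.swap_apply_right a b
      · by_cases h3 : σ u = b
        · -- Case 4 : σ u = b
          by_cases hc : ∃ c ∈ w, c ≠ u
          · obtain ⟨c, hcw, hcu⟩ := hc
            have hca : c ≠ a := fun hh => haw (hh ▸ hcw)
            have hcb : c ≠ b := fun hh => hbw (hh ▸ hcw)
            have hlt : (w.erase c).length < w.length := by
              rw [List.length_erase_of_mem hcw]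
              have : 0 < w.length := List.length_pos_iff.2 hwne
              omega
            have hM : MS a b (w.erase c) :=
              hrec a b (w.erase c) hlt hab (hw.erase c)
                (fun hh => haw (List.mem_of_mem_erase hh))
                (fun hh => hbw (List.mem_of_mem_erase hh))
            set τ := Equiv.swap b c * σ with hτ
            have hτsgn : Equiv.Perm.sign τ = 1 := by
              rw [hτ, Equiv.Perm.sign_mul, hsgn, Equiv.Perm.sign_swap hcb.symm]; decide
            have hσcb : σ c ≠ b := by
              intro hh
              exact hcu (σ.injective (hh.trans h3.symm))
            have hτc : τ c ≠ c := by
              intro hh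
              rw [hτ, Equiv.Perm.mul_apply] at hh
              have h5 := congrArg (Equiv.swap b c) hh
              rw [Equiv.swap_apply_self, Equiv.swap_apply_right] at h5
              exact hσcb h5
            have hτa : τ a ≠ c := by
              intro hh
              rw [hτ, Equiv.Perm.mul_apply] at hh
              have h4 := congrArg (Equiv.swap b c) hh
              rw [Equiv.swap_apply_self, Equiv.swap_apply_right] at h4
              exact hua (σ.injective (h3.trans h4.symm))
            have hτsupp : ∀ x, τ x ≠ x → x = a ∨ x = b ∨ x = c ∨ x ∈ w.erase c := by
              intro x hx
              rcases eq_or_ne x b with rfl | hxb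
              · exact Or.inr (Or.inl rfl)
              rcases eq_or_ne x c with rfl | hxc
              · exact Or.inr (Or.inr (Or.inl rfl))
              by_cases hσx : σ x = x
              · exfalso
                apply hx
                rw [hτ, Equiv.Perm.mul_apply, hσx,
                  Equiv.swap_apply_of_ne_of_ne hxb hxc]
              rcases hsupp x hσx with h | h | h
              · exact Or.inl h
              · exact Or.inr (Or.inl h)
              · exact Or.inr (Or.inr (Or.inr ((List.mem_erase_of_ne hxc).2 h)))
            obtain ⟨A, B, hperm, heq, hside⟩ :=
              keyN hab hca hcb (List.Nodup.not_mem_erase hw : c ∉ w.erase c)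
                hM τ hτsgn hτsupp hτc
            have hτinv : τ⁻¹ c = u := by
              have : τ u = c := by
                rw [hτ, Equiv.Perm.mul_apply, h3, Equiv.swap_apply_left]
              rw [← this, Equiv.Perm.inv_def, Equiv.symm_apply_apply]
            have hcut : B.prod u = a := by
              have := hside hτa
              rwa [hτinv] at this
            refine ⟨Equiv.swap b c :: (A ++ [Equiv.swap a c]), B, ?_, ?_, hcut⟩
            · have hsh : Equiv.swap b c :: (A ++ [Equiv.swap a c]) ++ B
                  = Equiv.swap b c :: (A ++ Equiv.swap a c :: B) := by simp
              rw [hsh]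
              refine List.Perm.trans (List.Perm.cons _ List.perm_middle) ?_
              refine List.Perm.trans (List.Perm.swap _ _ _) ?_
              exact (List.Perm.cons _ (List.Perm.cons _ hperm)).trans (E_perm a b hcw).symm
            · simp only [List.prod_append, List.prod_cons, List.prod_nil, mul_one]
              calc Equiv.swap b c * (A.prod * Equiv.swap a c) * B.prod
                  = Equiv.swap b c * (A.prod * Equiv.swap a c * B.prod) := by group
                _ = Equiv.swap b c * τ := by rw [heq]
                _ = σ := by rw [hτ, ← mul_assoc, Equiv.swap_mul_self, one_mul]
          · -- w = [u] ; σ = swap b u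
            push_neg at hc
            obtain ⟨c0, w0, rfl⟩ : ∃ c0 w0, w = c0 :: w0 := by
              rcases w with _ | ⟨c0, w0⟩
              · exact absurd rfl hwne
              · exact ⟨c0, w0, rfl⟩
            have hc0 : c0 = u := hc c0 (List.mem_cons_self)
            subst hc0
            have hw0 : w0 = [] := by
              rcases w0 with _ | ⟨x, w1⟩
              · rfl
              · exfalso
                have hx : x = c0 := hc x (List.mem_cons_of_mem _ (List.mem_cons_self))
                rw [List.nodup_cons] at hw
                exact hw.1 (hx ▸ (List.mem_cons_self (a := x) (l := w1)))
            subst hw0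
            have hσeq : σ = Equiv.swap c0 b := by
              refine eq_swap_of_sign hua.symm hab hub hsgn h3 ?_
              · intro x hx
                rcases hsupp x hx with h | h | h
                · exact Or.inl h
                · exact Or.inr (Or.inr h)
                · exact Or.inr (Or.inl (by simpa using h))
            refine ⟨[Equiv.swap a b, Equiv.swap b c0], [Equiv.swap a c0], ?_, ?_, ?_⟩
            · have hE : E a b [c0] = [Equiv.swap a b, Equiv.swap a c0, Equiv.swap b c0] := by
                simp [E]
              rw [hE]
              exact List.Perm.cons _ (List.Perm.swap _ _ _)
            · simp only [List.prod_append, List.prod_cons, List.prod_nil, mul_one]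
              rw [hσeq, Equiv.swap_comm c0 b]
              exact swap_word3b hab hua.symm hub.symm
            · simp [Equiv.swap_apply_right]
        · -- Case 5 : c := σ u ∈ w, c ∉ {a,b,u}
          set c := σ u with hcdef
          have hcu : c ≠ u := fun hh => h2 (hcdef ▸ hh)
          have hσc : σ c ≠ c := by
            intro hh
            exact hcu (σ.injective (hh.trans hcdef))
          have hcw : c ∈ w := by
            rcases hsupp c hσc with h | h | h
            · exact absurd h (hcdef ▸ h1)
            · exact absurd h (hcdef ▸ h3)
            · exact h
          have hca : c ≠ a := fun hh => haw (hh ▸ hcw)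
          have hcb : c ≠ b := fun hh => hbw (hh ▸ hcw)
          have hlt : (w.erase c).length < w.length := by
            rw [List.length_erase_of_mem hcw]
            have : 0 < w.length := List.length_pos_iff.2 hwne
            omega
          have hM : MS a b (w.erase c) :=
            hrec a b (w.erase c) hlt hab (hw.erase c)
              (fun hh => haw (List.mem_of_mem_erase hh))
              (fun hh => hbw (List.mem_of_mem_erase hh))
          set τ := σ * Equiv.swap b c with hτ
          have hτsgn : Equiv.Perm.sign τ = 1 := by
            rw [hτ, Equiv.Perm.sign_mul, hsgn, Equiv.Perm.sign_swap hcb.symm]; decide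
          have hσbc : σ b ≠ c := by
            intro hh
            exact hub (σ.injective (hcdef ▸ hh : σ b = σ u)).symm
          have hτc : τ c ≠ c := by
            have hh : τ c = σ b := by simp [hτ]
            rw [hh]; exact hσbc
          have hτa : τ a ≠ c := by
            have hh : τ a = σ a := by
              simp [hτ, Equiv.swap_apply_of_ne_of_ne hab hca.symm]
            rw [hh]
            intro h4
            exact hua (σ.injective (h4.trans hcdef)).symm
          have hτsupp : ∀ x, τ x ≠ x → x = a ∨ x = b ∨ x = c ∨ x ∈ w.erase c := by
            intro x hx
            rcases eq_or_ne x b with rfl | hxb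
            · exact Or.inr (Or.inl rfl)
            rcases eq_or_ne x c with rfl | hxc
            · exact Or.inr (Or.inr (Or.inl rfl))
            have hh : τ x = σ x := by
              simp [hτ, Equiv.swap_apply_of_ne_of_ne hxb hxc]
            rw [hh] at hx
            rcases hsupp x hx with h | h | h
            · exact Or.inl h
            · exact Or.inr (Or.inl h)
            · exact Or.inr (Or.inr (Or.inr ((List.mem_erase_of_ne hxc).2 h)))
          obtain ⟨A, B, hperm, heq, hside⟩ :=
            keyN hab hca hcb (List.Nodup.not_mem_erase hw : c ∉ w.erase c)
              hM τ hτsgn hτsupp hτc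
          have hτinv : τ⁻¹ c = u := by
            have : τ u = c := by
              rw [hτ, Equiv.Perm.mul_apply,
                Equiv.swap_apply_of_ne_of_ne hub hcu.symm, ← hcdef]
            rw [← this, Equiv.Perm.inv_def, Equiv.symm_apply_apply]
          have hcut : B.prod u = a := by
            have := hside hτa
            rwa [hτinv] at this
          refine ⟨A ++ [Equiv.swap a c], B ++ [Equiv.swap b c], ?_, ?_, ?_⟩
          · refine (perm_block A B _ _).trans ?_
            exact (List.Perm.cons _ (List.Perm.cons _ hperm)).trans (E_perm a b hcw).symm
          · simp only [List.prod_append, List.prod_cons, List.prod_nil, mul_one]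
            calc A.prod * Equiv.swap a c * (B.prod * Equiv.swap b c)
                = (A.prod * Equiv.swap a c * B.prod) * Equiv.swap b c := by group
              _ = τ * Equiv.swap b c := by rw [heq]
              _ = σ := by rw [hτ, mul_assoc, Equiv.swap_mul_self, mul_one]
          · simp only [List.prod_append, List.prod_cons, List.prod_nil, mul_one,
              Equiv.Perm.mul_apply]
            rw [Equiv.swap_apply_of_ne_of_ne hub hcu.symm]
            exact hcut


lemma realize (a b : α) (w : List α) (hab : a ≠ b) (hw : w.Nodup) (haw : a ∉ w) (hbw : b ∉ w)
    (σ : Equiv.Perm α) (hsgn : Equiv.Perm.sign σ = -1)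
    (hsupp : ∀ x, σ x ≠ x → x = a ∨ x = b ∨ x ∈ w) :
    ∃ v : List (Equiv.Perm α), v.Perm (E a b w) ∧ v.prod = σ :=
  keyM0 a b w hab hw haw hbw
    (fun a' b' w' _ h1 h2 h3 h4 => keyM w'.length w' le_rfl a' b' h1 h2 h3 h4) σ hsgn hsupp

lemma sign_tlist (l : List (Equiv.Perm α))
    (h : ∀ g ∈ l, ∃ x y : α, x ≠ y ∧ g = Equiv.swap x y) :
    Equiv.Perm.sign l.prod = (-1) ^ l.length := by
  induction l with
  | nil => simp
  | cons g t ih =>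
      rw [List.prod_cons, map_mul, ih (fun g hg => h g (List.mem_cons_of_mem _ hg))]
      obtain ⟨x, y, hxy, rfl⟩ := h g (List.mem_cons_self)
      rw [Equiv.Perm.sign_swap hxy, List.length_cons, pow_succ, mul_comm]

lemma sign_prod_perm {r s : List (Equiv.Perm α)} (h : r.Perm s) :
    Equiv.Perm.sign r.prod = Equiv.Perm.sign s.prod := by
  rw [map_list_prod (Equiv.Perm.sign : Equiv.Perm α →* ℤˣ),
    map_list_prod (Equiv.Perm.sign : Equiv.Perm α →* ℤˣ)]
  exact List.Perm.prod_eq (h.map _)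

lemma E_nodup (a b : α) (w : List α) (hab : a ≠ b) (hw : w.Nodup) (haw : a ∉ w) (hbw : b ∉ w) :
    (E a b w).Nodup := by
  have hinj : ∀ c : α, ∀ x ∈ w, ∀ y ∈ w, Equiv.swap c x = Equiv.swap c y → x = y := by
    intro c x _ y _ hxy
    have h2 := congrArg (fun (e : Equiv.Perm α) => e c) hxy
    simpa [Equiv.swap_apply_left] using h2
  have hna : (w.map (Equiv.swap a)).Nodup := List.Nodup.map_on (hinj a) hw
  have hnb : (w.map (Equiv.swap b)).Nodup := List.Nodup.map_on (hinj b) hw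
  have hdisj : (w.map (Equiv.swap a)).Disjoint (w.map (Equiv.swap b)) := by
    intro g hg hg'
    obtain ⟨x, hx, rfl⟩ := List.mem_map.1 hg
    obtain ⟨y, hy, hxy⟩ := List.mem_map.1 hg'
    have hxa : x ≠ a := fun hh => haw (hh ▸ hx)
    have hya : y ≠ a := fun hh => haw (hh ▸ hy)
    have h2 := congrArg (fun (e : Equiv.Perm α) => e a) hxy
    simp only [Equiv.swap_apply_left] at h2
    rw [show (Equiv.swap b y) a = a from Equiv.swap_apply_of_ne_of_ne hab hya.symm] at h2
    exact hxa h2.symm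
  have hhead : Equiv.swap a b ∉ w.map (Equiv.swap a) ++ w.map (Equiv.swap b) := by
    intro hmem
    rcases List.mem_append.1 hmem with h | h
    · obtain ⟨x, hx, hxy⟩ := List.mem_map.1 h
      have hxb : x ≠ b := fun hh => hbw (hh ▸ hx)
      have h2 := congrArg (fun (e : Equiv.Perm α) => e b) hxy
      rw [show (Equiv.swap a x) b = b from Equiv.swap_apply_of_ne_of_ne hab.symm hxb.symm,
        Equiv.swap_apply_right] at h2
      exact hab h2.symm
    · obtain ⟨y, hy, hxy⟩ := List.mem_map.1 h
      have hya : y ≠ a := fun hh => haw (hh ▸ hy)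
      have h2 := congrArg (fun (e : Equiv.Perm α) => e a) hxy
      rw [show (Equiv.swap b y) a = a from Equiv.swap_apply_of_ne_of_ne hab hya.symm,
        Equiv.swap_apply_left] at h2
      exact hab h2
  exact List.nodup_cons.2 ⟨hhead, List.Nodup.append hna hnb hdisj⟩

end PCaux


theorem stmt_8 :
    (∀ n : ℕ, 2 ≤ n → ∀ u : List (Equiv.Perm (Fin n)),
      IsTranspositional u → u.Nodup →
      (∀ v : Fin n, ∃ g ∈ u, v ∈ g.support) →
      (TranspGraph u).Connected →
      (∃ a b : Fin n, a ≠ b ∧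
        (∀ v : Fin n, v ≠ a → (TranspGraph u).Adj a v) ∧
        (∀ v : Fin n, v ≠ b → (TranspGraph u).Adj b v)) →
      PermComplete u) ∧
    (∀ n : ℕ, 2 ≤ n → ∀ u : List (Equiv.Perm (Fin n)),
      u.Nodup →
      (∀ g : Equiv.Perm (Fin n), g ∈ u ↔ ∃ x y : Fin n, x ≠ y ∧ g = Equiv.swap x y) →
      PermComplete u) := by
  have part1 : ∀ n : ℕ, 2 ≤ n → ∀ u : List (Equiv.Perm (Fin n)),
      IsTranspositional u → u.Nodup →
      (∀ v : Fin n, ∃ g ∈ u, v ∈ g.support) →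
      (TranspGraph u).Connected →
      (∃ a b : Fin n, a ≠ b ∧
        (∀ v : Fin n, v ≠ a → (TranspGraph u).Adj a v) ∧
        (∀ v : Fin n, v ≠ b → (TranspGraph u).Adj b v)) →
      PermComplete u := by
    intro n hn u htr hnd hcov hconn hcent
    obtain ⟨a, b, hab, hA, hB⟩ := hcent
    classical
    set w := ((Finset.univ : Finset (Fin n)).filter (fun x => x ≠ a ∧ x ≠ b)).toList with hwdef
    have hw : w.Nodup := Finset.nodup_toList _
    have hmemw : ∀ x : Fin n, x ∈ w ↔ (x ≠ a ∧ x ≠ b) := by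
      intro x
      rw [hwdef, Finset.mem_toList, Finset.mem_filter]
      simp
    have haw : a ∉ w := fun h => ((hmemw a).1 h).1 rfl
    have hbw : b ∉ w := fun h => ((hmemw b).1 h).2 rfl
    set EE := PCaux.E a b w with hEE
    have hEsub : ∀ g ∈ EE, g ∈ u := by
      intro g hg
      rcases List.mem_cons.1 hg with rfl | h
      · have h3 : a ≠ b ∧ Equiv.swap a b ∈ u := hA b (Ne.symm hab)
        exact h3.2
      · rcases List.mem_append.1 h with h | h
        · obtain ⟨x, hx, rfl⟩ := List.mem_map.1 h
          have h3 : a ≠ x ∧ Equiv.swap a x ∈ u := hA x ((hmemw x).1 hx).1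
          exact h3.2
        · obtain ⟨x, hx, rfl⟩ := List.mem_map.1 h
          have h3 : b ≠ x ∧ Equiv.swap b x ∈ u := hB x ((hmemw x).1 hx).2
          exact h3.2
    have hEnd : EE.Nodup := PCaux.E_nodup a b w hab hw haw hbw
    have hsub : List.Subperm EE u := List.Nodup.subperm hEnd hEsub
    obtain ⟨l, hl, hsubl⟩ := hsub
    obtain ⟨R, hR⟩ := hsubl.exists_perm_append
    have huER : u.Perm (EE ++ R) := hR.trans (hl.append_right R)
    have hEtr : ∀ g ∈ EE, ∃ x y : Fin n, x ≠ y ∧ g = Equiv.swap x y := by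
      intro g hg
      rcases List.mem_cons.1 hg with rfl | h
      · exact ⟨a, b, hab, rfl⟩
      · rcases List.mem_append.1 h with h | h
        · obtain ⟨x, hx, rfl⟩ := List.mem_map.1 h
          exact ⟨a, x, Ne.symm ((hmemw x).1 hx).1, rfl⟩
        · obtain ⟨x, hx, rfl⟩ := List.mem_map.1 h
          exact ⟨b, x, Ne.symm ((hmemw x).1 hx).2, rfl⟩
    have hlenE : EE.length = 2 * w.length + 1 := by
      simp [hEE, PCaux.E]
      ring
    have hsgnE : Equiv.Perm.sign EE.prod = -1 := by
      rw [PCaux.sign_tlist _ hEtr, hlenE]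
      exact Odd.neg_one_pow ⟨w.length, rfl⟩
    have hPS : ProdSet u = {g : Equiv.Perm (Fin n) | Equiv.Perm.sign g = Equiv.Perm.sign u.prod} := by
      ext g
      constructor
      · rintro ⟨r, hru, rfl⟩
        exact PCaux.sign_prod_perm hru
      · intro hg
        have hg' : Equiv.Perm.sign g = Equiv.Perm.sign u.prod := hg
        have hsgn_h : Equiv.Perm.sign (g * R.prod⁻¹) = -1 := by
          have h1 : Equiv.Perm.sign u.prod
              = Equiv.Perm.sign EE.prod * Equiv.Perm.sign R.prod := by
            rw [PCaux.sign_prod_perm huER, List.prod_append, map_mul]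
          rw [map_mul, map_inv, hg', h1, hsgnE, mul_inv_cancel_right]
        obtain ⟨v, hv, hvp⟩ := PCaux.realize a b w hab hw haw hbw _ hsgn_h
          (fun x _ => by
            by_cases hxa : x = a
            · exact Or.inl hxa
            by_cases hxb : x = b
            · exact Or.inr (Or.inl hxb)
            exact Or.inr (Or.inr ((hmemw x).2 ⟨hxa, hxb⟩)))
        refine ⟨v ++ R, (hv.append_right R).trans huER.symm, ?_⟩
        rw [List.prod_append, hvp, inv_mul_cancel_right]
    rcases Int.units_eq_one_or (Equiv.Perm.sign u.prod) with hs | hs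
    · left; rw [hPS, hs]
    · right; rw [hPS, hs]
  refine ⟨part1, ?_⟩
  intro n hn u hnd hiff
  have h0 : 0 < n := by omega
  have h1 : 1 < n := by omega
  set a : Fin n := ⟨0, h0⟩ with ha
  set b : Fin n := ⟨1, h1⟩ with hb
  have hab : a ≠ b := by
    rw [ha, hb]
    intro h
    have := congrArg Fin.val h
    simp at this
  refine part1 n hn u (fun g hg => (hiff g).1 hg) hnd ?_ ?_ ⟨a, b, hab, ?_, ?_⟩
  · -- coverage
    intro v
    by_cases hv : v = a
    · refine ⟨Equiv.swap a b, (hiff _).2 ⟨a, b, hab, rfl⟩, ?_⟩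
      rw [hv]
      exact Equiv.Perm.mem_support.2 (by rw [Equiv.swap_apply_left]; exact Ne.symm hab)
    · have hav : a ≠ v := fun h => hv h.symm
      refine ⟨Equiv.swap a v, (hiff _).2 ⟨a, v, hav, rfl⟩, ?_⟩
      exact Equiv.Perm.mem_support.2 (by rw [Equiv.swap_apply_right]; exact hav)
  · -- connectivity
    have hne : Nonempty (Fin n) := ⟨a⟩
    refine ⟨fun x y => ?_⟩
    by_cases hxy : x = y
    · subst hxy
      exact SimpleGraph.Reachable.refl x
    · exact SimpleGraph.Adj.reachable ⟨hxy, (hiff _).2 ⟨x, y, hxy, rfl⟩⟩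
  · intro v hv
    exact ⟨fun h => hv h.symm, (hiff _).2 ⟨a, v, fun h => hv h.symm, rfl⟩⟩
  · intro v hv
    exact ⟨fun h => hv h.symm, (hiff _).2 ⟨b, v, fun h => hv h.symm, rfl⟩⟩
end

section
/- Let n ≥ 2 and let u be a transpositional sequence on Fin n (terms may repeat) such that: the graph G(u) is a tree on the whole vertex set Fin n (connected and acyclic, with every vertex on some edge); every transposition that occurs in u occurs an odd number of times; and no vertex lies in the supports of two distinct transpositions each occurring at least twice in u. Then every element of Prod(u) is an n-cycle, i.e., a single cycle whose support is all of Fin n. -/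
open Equiv Equiv.Perm

section PermLemmas
variable {α : Type*} [Fintype α] [DecidableEq α]

omit [Fintype α] [DecidableEq α] in
private lemma sc_one (g : Equiv.Perm α) (x : α) : g.SameCycle x (g x) :=
  ⟨1, by simp⟩

lemma swap_mul_sameCycle_cases (g : Equiv.Perm α) (a b : α) {x y : α}
    (h : (Equiv.swap a b * g).SameCycle x y) :
    g.SameCycle x y ∨ (g.SameCycle x a ∧ g.SameCycle b y) ∨
      (g.SameCycle x b ∧ g.SameCycle a y) := by
  obtain ⟨k, -, hk⟩ := h.exists_pow_eq'
  rw [← hk]; clear hk h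
  induction k with
  | zero =>
    left
    simp only [pow_zero, Equiv.Perm.coe_one, id_eq]
    exact SameCycle.refl g x
  | succ k ih =>
    set f := Equiv.swap a b * g with hf
    set z := (f ^ k) x with hz
    have hstep : (f ^ (k + 1)) x = Equiv.swap a b (g z) := by
      rw [pow_succ', Equiv.Perm.mul_apply, hf, Equiv.Perm.mul_apply]
    rw [hstep]
    by_cases h1 : g z = a
    · have hza : g.SameCycle z a := ⟨1, by simpa using h1⟩
      rw [h1, Equiv.swap_apply_left]
      rcases ih with h' | ⟨hxa, hbz⟩ | ⟨hxb, haz⟩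
      · exact Or.inr (Or.inl ⟨h'.trans hza, SameCycle.refl _ _⟩)
      · exact Or.inl (hxa.trans ((hbz.trans hza).symm))
      · exact Or.inl hxb
    · by_cases h2 : g z = b
      · have hzb : g.SameCycle z b := ⟨1, by simpa using h2⟩
        rw [h2, Equiv.swap_apply_right]
        rcases ih with h' | ⟨hxa, hbz⟩ | ⟨hxb, haz⟩
        · exact Or.inr (Or.inr ⟨h'.trans hzb, SameCycle.refl _ _⟩)
        · exact Or.inl hxa
        · exact Or.inl (hxb.trans ((haz.trans hzb).symm))
      · rw [Equiv.swap_apply_of_ne_of_ne h1 h2]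
        have hzz : g.SameCycle z (g z) := sc_one g z
        rcases ih with h' | ⟨hxa, hbz⟩ | ⟨hxb, haz⟩
        · exact Or.inl (h'.trans hzz)
        · exact Or.inr (Or.inl ⟨hxa, hbz.trans hzz⟩)
        · exact Or.inr (Or.inr ⟨hxb, haz.trans hzz⟩)

lemma sameCycle_swap_mul_self (g : Equiv.Perm α) {a b : α} (hnc : ¬ g.SameCycle a b) :
    (Equiv.swap a b * g).SameCycle a b := by
  set f := Equiv.swap a b * g with hf
  have hex : ∃ k, 0 < k ∧ (g ^ k) b = b :=
    ⟨orderOf g, orderOf_pos g, by rw [pow_orderOf_eq_one]; rfl⟩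
  set k₀ := Nat.find hex with hk₀def
  obtain ⟨hk₀pos, hk₀eq⟩ := Nat.find_spec hex
  have claim : ∀ j, j ≤ k₀ - 1 → (f ^ j) b = (g ^ j) b := by
    intro j
    induction j with
    | zero => simp
    | succ j ihj =>
      intro hle
      have hj : j ≤ k₀ - 1 := le_trans (Nat.le_succ j) hle
      have hne_b : (g ^ (j + 1)) b ≠ b := by
        intro hb
        exact Nat.find_min hex (by omega) ⟨Nat.succ_pos j, hb⟩
      have hne_a : (g ^ (j + 1)) b ≠ a := by
        intro ha
        exact hnc (SameCycle.symm ⟨(j + 1 : ℕ), by rw [zpow_natCast]; exact ha⟩)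
      have : (f ^ (j + 1)) b = Equiv.swap a b ((g ^ (j + 1)) b) := by
        rw [pow_succ', Equiv.Perm.mul_apply, ihj hj, hf, Equiv.Perm.mul_apply,
          ← Equiv.Perm.mul_apply g, ← pow_succ']
      rw [this, Equiv.swap_apply_of_ne_of_ne hne_a hne_b]
  have h1 : (f ^ (k₀ - 1)) b = (g ^ (k₀ - 1)) b := claim _ le_rfl
  have h2 : (f ^ k₀) b = a := by
    have hk : k₀ - 1 + 1 = k₀ := Nat.succ_pred_eq_of_pos hk₀pos
    have : (f ^ k₀) b = f ((f ^ (k₀ - 1)) b) := by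
      conv_lhs => rw [← hk, pow_succ', Equiv.Perm.mul_apply]
    rw [this, h1, hf, Equiv.Perm.mul_apply, ← Equiv.Perm.mul_apply g, ← pow_succ', hk,
      hk₀eq, Equiv.swap_apply_right]
  exact (show f.SameCycle b a from ⟨(k₀ : ℕ), by rw [zpow_natCast]; exact h2⟩).symm

lemma sameCycle_swap_mul_of (g : Equiv.Perm α) {a b : α} (hnc : ¬ g.SameCycle a b)
    {x y : α} (h : g.SameCycle x y) : (Equiv.swap a b * g).SameCycle x y := by
  set f := Equiv.swap a b * g with hf
  have hg : g = Equiv.swap a b * f := by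
    rw [hf, ← mul_assoc, Equiv.swap_mul_self, one_mul]
  have hab : f.SameCycle a b := sameCycle_swap_mul_self g hnc
  have h' : (Equiv.swap a b * f).SameCycle x y := hg ▸ h
  rcases swap_mul_sameCycle_cases f a b h' with h'' | ⟨hxa, hby⟩ | ⟨hxb, hay⟩
  · exact h''
  · exact (hxa.trans hab).trans hby
  · exact (hxb.trans hab.symm).trans hay

lemma swap_mul_fixed_iff (g : Equiv.Perm α) {a b : α} (hab : a ≠ b)
    (hnc : ¬ g.SameCycle a b) (x : α) :
    (Equiv.swap a b * g) x = x ↔ g x = x ∧ x ≠ a ∧ x ≠ b := by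
  have hga : g a ≠ b := fun h => hnc ⟨1, by simpa using h⟩
  have hgb : g b ≠ a := fun h => hnc (SameCycle.symm ⟨1, by simpa using h⟩)
  rw [Equiv.Perm.mul_apply]
  constructor
  · intro h
    have h' : g x = Equiv.swap a b x := by
      have := congrArg (Equiv.swap a b) h
      rwa [Equiv.swap_apply_self] at this
    by_cases hxa : x = a
    · rw [hxa, Equiv.swap_apply_left] at h'
      exact absurd h' hga
    · by_cases hxb : x = b
      · rw [hxb, Equiv.swap_apply_right] at h'
        exact absurd h' hgb
      · rw [Equiv.swap_apply_of_ne_of_ne hxa hxb] at h'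
        exact ⟨h', hxa, hxb⟩
  · rintro ⟨h1, h2, h3⟩
    rw [h1, Equiv.swap_apply_of_ne_of_ne h2 h3]

end PermLemmas


section GraphLemmas
variable {V : Type*}

lemma reachable_transfer {G H : SimpleGraph V}
    (h : ∀ x y, G.Adj x y → H.Reachable x y) :
    ∀ {x y : V}, G.Reachable x y → H.Reachable x y := by
  intro x y hr
  obtain ⟨w⟩ := hr
  induction w with
  | nil => exact SimpleGraph.Reachable.refl _
  | cons ha _ ih => exact (h _ _ ha).trans ih

lemma connected_of_le_card [Fintype V] [DecidableEq V] :
    ∀ (k : ℕ) (G : SimpleGraph V) [DecidableRel G.Adj],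
      G.edgeFinset.card ≤ k → G.Connected →
      G.edgeFinset.card + 1 ≤ Fintype.card V → G.IsTree := by
  intro k
  induction k with
  | zero =>
    intro G hd hle hconn hcard
    refine ⟨hconn, ?_⟩
    rw [SimpleGraph.isAcyclic_iff_forall_edge_isBridge]
    intro e he
    exfalso
    have : e ∈ G.edgeFinset := by rwa [SimpleGraph.mem_edgeFinset]
    have := Finset.card_pos.mpr ⟨e, this⟩
    omega
  | succ k ih =>
    intro G hd hle hconn hcard
    by_cases hac : G.IsAcyclic
    · exact ⟨hconn, hac⟩
    exfalso
    rw [SimpleGraph.isAcyclic_iff_forall_edge_isBridge] at hac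
    push_neg at hac
    obtain ⟨e, he, hnb⟩ := hac
    induction e using Sym2.ind with
    | _ u v =>
    have hadj : G.Adj u v := he
    have hr : (G \ SimpleGraph.fromEdgeSet {s(u, v)}).Reachable u v := by
      rw [SimpleGraph.isBridge_iff] at hnb
      push_neg at hnb
      exact hnb
    set G' := G \ SimpleGraph.fromEdgeSet {s(u, v)} with hG'
    have hdec : DecidableRel G'.Adj := Classical.decRel _
    letI := hdec
    have hle' : G' ≤ G := sdiff_le
    have hadj' : ∀ x y, G'.Adj x y → G.Adj x y := fun x y hxy => hle' hxy
    -- G' is connected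
    have hconn' : G'.Connected := by
      haveI : Nonempty V := hconn.nonempty
      refine SimpleGraph.Connected.mk (fun x y => ?_)
      refine reachable_transfer (fun x y hxy => ?_) (hconn.preconnected x y)
      by_cases hexy : s(x, y) = s(u, v)
      · rw [Sym2.eq_iff] at hexy
        rcases hexy with ⟨rfl, rfl⟩ | ⟨rfl, rfl⟩
        · exact hr
        · exact hr.symm
      · exact SimpleGraph.Adj.reachable (by
          rw [hG', SimpleGraph.sdiff_adj]
          refine ⟨hxy, ?_⟩
          rw [SimpleGraph.fromEdgeSet_adj]
          rintro ⟨hmem, -⟩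
          exact hexy (Set.mem_singleton_iff.mp hmem))
    -- edge finset of G' is erase
    have hEF : ∀ (i : Fintype G'.edgeSet),
        (@SimpleGraph.edgeFinset _ G' i) = G.edgeFinset.erase s(u, v) := by
      intro i
      ext e'
      simp only [SimpleGraph.mem_edgeFinset, Finset.mem_erase, hG',
        SimpleGraph.edgeSet_sdiff, SimpleGraph.edgeSet_fromEdgeSet, Set.mem_diff,
        Set.mem_setOf_eq, Set.mem_singleton_iff]
      constructor
      · rintro ⟨h1, h2⟩
        refine ⟨fun hc => h2 ⟨hc, ?_⟩, h1⟩
        intro hdiag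
        exact SimpleGraph.not_isDiag_of_mem_edgeSet G (hc ▸ h1) hdiag
      · rintro ⟨h1, h2⟩
        exact ⟨h2, fun hc => h1 hc.1⟩
    have hemem : s(u, v) ∈ G.edgeFinset := by rwa [SimpleGraph.mem_edgeFinset]

    have hpos : 1 ≤ G.edgeFinset.card := Finset.card_pos.mpr ⟨_, hemem⟩
    have htree' : G'.IsTree := by
      refine @ih G' hdec ?_ hconn' ?_
      · simp only [hEF, Finset.card_erase_of_mem hemem]; omega
      · simp only [hEF, Finset.card_erase_of_mem hemem]; omega
    have h9 := htree'.card_edgeFinset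
    simp only [hEF, Finset.card_erase_of_mem hemem] at h9
    omega

end GraphLemmas

lemma isAcyclic_mono {V : Type*} {G H : SimpleGraph V} (hle : G ≤ H) (h : H.IsAcyclic) :
    G.IsAcyclic := by
  intro v c hc
  exact h (c.mapLe hle) (hc.mapLe hle)

lemma two_le_count_split {α : Type*} [DecidableEq α] :
    ∀ (l : List α) (t : α), 2 ≤ l.count t → ∃ p s q, l = p ++ t :: (s ++ t :: q) := by
  intro l
  induction l with
  | nil => intro t h; simp at h
  | cons b l ih =>
    intro t h
    by_cases hb : b = t
    · subst hb
      rw [List.count_cons_self] at h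
      have hmem : b ∈ l := by
        rw [← List.count_pos_iff]
        omega
      obtain ⟨s, q, rfl⟩ := List.append_of_mem hmem
      exact ⟨[], s, q, rfl⟩
    · rw [List.count_cons_of_ne hb] at h
      obtain ⟨p, s, q, rfl⟩ := ih t h
      exact ⟨b :: p, s, q, rfl⟩

section BaseCase
variable {n : ℕ}

lemma transpGraph_adj (l : List (Equiv.Perm (Fin n))) (x y : Fin n) :
    (TranspGraph l).Adj x y ↔ x ≠ y ∧ Equiv.swap x y ∈ l := Iff.rfl

instance transpGraphDecidable (l : List (Equiv.Perm (Fin n))) :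
    DecidableRel (TranspGraph l).Adj := fun x y =>
  decidable_of_iff (x ≠ y ∧ Equiv.swap x y ∈ l) (transpGraph_adj l x y).symm

lemma transpGraph_eq_of_mem_iff {l l' : List (Equiv.Perm (Fin n))}
    (h : ∀ g, g ∈ l ↔ g ∈ l') : TranspGraph l = TranspGraph l' := by
  ext x y
  rw [transpGraph_adj, transpGraph_adj, h]

lemma swap_eq_swap_cases {a b x y : Fin n} (hxy : x ≠ y)
    (h : Equiv.swap x y = Equiv.swap a b) : (x = a ∧ y = b) ∨ (x = b ∧ y = a) := by
  have hx : Equiv.swap a b x = y := by rw [← h, Equiv.swap_apply_left]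
  by_cases hxa : x = a
  · subst hxa
    rw [Equiv.swap_apply_left] at hx
    exact Or.inl ⟨rfl, hx.symm⟩
  · by_cases hxb : x = b
    · subst hxb
      rw [Equiv.swap_apply_right] at hx
      exact Or.inr ⟨rfl, hx.symm⟩
    · rw [Equiv.swap_apply_of_ne_of_ne hxa hxb] at hx
      exact absurd hx hxy

lemma base_case :
    ∀ l : List (Equiv.Perm (Fin n)), IsTranspositional l →
      (∀ g ∈ l, l.count g = 1) → (TranspGraph l).IsAcyclic →
      (∀ x y, (l.prod).SameCycle x y ↔ (TranspGraph l).Reachable x y) ∧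
      (∀ x, l.prod x = x ↔ ∀ y, ¬ (TranspGraph l).Adj x y) := by
  intro l
  induction l with
  | nil =>
    intro _ _ _
    constructor
    · intro x y
      rw [List.prod_nil, Equiv.Perm.sameCycle_one]
      constructor
      · rintro rfl; exact SimpleGraph.Reachable.refl _
      · intro hr
        obtain ⟨w⟩ := hr
        cases w with
        | nil => rfl
        | cons ha _ => exact absurd ha.2 List.not_mem_nil
    · intro x
      simp only [List.prod_nil, Equiv.Perm.one_apply, true_iff]
      intro y hy
      exact absurd hy.2 List.not_mem_nil
  | cons g₀ l' ih =>
    intro htr hc1 hac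
    have hg₀mem : g₀ ∈ g₀ :: l' := List.mem_cons_self
    obtain ⟨a, b, hab, hg₀⟩ := htr g₀ hg₀mem
    subst hg₀
    have hnotmem : Equiv.swap a b ∉ l' := by
      have := hc1 _ hg₀mem
      rw [List.count_cons_self] at this
      have : l'.count (Equiv.swap a b) = 0 := by omega
      exact fun hmem => by have h2 := List.count_pos_iff.mpr hmem; omega
    have htr' : IsTranspositional l' := fun g hg => htr g (List.mem_cons_of_mem _ hg)
    have hc1' : ∀ g ∈ l', l'.count g = 1 := by
      intro g hg
      have hne : g ≠ Equiv.swap a b := fun e => hnotmem (e ▸ hg)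
      have := hc1 g (List.mem_cons_of_mem _ hg)
      rwa [List.count_cons_of_ne hne.symm] at this
    have hle : TranspGraph l' ≤ TranspGraph (Equiv.swap a b :: l') := by
      intro x y hxy
      exact ⟨hxy.1, List.mem_cons_of_mem _ hxy.2⟩
    have hac' : (TranspGraph l').IsAcyclic := isAcyclic_mono hle hac
    obtain ⟨ihSC, ihFix⟩ := ih htr' hc1' hac'
    have hadjab : (TranspGraph (Equiv.swap a b :: l')).Adj a b := ⟨hab, hg₀mem⟩
    have hnr : ¬ (TranspGraph l').Reachable a b := by
      intro hr
      have hbridge := (SimpleGraph.isAcyclic_iff_forall_edge_isBridge.mp hac)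
        ((SimpleGraph.mem_edgeSet _).mpr hadjab)
      rw [SimpleGraph.isBridge_iff] at hbridge
      refine hbridge (show ((TranspGraph (Equiv.swap a b :: l')) \ SimpleGraph.fromEdgeSet {s(a, b)}).Reachable a b from ?_)
      refine hr.mono ?_
      intro x y hxy
      rw [SimpleGraph.sdiff_adj]
      refine ⟨hle hxy, ?_⟩
      rw [SimpleGraph.fromEdgeSet_adj]
      rintro ⟨hmem, -⟩
      rw [Set.mem_singleton_iff] at hmem
      rw [Sym2.eq_iff] at hmem
      apply hnotmem
      rcases hmem with ⟨rfl, rfl⟩ | ⟨rfl, rfl⟩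
      · exact hxy.2
      · rw [Equiv.swap_comm]; exact hxy.2
    set g : Equiv.Perm (Fin n) := l'.prod with hgdef
    have hnc : ¬ g.SameCycle a b := fun h => hnr ((ihSC a b).mp h)
    have hprodc : (Equiv.swap a b :: l').prod = Equiv.swap a b * g := List.prod_cons
    have hfab : ((Equiv.swap a b :: l').prod).SameCycle a b := by
      rw [hprodc]; exact sameCycle_swap_mul_self g hnc
    constructor
    · intro x y
      constructor
      · intro h
        rw [hprodc] at h
        have hreach' : ∀ {u v : Fin n}, g.SameCycle u v →
            (TranspGraph (Equiv.swap a b :: l')).Reachable u v := by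
          intro u v huv
          exact ((ihSC u v).mp huv).mono hle
        rcases swap_mul_sameCycle_cases g a b h with h' | ⟨hxa, hby⟩ | ⟨hxb, hay⟩
        · exact hreach' h'
        · exact ((hreach' hxa).trans hadjab.reachable).trans (hreach' hby)
        · exact ((hreach' hxb).trans hadjab.symm.reachable).trans (hreach' hay)
      · intro hr
        obtain ⟨w⟩ := hr
        induction w with
        | nil => exact Equiv.Perm.SameCycle.refl _ _
        | @cons x z y ha p ih2 =>
          refine Equiv.Perm.SameCycle.trans ?_ ih2
          rcases List.mem_cons.mp ha.2 with heq | hmem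
          · rcases swap_eq_swap_cases ha.1 heq with ⟨rfl, rfl⟩ | ⟨rfl, rfl⟩
            · exact hfab
            · exact hfab.symm
          · have : g.SameCycle x z := (ihSC x z).mpr (SimpleGraph.Adj.reachable ⟨ha.1, hmem⟩)
            rw [hprodc]
            exact sameCycle_swap_mul_of g hnc this
    · intro x
      rw [hprodc, swap_mul_fixed_iff g hab hnc x]
      constructor
      · rintro ⟨h1, h2, h3⟩ y hAdj
        rcases List.mem_cons.mp hAdj.2 with heq | hmem
        · rcases swap_eq_swap_cases hAdj.1 heq with ⟨rfl, rfl⟩ | ⟨rfl, rfl⟩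
          · exact h2 rfl
          · exact h3 rfl
        · exact (ihFix x).mp h1 y ⟨hAdj.1, hmem⟩
      · intro hno
        have h2 : x ≠ a := by
          rintro rfl
          exact hno b hadjab
        have h3 : x ≠ b := by
          rintro rfl
          exact hno a hadjab.symm
        refine ⟨?_, h2, h3⟩
        rw [ihFix x]
        intro y hy
        exact hno y (hle hy)

end BaseCase

section MainPart
variable {n : ℕ}

lemma conj_prod (σ : Equiv.Perm (Fin n)) (hσ : σ * σ = 1) :
    ∀ l : List (Equiv.Perm (Fin n)), (l.map fun g => σ * g * σ).prod = σ * l.prod * σ := by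
  intro l
  induction l with
  | nil => simp [← hσ]
  | cons g l ihl =>
    rw [List.map_cons, List.prod_cons, List.prod_cons, ihl]
    calc (σ * g * σ) * (σ * l.prod * σ) = σ * g * (σ * σ) * l.prod * σ := by
          simp [mul_assoc]
      _ = σ * (g * l.prod) * σ := by rw [hσ]; simp [mul_assoc]

lemma no_triangle {l : List (Equiv.Perm (Fin n))} (hac : (TranspGraph l).IsAcyclic)
    {x x' y : Fin n} (h1 : (TranspGraph l).Adj x y) (h2 : (TranspGraph l).Adj x' y)
    (h3 : (TranspGraph l).Adj x x') : False := by
  have hbridge := (SimpleGraph.isAcyclic_iff_forall_edge_isBridge.mp hac)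
    ((SimpleGraph.mem_edgeSet _).mpr h3)
  rw [SimpleGraph.isBridge_iff] at hbridge
  refine hbridge (show ((TranspGraph l) \ SimpleGraph.fromEdgeSet {s(x, x')}).Reachable x x' from ?_)
  have hA : ((TranspGraph l) \ SimpleGraph.fromEdgeSet {s(x, x')}).Adj x y := by
    rw [SimpleGraph.sdiff_adj]
    refine ⟨h1, ?_⟩
    rw [SimpleGraph.fromEdgeSet_adj]
    rintro ⟨hmem, -⟩
    rw [Set.mem_singleton_iff, Sym2.eq_iff] at hmem
    rcases hmem with ⟨h4, h5⟩ | ⟨h4, h5⟩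
    · exact h2.ne h5.symm
    · exact h3.ne h4
  have hB : ((TranspGraph l) \ SimpleGraph.fromEdgeSet {s(x, x')}).Adj y x' := by
    rw [SimpleGraph.sdiff_adj]
    refine ⟨h2.symm, ?_⟩
    rw [SimpleGraph.fromEdgeSet_adj]
    rintro ⟨hmem, -⟩
    rw [Set.mem_singleton_iff, Sym2.eq_iff] at hmem
    rcases hmem with ⟨h4, h5⟩ | ⟨h4, h5⟩
    · exact h1.ne h4.symm
    · exact h2.ne h4.symm
  exact hA.reachable.trans hB.reachable

lemma main_lemma (hn : 2 ≤ n) :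
    ∀ (N : ℕ) (u : List (Equiv.Perm (Fin n))), u.length = N →
      IsTranspositional u → (TranspGraph u).IsTree →
      (∀ g ∈ u, Odd (u.count g)) →
      (∀ v : Fin n, ∀ g ∈ u, ∀ g' ∈ u, g ≠ g' → 2 ≤ u.count g → 2 ≤ u.count g' →
        ¬ (v ∈ g.support ∧ v ∈ g'.support)) →
      u.prod.IsCycle ∧ u.prod.support = Finset.univ := by
  intro N
  induction N using Nat.strong_induction_on with
  | _ N IH =>
  intro u hlen htr htree hodd hnov
  subst hlen
  by_cases hrep : ∀ g ∈ u, u.count g ≤ 1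
  · -- all multiplicities 1: classical tree case
    have hc1 : ∀ g ∈ u, u.count g = 1 := fun g hg =>
      le_antisymm (hrep g hg) (List.count_pos_iff.mpr hg)
    obtain ⟨hSC, hFix⟩ := base_case u htr hc1 htree.2
    have hconn := htree.1
    have hnefin : (1 : ℕ) < Fintype.card (Fin n) := by simp; omega
    have hne : ∀ x : Fin n, ∃ y, (TranspGraph u).Adj x y := by
      intro x
      obtain ⟨z, hz⟩ := Fintype.exists_ne_of_one_lt_card hnefin x
      obtain ⟨w⟩ := hconn.preconnected x z
      cases w with
      | nil => exact absurd rfl hz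
      | cons ha _ => exact ⟨_, ha⟩
    have hsupp : u.prod.support = Finset.univ := by
      ext x
      simp only [Equiv.Perm.mem_support, Finset.mem_univ, iff_true]
      intro hfix
      obtain ⟨y, hy⟩ := hne x
      exact (hFix x).mp hfix y hy
    refine ⟨?_, hsupp⟩
    have hx0 : ∃ x : Fin n, True := ⟨⟨0, by omega⟩, trivial⟩
    obtain ⟨x0, -⟩ := hx0
    refine ⟨x0, ?_, ?_⟩
    · intro hfix
      obtain ⟨y, hy⟩ := hne x0
      exact (hFix x0).mp hfix y hy
    · intro y _
      exact (hSC x0 y).mpr (hconn.preconnected x0 y)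
  · -- there is a repeated transposition
    push_neg at hrep
    obtain ⟨t, htmem, hcnt⟩ := hrep
    have hcnt2 : 2 ≤ u.count t := hcnt
    obtain ⟨a, b, hab, hgt⟩ := htr t htmem
    have hoddt := hodd t htmem
    have hcnt3 : 3 ≤ u.count t := by
      rcases hoddt with ⟨k, hk⟩; omega
    obtain ⟨p, s, q, hu⟩ := two_le_count_split u t hcnt2
    set σ : Equiv.Perm (Fin n) := Equiv.swap a b with hσdef
    have hσσ : σ * σ = 1 := Equiv.swap_mul_self a b
    have htσ : t = σ := hgt
    set c : Equiv.Perm (Fin n) → Equiv.Perm (Fin n) := fun g => σ * g * σ with hcdef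
    have hswap_conj : ∀ x y : Fin n, c (Equiv.swap x y) = Equiv.swap (σ x) (σ y) := by
      intro x y
      rw [Equiv.swap_apply_apply, hcdef]
      simp [hσdef, Equiv.swap_inv]
    have hcinv : ∀ g, c (c g) = g := by
      intro g
      simp only [hcdef]
      calc σ * (σ * g * σ) * σ = (σ * σ) * g * (σ * σ) := by simp [mul_assoc]
        _ = g := by rw [hσσ]; simp
    have hcinj : Function.Injective c := Function.LeftInverse.injective hcinv
    have hct : c t = t := by
      rw [htσ, hcdef]
      simp only []
      calc σ * σ * σ = 1 * σ := by rw [hσσ]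
        _ = σ := one_mul σ
    set r₂ : List (Equiv.Perm (Fin n)) := p ++ (s.map c ++ q) with hr₂def
    -- products agree
    have hmapprod : (List.map c s).prod = σ * s.prod * σ := by
      rw [hcdef]
      exact conj_prod σ hσσ s
    have hprod : u.prod = r₂.prod := by
      rw [hu, hr₂def]
      simp only [List.prod_append, List.prod_cons, hmapprod, htσ]
      group
    -- counting
    have hcount_r₂ : ∀ h, r₂.count h = p.count h + s.count (c h) + q.count h := by
      intro h
      rw [hr₂def, List.count_append, List.count_append]
      have : (s.map c).count h = s.count (c h) := by
        conv_lhs => rw [← hcinv h]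
        rw [List.count_map_of_injective s c hcinj (c h)]
      omega
    have hcount_u_t : u.count t = p.count t + s.count t + q.count t + 2 := by
      rw [hu]
      simp only [List.count_append, List.count_cons_self]
      omega
    have hcount_u_ne : ∀ h, h ≠ t → u.count h = p.count h + s.count h + q.count h := by
      intro h hht
      rw [hu]
      simp only [List.count_append, List.count_cons_of_ne (Ne.symm hht)]
      omega
    have hmem_u_of_pq : ∀ h, h ∈ p ∨ h ∈ s ∨ h ∈ q → h ∈ u := by
      intro h hh
      rw [hu]
      rcases hh with h1 | h1 | h1 <;> simp [h1]
    have htrans₂ : IsTranspositional r₂ := by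
      intro g hg
      rw [hr₂def] at hg
      rcases List.mem_append.mp hg with h1 | h2
      · exact htr g (hmem_u_of_pq g (Or.inl h1))
      · rcases List.mem_append.mp h2 with h1 | h1
        · obtain ⟨g', hg', rfl⟩ := List.mem_map.mp h1
          obtain ⟨x, y, hxy, rfl⟩ := htr g' (hmem_u_of_pq g' (Or.inr (Or.inl hg')))
          exact ⟨σ x, σ y, fun e => hxy (σ.injective e), hswap_conj x y⟩
        · exact htr g (hmem_u_of_pq g (Or.inr (Or.inr h1)))
    -- moved-point analysis
    have hmoved : ∀ x : Fin n, σ x ≠ x → x = a ∨ x = b := by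
      intro x hx
      by_contra hcon
      push_neg at hcon
      exact hx (Equiv.swap_apply_of_ne_of_ne hcon.1 hcon.2)
    have hswap_moved : ∀ x : Fin n, σ x ≠ x → Equiv.swap x (σ x) = σ := by
      intro x hx
      rcases hmoved x hx with rfl | rfl
      · rw [hσdef, Equiv.swap_apply_left]
      · rw [hσdef, Equiv.swap_apply_right, Equiv.swap_comm]
    have hch_ne_iff : ∀ x y : Fin n, x ≠ y → c (Equiv.swap x y) ≠ Equiv.swap x y →
        (σ x ≠ x ∨ σ y ≠ y) := by
      intro x y hxy hch
      by_contra hcon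
      push_neg at hcon
      exact hch (by rw [hswap_conj, hcon.1, hcon.2])
    have hboth : ∀ x y : Fin n, x ≠ y → σ x ≠ x → σ y ≠ y → Equiv.swap x y = t := by
      intro x y hxy hx hy
      rw [htσ]
      rcases hmoved x hx with rfl | rfl <;> rcases hmoved y hy with rfl | rfl
      · exact absurd rfl hxy
      · rfl
      · rw [hσdef, Equiv.swap_comm]
      · exact absurd rfl hxy
    -- a transposition meeting {a,b}, other than t, occurs at most once in u
    have hincident : ∀ h, h ∈ u → c h ≠ h → h ≠ t → u.count h ≤ 1 := by
      intro h hmem hch hht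
      obtain ⟨x, y, hxy, rfl⟩ := htr h hmem
      have hmv := hch_ne_iff x y hxy hch
      have hvmem : ∃ v : Fin n, v ∈ (Equiv.swap x y).support ∧ v ∈ t.support := by
        rcases hmv with hx | hy
        · refine ⟨x, ?_, ?_⟩
          · rw [Equiv.Perm.support_swap hxy]; simp
          · rw [htσ, hσdef, Equiv.Perm.support_swap hab]
            rcases hmoved x hx with rfl | rfl <;> simp
        · refine ⟨y, ?_, ?_⟩
          · rw [Equiv.Perm.support_swap hxy]; simp
          · rw [htσ, hσdef, Equiv.Perm.support_swap hab]
            rcases hmoved y hy with rfl | rfl <;> simp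
      obtain ⟨v, hv1, hv2⟩ := hvmem
      by_contra hcon
      push_neg at hcon
      exact hnov v _ hmem t htmem hht (by omega) hcnt2 ⟨hv1, hv2⟩
    have hσa : σ a = b := Equiv.swap_apply_left a b
    have hσb : σ b = a := Equiv.swap_apply_right a b
    -- triangle helper
    have htri : ∀ x y : Fin n, x ≠ y → σ x ≠ x → σ y = y →
        Equiv.swap x y ∈ u → Equiv.swap (σ x) (σ y) ∈ u → False := by
      intro x y hxy hx hy h1 h2
      have hσxy : σ x ≠ y := by
        intro he
        rcases hmoved x hx with rfl | rfl
        · rw [hσa] at he; subst he; rw [hσb] at hy; first | exact hab hy | exact hab hy.symm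
        · rw [hσb] at he; subst he; rw [hσa] at hy; first | exact hab hy | exact hab hy.symm
      have hAdj1 : (TranspGraph u).Adj x y := ⟨hxy, h1⟩
      have hAdj2 : (TranspGraph u).Adj (σ x) y := ⟨hσxy, by rw [hy] at h2; exact h2⟩
      have hAdj3 : (TranspGraph u).Adj x (σ x) := by
        refine ⟨Ne.symm hx, ?_⟩
        rw [hswap_moved x hx, ← htσ]
        exact htmem
      exact no_triangle htree.2 hAdj1 hAdj2 hAdj3
    -- a transposition and its (distinct) conjugate cannot both occur in u
    have hF5 : ∀ h, c h ≠ h → ¬ (h ∈ u ∧ c h ∈ u) := by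
      rintro h hch ⟨h1, h2⟩
      obtain ⟨x, y, hxy, rfl⟩ := htr _ h1
      rw [hswap_conj] at h2
      by_cases hx : σ x = x
      · by_cases hy : σ y = y
        · exact hch (by rw [hswap_conj, hx, hy])
        · exact htri y x (Ne.symm hxy) hy hx (by rw [Equiv.swap_comm]; exact h1)
            (by rw [Equiv.swap_comm]; exact h2)
      · by_cases hy : σ y = y
        · exact htri x y hxy hx hy h1 h2
        · have hhte := hboth x y hxy hx hy
          rw [hhte] at hch
          exact hch hct
    -- membership in r₂
    have hmem_r₂ : ∀ h, h ∈ r₂ ↔ (h ∈ p ∨ h ∈ q) ∨ c h ∈ s := by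
      intro h
      rw [hr₂def]
      simp only [List.mem_append, List.mem_map]
      constructor
      · rintro (h1 | h1 | h1)
        · exact Or.inl (Or.inl h1)
        · obtain ⟨g', hg', rfl⟩ := h1
          rw [hcinv]
          exact Or.inr hg'
        · exact Or.inl (Or.inr h1)
      · rintro ((h1 | h1) | h1)
        · exact Or.inl h1
        · exact Or.inr (Or.inr h1)
        · exact Or.inr (Or.inl ⟨c h, h1, hcinv h⟩)
    have htmem₂ : t ∈ r₂ := by
      rw [← List.count_pos_iff, hcount_r₂ t, hct]
      omega
    -- the master counting case analysis for elements of r₂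
    have hmaster : ∀ h ∈ r₂, (h = t ∧ r₂.count h + 2 = u.count h) ∨
        (c h = h ∧ h ≠ t ∧ h ∈ u ∧ r₂.count h = u.count h) ∨
        (c h ≠ h ∧ r₂.count h = 1) := by
      intro h hmem₂
      by_cases hch : c h = h
      · by_cases hht : h = t
        · left
          refine ⟨hht, ?_⟩
          rw [hht, hcount_r₂, hct, hcount_u_t]
        · right; left
          have hhu : h ∈ u := by
            rcases (hmem_r₂ h).mp hmem₂ with h1 | h1
            · exact hmem_u_of_pq h (by tauto)
            · rw [hch] at h1
              exact hmem_u_of_pq h (Or.inr (Or.inl h1))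
          refine ⟨hch, hht, hhu, ?_⟩
          rw [hcount_r₂, hch, hcount_u_ne h hht]
      · right; right
        refine ⟨hch, ?_⟩
        have hht : h ≠ t := by
          rintro rfl
          exact hch hct
        have hpos : 1 ≤ r₂.count h := List.count_pos_iff.mpr hmem₂
        have hcount_h := hcount_u_ne h hht
        by_cases hs : c h ∈ s
        · have hhu : h ∉ u := fun hu =>
            hF5 h hch ⟨hu, hmem_u_of_pq _ (Or.inr (Or.inl hs))⟩
          have hp0 : p.count h = 0 :=
            List.count_eq_zero.mpr (fun hc => hhu (hmem_u_of_pq h (Or.inl hc)))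
          have hq0 : q.count h = 0 :=
            List.count_eq_zero.mpr (fun hc => hhu (hmem_u_of_pq h (Or.inr (Or.inr hc))))
          have hcht : c h ≠ t := by
            intro he
            apply hht
            rw [← hcinv h, he, hct]
          have hchle : u.count (c h) ≤ 1 := by
            refine hincident (c h) (hmem_u_of_pq _ (Or.inr (Or.inl hs))) ?_ hcht
            rw [hcinv]
            exact fun e => hch e.symm
          have hcount_ch := hcount_u_ne (c h) hcht
          have hsle : s.count (c h) ≤ u.count (c h) := by omega
          have := hcount_r₂ h
          omega
        · have hs0 : s.count (c h) = 0 := List.count_eq_zero.mpr hs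
          have hcr := hcount_r₂ h
          have hhu : h ∈ u := by
            rcases (hmem_r₂ h).mp hmem₂ with h1 | h1
            · exact hmem_u_of_pq h (by tauto)
            · exact absurd h1 hs
          have hule : u.count h ≤ 1 := hincident h hhu hch hht
          omega
    have hodd₂ : ∀ h ∈ r₂, Odd (r₂.count h) := by
      intro h hmem₂
      rcases hmaster h hmem₂ with ⟨heq, hcnteq⟩ | ⟨-, -, hhu, heq⟩ | ⟨-, heq⟩
      · rw [heq] at hcnteq ⊢
        have := hodd t htmem
        rw [Nat.odd_iff] at *
        omega
      · rw [heq]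
        exact hodd h hhu
      · rw [heq]
        exact odd_one
    have hnov₂ : ∀ v : Fin n, ∀ g ∈ r₂, ∀ g' ∈ r₂, g ≠ g' →
        2 ≤ r₂.count g → 2 ≤ r₂.count g' →
        ¬ (v ∈ g.support ∧ v ∈ g'.support) := by
      intro v g hg g' hg' hne h2g h2g'
      have key : ∀ h ∈ r₂, 2 ≤ r₂.count h → h ∈ u ∧ 2 ≤ u.count h := by
        intro h hmem₂ h2
        rcases hmaster h hmem₂ with ⟨heq, hcnteq⟩ | ⟨-, -, hhu, heq⟩ | ⟨-, heq⟩
        · rw [heq]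
          exact ⟨htmem, by rw [heq] at hcnteq; omega⟩
        · exact ⟨hhu, by omega⟩
        · omega
      obtain ⟨hgu, hg2⟩ := key g hg h2g
      obtain ⟨hgu', hg2'⟩ := key g' hg' h2g'
      exact hnov v g hgu g' hgu' hne hg2 hg2'
    -- the new graph is a tree
    have hAdjab₂ : (TranspGraph r₂).Adj a b := ⟨hab, by rw [← hσdef, ← htσ]; exact htmem₂⟩
    have hedge_reach : ∀ x y : Fin n, (TranspGraph u).Adj x y →
        (TranspGraph r₂).Reachable x y := by
      rintro x y ⟨hxy, hmem⟩
      have hmemsplit : Equiv.swap x y ∈ p ∨ Equiv.swap x y = t ∨ Equiv.swap x y ∈ s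
          ∨ Equiv.swap x y ∈ q := by
        rw [hu] at hmem
        simp only [List.mem_append, List.mem_cons] at hmem
        tauto
      have hr2adj : ∀ h : Equiv.Perm (Fin n), h = Equiv.swap x y → h ∈ r₂ →
          (TranspGraph r₂).Reachable x y := by
        intro h hh hmem₂
        exact SimpleGraph.Adj.reachable ⟨hxy, hh ▸ hmem₂⟩
      rcases hmemsplit with h1 | h1 | h1 | h1
      · exact hr2adj _ rfl (by rw [hr₂def]; simp [h1])
      · exact hr2adj _ rfl (h1 ▸ htmem₂)
      · -- in the conjugated part
        have hchm : c (Equiv.swap x y) ∈ r₂ := by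
          rw [hr₂def]
          simp only [List.mem_append, List.mem_map]
          exact Or.inr (Or.inl ⟨_, h1, rfl⟩)
        by_cases hch : c (Equiv.swap x y) = Equiv.swap x y
        · exact hr2adj (c (Equiv.swap x y)) hch hchm
        · rw [hswap_conj] at hchm
          by_cases hx : σ x = x
          · by_cases hy : σ y = y
            · exact absurd (by rw [hswap_conj, hx, hy]) hch
            · -- path x — (σ y) — y
              have hxσy : x ≠ σ y := by
                intro he
                rcases hmoved y hy with rfl | rfl
                · rw [hσa] at he; rw [he] at hx; rw [hσb] at hx; first | exact hab hx | exact hab hx.symm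
                · rw [hσb] at he; rw [he] at hx; rw [hσa] at hx; first | exact hab hx | exact hab hx.symm
              have hA1 : (TranspGraph r₂).Adj x (σ y) := by
                refine ⟨hxσy, ?_⟩
                rw [← hx]
                exact hchm
              have hA2 : (TranspGraph r₂).Adj (σ y) y := by
                refine ⟨hy, ?_⟩
                rw [Equiv.swap_comm, hswap_moved y hy, ← htσ]
                exact htmem₂
              exact hA1.reachable.trans hA2.reachable
          · -- path x — (σ x) — ... 
            have hA1 : (TranspGraph r₂).Adj x (σ x) := by
              refine ⟨Ne.symm hx, ?_⟩
              rw [hswap_moved x hx, ← htσ]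
              exact htmem₂
            by_cases hy : σ y = y
            · have hσxy : σ x ≠ y := by
                intro he
                rcases hmoved x hx with rfl | rfl
                · rw [hσa] at he; rw [← he] at hy; rw [hσb] at hy; first | exact hab hy | exact hab hy.symm
                · rw [hσb] at he; rw [← he] at hy; rw [hσa] at hy; first | exact hab hy | exact hab hy.symm
              have hA2 : (TranspGraph r₂).Adj (σ x) y := by
                refine ⟨hσxy, ?_⟩
                rw [← hy]
                exact hchm
              exact hA1.reachable.trans hA2.reachable
            · -- both moved : contradiction with hch
              have hte := hboth x y hxy hx hy
              exact absurd (by rw [hte, hct]) hch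
      · exact hr2adj _ rfl (by rw [hr₂def]; simp [h1])
    haveI : Nonempty (Fin n) := ⟨⟨0, by omega⟩⟩
    have hconn₂ : (TranspGraph r₂).Connected :=
      SimpleGraph.Connected.mk
        (fun x y => reachable_transfer hedge_reach (htree.1.preconnected x y))
    -- helper for the injectivity argument
    have swap_conj_contradiction : ∀ x y : Fin n, x ≠ y → Equiv.swap x y ∉ u →
        c (Equiv.swap x y) ∈ s → Equiv.swap (σ x) (σ y) ∈ r₂ → False := by
      intro x y hxy hnu hcs hm1
      have hh0 : Equiv.swap (σ x) (σ y) = c (Equiv.swap x y) := (hswap_conj x y).symm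
      have hch0 : c (Equiv.swap (σ x) (σ y)) = Equiv.swap x y := by
        rw [hh0, hcinv]
      have hch0ne : c (Equiv.swap (σ x) (σ y)) ≠ Equiv.swap (σ x) (σ y) := by
        rw [hch0, hh0]
        intro he
        rw [← he] at hcs
        exact hnu (hmem_u_of_pq _ (Or.inr (Or.inl hcs)))
      have hh0t : Equiv.swap (σ x) (σ y) ≠ t := by
        intro he
        apply hch0ne
        rw [he]
        exact hct
      rcases (hmem_r₂ _).mp hm1 with hh | hh
      · have hh0u : Equiv.swap (σ x) (σ y) ∈ u := hmem_u_of_pq _ (by tauto)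
        have hle1 := hincident _ hh0u hch0ne hh0t
        have hcu := hcount_u_ne (Equiv.swap (σ x) (σ y)) hh0t
        have hs1 : 1 ≤ s.count (Equiv.swap (σ x) (σ y)) :=
          List.count_pos_iff.mpr (hh0 ▸ hcs)
        have hpq1 : 1 ≤ p.count (Equiv.swap (σ x) (σ y))
            + q.count (Equiv.swap (σ x) (σ y)) := by
          rcases hh with hh | hh
          · have := List.count_pos_iff.mpr hh; omega
          · have := List.count_pos_iff.mpr hh; omega
        omega
      · rw [hch0] at hh
        exact hnu (hmem_u_of_pq _ (Or.inr (Or.inl hh)))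
    -- edge cardinality bound
    have hcard₂ : (TranspGraph r₂).edgeFinset.card ≤ (TranspGraph u).edgeFinset.card := by
      classical
      apply Finset.card_le_card_of_injOn
        (fun e => if e ∈ (TranspGraph u).edgeFinset then e else Sym2.map σ e)
      · intro e he
        induction e using Sym2.ind with
        | _ x y =>
        by_cases hin : s(x, y) ∈ (TranspGraph u).edgeFinset
        · simp only [if_pos hin]; exact hin
        · simp only [if_neg hin, Sym2.map_pair_eq]
          simp only [Finset.mem_coe] at he ⊢
          rw [SimpleGraph.mem_edgeFinset, SimpleGraph.mem_edgeSet] at he hin ⊢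
          obtain ⟨hxy, hmem₂⟩ := he
          have hnu : Equiv.swap x y ∉ u := fun hmem => hin ⟨hxy, hmem⟩
          have hcs : c (Equiv.swap x y) ∈ s := by
            rcases (hmem_r₂ _).mp hmem₂ with h1 | h1
            · exact absurd (hmem_u_of_pq _ (by tauto)) hnu
            · exact h1
          refine ⟨fun e => hxy (σ.injective e), ?_⟩
          rw [← hswap_conj]
          exact hmem_u_of_pq _ (Or.inr (Or.inl hcs))
      · intro e1 he1 e2 he2 heq
        simp only [Finset.mem_coe] at he1 he2
        by_cases h1 : e1 ∈ (TranspGraph u).edgeFinset <;>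
          by_cases h2 : e2 ∈ (TranspGraph u).edgeFinset
        · simp only [if_pos h1, if_pos h2] at heq
          exact heq
        · exfalso
          simp only [if_pos h1, if_neg h2] at heq
          revert he1 he2 h1 h2 heq
          induction e2 using Sym2.ind with
          | _ x y =>
          intro he1 he2 h1 h2 heq
          rw [Sym2.map_pair_eq] at heq
          subst heq
          rw [SimpleGraph.mem_edgeFinset, SimpleGraph.mem_edgeSet] at he1 he2 h2
          obtain ⟨hxy, hm2⟩ := he2
          have hnu : Equiv.swap x y ∉ u := fun hmem => h2 ⟨hxy, hmem⟩
          have hcs : c (Equiv.swap x y) ∈ s := by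
            rcases (hmem_r₂ _).mp hm2 with hh | hh
            · exact absurd (hmem_u_of_pq _ (by tauto)) hnu
            · exact hh
          obtain ⟨-, hm1⟩ := he1
          exact swap_conj_contradiction x y hxy hnu hcs hm1
        · exfalso
          simp only [if_neg h1, if_pos h2] at heq
          revert he1 he2 h1 h2 heq
          induction e1 using Sym2.ind with
          | _ x y =>
          intro he1 he2 h1 h2 heq
          rw [Sym2.map_pair_eq] at heq
          subst heq
          rw [SimpleGraph.mem_edgeFinset, SimpleGraph.mem_edgeSet] at he1 he2 h1
          obtain ⟨hxy, hm1x⟩ := he1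
          have hnu : Equiv.swap x y ∉ u := fun hmem => h1 ⟨hxy, hmem⟩
          have hcs : c (Equiv.swap x y) ∈ s := by
            rcases (hmem_r₂ _).mp hm1x with hh | hh
            · exact absurd (hmem_u_of_pq _ (by tauto)) hnu
            · exact hh
          obtain ⟨-, hm2⟩ := he2
          exact swap_conj_contradiction x y hxy hnu hcs hm2
        · simp only [if_neg h1, if_neg h2] at heq
          exact Sym2.map.injective σ.injective heq
    have hcardu := htree.card_edgeFinset
    rw [Fintype.card_fin] at hcardu
    have htree₂ : (TranspGraph r₂).IsTree := by
      refine connected_of_le_card ((TranspGraph r₂).edgeFinset.card) (TranspGraph r₂)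
        le_rfl hconn₂ ?_
      rw [Fintype.card_fin]
      omega
    -- apply induction hypothesis
    have hlen₂ : r₂.length < u.length := by
      rw [hu, hr₂def]
      simp [List.length_append]
    obtain ⟨hcyc, hsupp⟩ := IH r₂.length hlen₂ r₂ rfl htrans₂ htree₂ hodd₂ hnov₂
    rw [hprod]
    exact ⟨hcyc, hsupp⟩

end MainPart

theorem stmt_10 (n : ℕ) (hn : 2 ≤ n) (u : List (Equiv.Perm (Fin n)))
    (htr : IsTranspositional u)
    (hcov : ∀ v : Fin n, ∃ g ∈ u, v ∈ g.support)
    (htree : (TranspGraph u).IsTree)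
    (hodd : ∀ g ∈ u, Odd (u.count g))
    (hnov : ∀ v : Fin n, ∀ g ∈ u, ∀ g' ∈ u, g ≠ g' →
      2 ≤ u.count g → 2 ≤ u.count g' → ¬ (v ∈ g.support ∧ v ∈ g'.support)) :
    ∀ f ∈ ProdSet u, f.IsCycle ∧ f.support = Finset.univ := by
  rintro f ⟨r, hperm, rfl⟩
  have hmem : ∀ g, g ∈ r ↔ g ∈ u := fun g => hperm.mem_iff
  have hcount : ∀ g, r.count g = u.count g := fun g => hperm.count_eq g
  have hgeq : TranspGraph r = TranspGraph u := transpGraph_eq_of_mem_iff hmem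
  refine main_lemma hn r.length r rfl ?_ ?_ ?_ ?_
  · intro g hg
    exact htr g ((hmem g).mp hg)
  · rw [hgeq]
    exact htree
  · intro g hg
    rw [hcount g]
    exact hodd g ((hmem g).mp hg)
  · intro v g hg g' hg' hne h2 h2'
    exact hnov v g ((hmem g).mp hg) g' ((hmem g').mp hg') hne
      (by rw [← hcount]; exact h2) (by rw [← hcount]; exact h2')
end
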